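/- arXiv:2110.13328 — 15 statements merged into one kernel-verified Lean document; each statement's English description precedes it below -/
import Mathlib

section
/- Necessary conditions for invertibility of a double saddle-point matrix: if K is invertible, then (i) there is no nonzero x ∈ ℝⁿ with A x = 0 and B x = 0; (ii) there is no nonzero y ∈ ℝᵐ with Bᵀ y = 0, D y = 0 and C y = 0; and (iii) there is no nonzero z ∈ ℝᵖ with Cᵀ z = 0 and E z = 0. -/
open Matrix

lemma key_mulVec {n m p : ℕ}
    (A : Matrix (Fin n) (Fin n) ℝ) (B : Matrix (Fin m) (Fin n) ℝ)
    (C : Matrix (Fin p) (Fin m) ℝ) (D : Matrix (Fin m) (Fin m) ℝ)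
    (E : Matrix (Fin p) (Fin p) ℝ)
    (x : Fin n → ℝ) (y : Fin m → ℝ) (z : Fin p → ℝ) :
    (fromBlocks (fromBlocks A Bᵀ B (-D)) (fromRows 0 Cᵀ) (fromCols 0 C) E).mulVec
      (Sum.elim (Sum.elim x y) z)
    = Sum.elim (Sum.elim (A.mulVec x + Bᵀ.mulVec y + 0)
        (B.mulVec x + (-D).mulVec y + Cᵀ.mulVec z)) (0 + C.mulVec y + E.mulVec z) := by
  funext i
  rcases i with (i | i) | i <;>
    simp [mulVec, fromBlocks, fromRows_apply_inl, fromRows_apply_inr, fromCols, dotProduct, Fintype.sum_sum_type,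
      Finset.sum_add_distrib]

/-- Necessary conditions for invertibility of a double saddle-point matrix. -/
theorem stmt_0 (n m p : ℕ) (hn : 0 < n) (hm : 0 < m) (hp : 0 < p)
    (A : Matrix (Fin n) (Fin n) ℝ) (B : Matrix (Fin m) (Fin n) ℝ)
    (C : Matrix (Fin p) (Fin m) ℝ) (D : Matrix (Fin m) (Fin m) ℝ)
    (E : Matrix (Fin p) (Fin p) ℝ)
    (K : Matrix ((Fin n ⊕ Fin m) ⊕ Fin p) ((Fin n ⊕ Fin m) ⊕ Fin p) ℝ)
    (hK : K = fromBlocks (fromBlocks A Bᵀ B (-D)) (fromRows 0 Cᵀ) (fromCols 0 C) E)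
    (hinv : IsUnit K) :
    (∀ x : Fin n → ℝ, x ≠ 0 → ¬(A.mulVec x = 0 ∧ B.mulVec x = 0)) ∧
    (∀ y : Fin m → ℝ, y ≠ 0 → ¬(Bᵀ.mulVec y = 0 ∧ D.mulVec y = 0 ∧ C.mulVec y = 0)) ∧
    (∀ z : Fin p → ℝ, z ≠ 0 → ¬(Cᵀ.mulVec z = 0 ∧ E.mulVec z = 0)) := by
  have hinj : Function.Injective K.mulVec := mulVec_injective_iff_isUnit.2 hinv
  have hzero : K.mulVec 0 = 0 := by simp
  refine ⟨?_, ?_, ?_⟩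
  · rintro x hx ⟨h1, h2⟩
    apply hx
    have : K.mulVec (Sum.elim (Sum.elim x 0) 0) = 0 := by
      rw [hK, key_mulVec]
      simp [h1, h2]
    have := hinj (this.trans hzero.symm)
    funext i
    exact congrFun this (Sum.inl (Sum.inl i))
  · rintro y hy ⟨h1, h2, h3⟩
    apply hy
    have : K.mulVec (Sum.elim (Sum.elim 0 y) 0) = 0 := by
      rw [hK, key_mulVec]
      simp [h1, h2, h3, Matrix.neg_mulVec]
    have := hinj (this.trans hzero.symm)
    funext i
    exact congrFun this (Sum.inl (Sum.inr i))
  · rintro z hz ⟨h1, h2⟩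
    apply hz
    have : K.mulVec (Sum.elim (Sum.elim 0 0) z) = 0 := by
      rw [hK, key_mulVec]
      simp [h1, h2]
    have := hinj (this.trans hzero.symm)
    funext i
    exact congrFun this (Sum.inr i)
end

section
/- Sufficient condition for invertibility of a double saddle-point matrix: if A is invertible, S₁ = D + B A⁻¹ Bᵀ is invertible, and S₂ = E + C S₁⁻¹ Cᵀ is invertible, then K is invertible. -/
open Matrix

/-- Sufficient condition for invertibility of a double saddle-point matrix. -/
theorem stmt_1 (n m p : ℕ) (hn : 0 < n) (hm : 0 < m) (hp : 0 < p)
    (A : Matrix (Fin n) (Fin n) ℝ) (B : Matrix (Fin m) (Fin n) ℝ)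
    (C : Matrix (Fin p) (Fin m) ℝ) (D : Matrix (Fin m) (Fin m) ℝ)
    (E : Matrix (Fin p) (Fin p) ℝ)
    (K : Matrix ((Fin n ⊕ Fin m) ⊕ Fin p) ((Fin n ⊕ Fin m) ⊕ Fin p) ℝ)
    (hK : K = fromBlocks (fromBlocks A Bᵀ B (-D)) (fromRows 0 Cᵀ) (fromCols 0 C) E)
    (S₁ : Matrix (Fin m) (Fin m) ℝ) (hS₁ : S₁ = D + B * A⁻¹ * Bᵀ)
    (S₂ : Matrix (Fin p) (Fin p) ℝ) (hS₂ : S₂ = E + C * S₁⁻¹ * Cᵀ)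
    (hA : IsUnit A) (hS₁u : IsUnit S₁) (hS₂u : IsUnit S₂) :
    IsUnit K := by
  haveI iA : Invertible A := hA.invertible
  haveI iS₁ : Invertible S₁ := hS₁u.invertible
  have hAinv : ⅟A = A⁻¹ := invOf_eq_nonsing_inv A
  have hS₁inv : S₁ * S₁⁻¹ = 1 := mul_nonsing_inv S₁ ((isUnit_iff_isUnit_det S₁).mp hS₁u)
  have h1 : D * S₁⁻¹ + B * ⅟A * Bᵀ * S₁⁻¹ = 1 := by
    rw [hAinv, ← Matrix.add_mul, ← hS₁, hS₁inv]
  -- Schur complement of the (1,1) block of M₁ is -S₁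
  have hSchur : -D - B * ⅟A * Bᵀ = -S₁ := by rw [hAinv, hS₁]; abel
  haveI iSchur : Invertible (-D - B * ⅟A * Bᵀ) := by
    rw [hSchur]; exact invertibleNeg S₁
  haveI iM₁ : Invertible (fromBlocks A Bᵀ B (-D)) := fromBlocks₁₁Invertible A Bᵀ B (-D)
  -- explicit inverse of M₁
  set N : Matrix (Fin n ⊕ Fin m) (Fin n ⊕ Fin m) ℝ :=
    fromBlocks (⅟A - ⅟A * Bᵀ * S₁⁻¹ * B * ⅟A) (⅟A * Bᵀ * S₁⁻¹)
      (S₁⁻¹ * B * ⅟A) (-S₁⁻¹) with hN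
  have hMN : fromBlocks A Bᵀ B (-D) * N = 1 := by
    rw [hN, fromBlocks_multiply, ← fromBlocks_one, fromBlocks_inj]
    refine ⟨?_, ?_, ?_, ?_⟩
    · simp only [Matrix.mul_sub, ← Matrix.mul_assoc, mul_invOf_self, Matrix.one_mul]
      abel
    · simp only [Matrix.mul_neg, ← Matrix.mul_assoc, mul_invOf_self, Matrix.one_mul]
      abel
    · have e1 : B * (⅟A - ⅟A * Bᵀ * S₁⁻¹ * B * ⅟A) + -D * (S₁⁻¹ * B * ⅟A)
          = B * ⅟A - (D * S₁⁻¹ + B * ⅟A * Bᵀ * S₁⁻¹) * (B * ⅟A) := by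
        simp only [Matrix.mul_sub, Matrix.add_mul, Matrix.sub_mul, Matrix.neg_mul,
          Matrix.mul_assoc]
        abel
      rw [e1, h1, Matrix.one_mul, sub_self]
    · have e2 : B * (⅟A * Bᵀ * S₁⁻¹) + -D * -S₁⁻¹
          = D * S₁⁻¹ + B * ⅟A * Bᵀ * S₁⁻¹ := by
        simp only [Matrix.neg_mul, Matrix.mul_neg, neg_neg, Matrix.mul_assoc]
        abel
      rw [e2, h1]
  have hNinv : ⅟(fromBlocks A Bᵀ B (-D)) = N := invOf_eq_right_inv hMN
  rw [hK, isUnit_fromBlocks_iff_of_invertible₁₁, hNinv, hN,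
    fromCols_mul_fromBlocks, fromCols_mul_fromRows]
  simp only [Matrix.zero_mul, Matrix.mul_zero, zero_add, add_zero, Matrix.mul_neg,
    Matrix.neg_mul, sub_neg_eq_add]
  rw [← hS₂]
  exact hS₂u
end

section
/- Block LDLᵀ factorization of a double saddle-point matrix: if A and D are symmetric, A is invertible, and S₁ = D + B A⁻¹ Bᵀ is invertible, then, with S₂ = E + C S₁⁻¹ Cᵀ, one has K = L · blockdiag(A, −S₁, S₂) · Lᵀ, where L is the block lower triangular matrix L = [[I, 0, 0], [B A⁻¹, I, 0], [0, −C S₁⁻¹, I]]. -/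
open Matrix

/-- Block LDLᵀ factorization of a double saddle-point matrix. -/
theorem stmt_2 (n m p : ℕ) (hn : 0 < n) (hm : 0 < m) (hp : 0 < p)
    (A : Matrix (Fin n) (Fin n) ℝ) (B : Matrix (Fin m) (Fin n) ℝ)
    (C : Matrix (Fin p) (Fin m) ℝ) (D : Matrix (Fin m) (Fin m) ℝ)
    (E : Matrix (Fin p) (Fin p) ℝ)
    (K : Matrix ((Fin n ⊕ Fin m) ⊕ Fin p) ((Fin n ⊕ Fin m) ⊕ Fin p) ℝ)
    (hK : K = fromBlocks (fromBlocks A Bᵀ B (-D)) (fromRows 0 Cᵀ) (fromCols 0 C) E)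
    (hAsymm : Aᵀ = A) (hDsymm : Dᵀ = D)
    (hA : IsUnit A)
    (S₁ : Matrix (Fin m) (Fin m) ℝ) (hS₁ : S₁ = D + B * A⁻¹ * Bᵀ)
    (hS₁u : IsUnit S₁)
    (S₂ : Matrix (Fin p) (Fin p) ℝ) (hS₂ : S₂ = E + C * S₁⁻¹ * Cᵀ)
    (L : Matrix ((Fin n ⊕ Fin m) ⊕ Fin p) ((Fin n ⊕ Fin m) ⊕ Fin p) ℝ)
    (hL : L = fromBlocks (fromBlocks 1 0 (B * A⁻¹) 1) 0
        (fromCols 0 (-(C * S₁⁻¹))) 1) :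
    K = L * (fromBlocks (fromBlocks A 0 0 (-S₁)) 0 0 S₂) * Lᵀ := by
  have hAinv : A⁻¹ * A = 1 := nonsing_inv_mul A ((isUnit_iff_isUnit_det A).mp hA)
  have hAinv' : A * A⁻¹ = 1 := mul_nonsing_inv A ((isUnit_iff_isUnit_det A).mp hA)
  have hS1inv : S₁⁻¹ * S₁ = 1 := nonsing_inv_mul S₁ ((isUnit_iff_isUnit_det S₁).mp hS₁u)
  have hS1inv' : S₁ * S₁⁻¹ = 1 := mul_nonsing_inv S₁ ((isUnit_iff_isUnit_det S₁).mp hS₁u)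
  have hAiT : A⁻¹ᵀ = A⁻¹ := by
    rw [show A⁻¹ᵀ = Aᵀ⁻¹ from transpose_nonsing_inv A, hAsymm]
  have hS1T : S₁ᵀ = S₁ := by
    rw [hS₁]; simp [transpose_add, transpose_mul, hDsymm, hAiT, Matrix.mul_assoc]
  have hS1iT : S₁⁻¹ᵀ = S₁⁻¹ := by
    rw [show S₁⁻¹ᵀ = S₁ᵀ⁻¹ from transpose_nonsing_inv S₁, hS1T]
  have hS₁' : D + B * (A⁻¹ * Bᵀ) = S₁ := by rw [hS₁, Matrix.mul_assoc]
  have h1 : B * A⁻¹ * A = B := by rw [Matrix.mul_assoc, hAinv, Matrix.mul_one]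
  have h2 : C * S₁⁻¹ * S₁ = C := by rw [Matrix.mul_assoc, hS1inv, Matrix.mul_one]
  subst hK hL hS₂
  simp [fromBlocks_multiply, fromBlocks_transpose, transpose_fromCols, transpose_fromRows,
    fromCols_mul_fromBlocks, fromBlocks_mul_fromRows, fromCols_mul_fromRows,
    hS₁', hAiT, hS1iT, ← Matrix.mul_assoc, hAinv', h1, h2, hS1inv',
    hDsymm, hAsymm, neg_mul, mul_neg]
  rw [hS₁]; abel
end

section
/- Inertia of a double saddle-point matrix: listed with multiplicity, exactly n+p of the eigenvalues of the symmetric matrix K are positive and exactly m are negative (in particular none are zero). -/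
open Matrix

section aux

lemma quad_expand' {ι : Type} [Fintype ι] [DecidableEq ι] (K : Matrix ι ι ℝ) (hK : K.IsHermitian)
    (x : EuclideanSpace ℝ ι) :
    (x : ι → ℝ) ⬝ᵥ (K *ᵥ x) =
      ∑ i, hK.eigenvalues i * (hK.eigenvectorBasis.repr x i * hK.eigenvectorBasis.repr x i) := by
  set b := hK.eigenvectorBasis with hb
  have hx : (x : EuclideanSpace ℝ ι) = ∑ i, b.repr x i • b i := (b.sum_repr x).symm
  have hKx : K *ᵥ (x : ι → ℝ) = ∑ i, (b.repr x i * hK.eigenvalues i) • ⇑(b i) := by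
    calc K *ᵥ (x : ι → ℝ) = K.mulVecLin (∑ i, b.repr x i • ⇑(b i)) := by
          rw [Matrix.mulVecLin_apply]; congr 1; conv_lhs => rw [hx]
          simp [WithLp.ofLp_sum]
      _ = ∑ i, b.repr x i • (K *ᵥ ⇑(b i)) := by simp [map_sum]
      _ = ∑ i, (b.repr x i * hK.eigenvalues i) • ⇑(b i) := by
          refine Finset.sum_congr rfl fun i _ => ?_
          rw [hK.mulVec_eigenvectorBasis, smul_smul]
  rw [hKx]
  have hsum : (x : ι → ℝ) ⬝ᵥ (∑ i, (b.repr x i * hK.eigenvalues i) • ⇑(b i))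
      = ∑ i, (b.repr x i * hK.eigenvalues i) * ((x : ι → ℝ) ⬝ᵥ ⇑(b i)) := by
    simp only [dotProduct, Finset.sum_apply, Pi.smul_apply, smul_eq_mul, Finset.mul_sum]
    rw [Finset.sum_comm]
    exact Finset.sum_congr rfl fun i _ => Finset.sum_congr rfl fun j _ => by ring
  rw [hsum]
  refine Finset.sum_congr rfl fun i _ => ?_
  have hinner : (x : ι → ℝ) ⬝ᵥ ⇑(b i) = b.repr x i := by
    have := b.repr_apply_apply x i
    rw [real_inner_comm] at this
    rw [this]
    simp [PiLp.inner_apply, dotProduct, mul_comm]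
  rw [hinner]; ring

lemma key_count' {ι : Type} [Fintype ι] [DecidableEq ι] (K : Matrix ι ι ℝ) (hK : K.IsHermitian)
    (ε : ℝ) (S : Finset ι) (hS : ∀ i, i ∉ S → ε * hK.eigenvalues i ≤ 0)
    (V : Submodule ℝ (EuclideanSpace ℝ ι))
    (hV : ∀ x ∈ V, x ≠ 0 → 0 < ε * ((x : ι → ℝ) ⬝ᵥ (K *ᵥ x))) :
    Module.finrank ℝ V ≤ S.card := by
  classical
  set b := hK.eigenvectorBasis with hb
  set W : Submodule ℝ (EuclideanSpace ℝ ι) := Submodule.span ℝ (⇑b '' ↑(Sᶜ)) with hW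
  have hWrank : Module.finrank ℝ W = Sᶜ.card := by
    have hli : LinearIndependent ℝ (fun i : {i // i ∈ Sᶜ} => b i) :=
      (b.orthonormal.comp Subtype.val Subtype.val_injective).linearIndependent
    have himg : ⇑b '' ↑(Sᶜ) = Set.range (fun i : {i // i ∈ Sᶜ} => b i) := by
      rw [Set.image_eq_range]; rfl
    rw [hW, himg, finrank_span_eq_card hli, Fintype.card_coe]
  have hWneg : ∀ x ∈ W, ε * ((x : ι → ℝ) ⬝ᵥ (K *ᵥ x)) ≤ 0 := by
    intro x hx
    have hsupp : ∀ i ∈ S, b.repr x i = 0 := by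
      intro i hiS
      have hx' : x ∈ Submodule.span ℝ (⇑b.toBasis '' ↑(Sᶜ)) := by
        rwa [b.coe_toBasis]
      rw [Module.Basis.mem_span_image] at hx'
      by_contra h
      have h2 : b.toBasis.repr x i ≠ 0 := by rwa [b.coe_toBasis_repr_apply]
      have := hx' (Finsupp.mem_support_iff.mpr h2)
      simp at this
      exact this hiS
    rw [quad_expand' K hK, Finset.mul_sum]
    apply Finset.sum_nonpos
    intro i _
    by_cases hi : i ∈ S
    · simp [← hb, hsupp i hi]
    · have := hS i hi
      nlinarith [mul_self_nonneg (b.repr x i)]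
  have hVW : V ⊓ W = ⊥ := by
    rw [Submodule.eq_bot_iff]
    intro x hx
    by_contra hx0
    have h1 := hV x hx.1 hx0
    have h2 := hWneg x hx.2
    linarith
  have hsum : Module.finrank ℝ V + Module.finrank ℝ W ≤ Fintype.card ι := by
    have h1 := Submodule.finrank_sup_add_finrank_inf_eq V W
    rw [hVW] at h1
    have h2 : Module.finrank ℝ ↥(V ⊔ W) ≤ Fintype.card ι := by
      have := Submodule.finrank_le (V ⊔ W)
      rwa [finrank_euclideanSpace] at this
    simp at h1
    omega
  rw [hWrank, Finset.card_compl] at hsum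
  have := Finset.card_le_univ S
  omega

end aux

set_option maxHeartbeats 1000000 in
/-- Inertia of a double saddle-point matrix: exactly `n + p` positive eigenvalues and
exactly `m` negative eigenvalues (counted with multiplicity), and none are zero. -/
theorem stmt_3 (n m p : ℕ) (hn : 0 < n) (hm : 0 < m) (hp : 0 < p)
    (A : Matrix (Fin n) (Fin n) ℝ) (B : Matrix (Fin m) (Fin n) ℝ)
    (C : Matrix (Fin p) (Fin m) ℝ) (D : Matrix (Fin m) (Fin m) ℝ)
    (E : Matrix (Fin p) (Fin p) ℝ)
    (hA : A.PosDef) (hD : D.PosSemidef) (hE : E.PosSemidef)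
    (S₁ : Matrix (Fin m) (Fin m) ℝ) (hS₁ : S₁ = D + B * A⁻¹ * Bᵀ)
    (S₂ : Matrix (Fin p) (Fin p) ℝ) (hS₂ : S₂ = E + C * S₁⁻¹ * Cᵀ)
    (hS₁pd : S₁.PosDef) (hS₂pd : S₂.PosDef)
    (K : Matrix ((Fin n ⊕ Fin m) ⊕ Fin p) ((Fin n ⊕ Fin m) ⊕ Fin p) ℝ)
    (hK : K = fromBlocks (fromBlocks A Bᵀ B (-D)) (fromRows 0 Cᵀ) (fromCols 0 C) E)
    (hKherm : K.IsHermitian) :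
    (Finset.univ.filter fun i => 0 < hKherm.eigenvalues i).card = n + p ∧
    (Finset.univ.filter fun i => hKherm.eigenvalues i < 0).card = m ∧
    (∀ i, hKherm.eigenvalues i ≠ 0) := by
  classical
  -- symmetry facts
  have hAs : Aᵀ = A := by rw [← conjTranspose_eq_transpose_of_trivial]; exact hA.1
  have hAi : A⁻¹ᵀ = A⁻¹ := by rw [transpose_nonsing_inv, hAs]
  have hS₁s : S₁ᵀ = S₁ := by rw [← conjTranspose_eq_transpose_of_trivial]; exact hS₁pd.1
  have hS₁i : S₁⁻¹ᵀ = S₁⁻¹ := by rw [transpose_nonsing_inv, hS₁s]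
  have hAu : IsUnit A.det := hA.det_pos.ne'.isUnit
  have hS₁u : IsUnit S₁.det := hS₁pd.det_pos.ne'.isUnit
  set L : Matrix ((Fin n ⊕ Fin m) ⊕ Fin p) ((Fin n ⊕ Fin m) ⊕ Fin p) ℝ :=
    fromBlocks (fromBlocks 1 0 (B * A⁻¹) 1) 0 (fromCols 0 (-(C * S₁⁻¹))) 1 with hL
  set G : Matrix ((Fin n ⊕ Fin m) ⊕ Fin p) ((Fin n ⊕ Fin m) ⊕ Fin p) ℝ :=
    fromBlocks (fromBlocks A 0 0 (-S₁)) 0 0 S₂ with hG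
  have hcong : K = L * G * Lᵀ := by
    rw [hK, hL, hG]
    simp only [fromBlocks_transpose, transpose_fromCols, transpose_one,
      transpose_zero, transpose_neg, transpose_mul, hAi, hS₁i, hAs, hS₁s,
      fromBlocks_multiply, fromCols_mul_fromBlocks, fromBlocks_mul_fromRows]
    simp only [Matrix.mul_one, Matrix.one_mul, Matrix.mul_zero, Matrix.zero_mul,
      add_zero, zero_add, Matrix.neg_mul, Matrix.mul_neg, neg_neg]
    simp only [neg_zero, Matrix.nonsing_inv_mul_cancel_right _ _ hAu,
      Matrix.nonsing_inv_mul_cancel_right _ _ hS₁u,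
      fromBlocks_multiply, fromCols_mul_fromBlocks, fromBlocks_mul_fromRows,
      fromCols_mul_fromRows,
      Matrix.mul_one, Matrix.one_mul, Matrix.mul_zero, Matrix.zero_mul,
      add_zero, zero_add, Matrix.neg_mul, Matrix.mul_neg, neg_neg]
    rw [Matrix.mul_nonsing_inv_cancel_left _ _ hAu, Matrix.mul_nonsing_inv_cancel_left _ _ hS₁u]
    have hDblock : B * (A⁻¹ * Bᵀ) + -S₁ = -D := by rw [hS₁, ← Matrix.mul_assoc]; abel
    have hEblock : -(C * (S₁⁻¹ * Cᵀ)) + S₂ = E := by rw [hS₂, ← Matrix.mul_assoc]; abel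
    rw [hDblock, hEblock]
  -- invertibility of L
  have hLdet : IsUnit L.det := by
    rw [hL, det_fromBlocks_zero₁₂, det_fromBlocks_zero₁₂]
    simp
  set N : Matrix ((Fin n ⊕ Fin m) ⊕ Fin p) ((Fin n ⊕ Fin m) ⊕ Fin p) ℝ := (Lᵀ)⁻¹ with hN
  have hLTu : IsUnit (Lᵀ).det := by rwa [det_transpose]
  have hLN : Lᵀ * N = 1 := Matrix.mul_nonsing_inv _ hLTu
  -- quadratic form via congruence
  have hquadK : ∀ z : ((Fin n ⊕ Fin m) ⊕ Fin p) → ℝ, (N *ᵥ z) ⬝ᵥ (K *ᵥ (N *ᵥ z)) = z ⬝ᵥ (G *ᵥ z) := by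
    intro z
    have hz : Lᵀ *ᵥ (N *ᵥ z) = z := by
      rw [mulVec_mulVec, hLN, one_mulVec]
    rw [hcong]
    have hKz : (L * G * Lᵀ) *ᵥ (N *ᵥ z) = L *ᵥ (G *ᵥ z) := by
      rw [mulVec_mulVec, Matrix.mul_assoc (L*G), hLN, Matrix.mul_one, ← mulVec_mulVec]
    rw [hKz, Matrix.dotProduct_mulVec, ← Matrix.mulVec_transpose, hz]
  -- quadratic form of G on block vectors
  have hGval : ∀ (u : Fin n → ℝ) (v : Fin m → ℝ) (w : Fin p → ℝ),
      (Sum.elim (Sum.elim u v) w) ⬝ᵥ (G *ᵥ Sum.elim (Sum.elim u v) w)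
      = u ⬝ᵥ (A *ᵥ u) - v ⬝ᵥ (S₁ *ᵥ v) + w ⬝ᵥ (S₂ *ᵥ w) := by
    intro u v w
    rw [hG]
    simp only [fromBlocks_mulVec, Matrix.zero_mulVec, add_zero, zero_add,
      sumElim_dotProduct_sumElim, Matrix.neg_mulVec, dotProduct_neg,
      Sum.elim_comp_inl, Sum.elim_comp_inr]
    ring
  -- the linear embeddings
  have hNinj : ∀ a b : ((Fin n ⊕ Fin m) ⊕ Fin p) → ℝ, N *ᵥ a = N *ᵥ b → a = b := by
    intro a b hab
    have : Lᵀ *ᵥ (N *ᵥ a) = Lᵀ *ᵥ (N *ᵥ b) := by rw [hab]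
    simpa [mulVec_mulVec, hLN, one_mulVec] using this
  -- positive subspace
  set P : Matrix ((Fin n ⊕ Fin m) ⊕ Fin p) (Fin n ⊕ Fin p) ℝ :=
    fromBlocks (fromRows 1 0) 0 0 1 with hP
  have hPval : ∀ (u : Fin n → ℝ) (w : Fin p → ℝ),
      P *ᵥ Sum.elim u w = Sum.elim (Sum.elim u 0) w := by
    intro u w
    rw [hP, fromBlocks_mulVec]
    simp [fromRows_mulVec]
  set Tpos : ((Fin n ⊕ Fin p) → ℝ) →ₗ[ℝ] EuclideanSpace ℝ ((Fin n ⊕ Fin m) ⊕ Fin p) :=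
    (WithLp.linearEquiv 2 ℝ (((Fin n ⊕ Fin m) ⊕ Fin p) → ℝ)).symm.toLinearMap ∘ₗ
      (N * P).mulVecLin with hTpos
  have hTposval : ∀ z, (Tpos z : ((Fin n ⊕ Fin m) ⊕ Fin p) → ℝ) = N *ᵥ (P *ᵥ z) := by
    intro z
    show (N * P) *ᵥ z = N *ᵥ (P *ᵥ z)
    rw [mulVec_mulVec]
  have hTposinj : Function.Injective Tpos := by
    intro a b hab
    have h1 : N *ᵥ (P *ᵥ a) = N *ᵥ (P *ᵥ b) := by
      rw [← hTposval, ← hTposval, hab]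
    have h2 := hNinj _ _ h1
    have ha : P *ᵥ a = Sum.elim (Sum.elim (a ∘ Sum.inl) 0) (a ∘ Sum.inr) := by
      conv_lhs => rw [← Sum.elim_comp_inl_inr a]
      exact hPval _ _
    have hb : P *ᵥ b = Sum.elim (Sum.elim (b ∘ Sum.inl) 0) (b ∘ Sum.inr) := by
      conv_lhs => rw [← Sum.elim_comp_inl_inr b]
      exact hPval _ _
    rw [ha, hb] at h2
    funext i
    rcases i with i | i
    · exact congrFun h2 (Sum.inl (Sum.inl i))
    · exact congrFun h2 (Sum.inr i)
  set Vpos : Submodule ℝ (EuclideanSpace ℝ ((Fin n ⊕ Fin m) ⊕ Fin p)) :=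
    LinearMap.range Tpos with hVpos
  have hVposrank : Module.finrank ℝ Vpos = n + p := by
    rw [hVpos, LinearMap.finrank_range_of_inj hTposinj, Module.finrank_pi]
    simp
  have hVpospos : ∀ x ∈ Vpos, x ≠ 0 →
      0 < (1 : ℝ) * ((x : ((Fin n ⊕ Fin m) ⊕ Fin p) → ℝ) ⬝ᵥ (K *ᵥ x)) := by
    rintro x ⟨z, rfl⟩ hx0
    set u : Fin n → ℝ := z ∘ Sum.inl with hu
    set w : Fin p → ℝ := z ∘ Sum.inr with hw
    have hz : z = Sum.elim u w := (Sum.elim_comp_inl_inr z).symm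
    have huw : ¬(u = 0 ∧ w = 0) := by
      rintro ⟨h1, h2⟩
      apply hx0
      have : z = 0 := by
        rw [hz, h1, h2]; funext i; rcases i with i | i <;> rfl
      rw [this, map_zero]
    have hval : ((Tpos z : ((Fin n ⊕ Fin m) ⊕ Fin p) → ℝ)) ⬝ᵥ
        (K *ᵥ (Tpos z : ((Fin n ⊕ Fin m) ⊕ Fin p) → ℝ))
        = u ⬝ᵥ (A *ᵥ u) - (0 : Fin m → ℝ) ⬝ᵥ (S₁ *ᵥ 0) + w ⬝ᵥ (S₂ *ᵥ w) := by
      rw [hTposval, hz, hPval, hquadK, hGval]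
    rw [one_mul, hval]
    simp only [dotProduct_zero, Matrix.mulVec_zero, sub_zero]
    have hu0 : 0 ≤ u ⬝ᵥ (A *ᵥ u) := by
      have := hA.posSemidef.dotProduct_mulVec_nonneg u
      simpa using this
    have hw0 : 0 ≤ w ⬝ᵥ (S₂ *ᵥ w) := by
      have := hS₂pd.posSemidef.dotProduct_mulVec_nonneg w
      simpa using this
    rcases not_and_or.mp huw with h | h
    · have := hA.dotProduct_mulVec_pos h
      simp only [star_trivial] at this
      linarith
    · have := hS₂pd.dotProduct_mulVec_pos h
      simp only [star_trivial] at this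
      linarith
  -- negative subspace
  set Q : Matrix ((Fin n ⊕ Fin m) ⊕ Fin p) (Fin m) ℝ :=
    fromRows (fromRows 0 1) 0 with hQ
  have hQval : ∀ v : Fin m → ℝ, Q *ᵥ v = Sum.elim (Sum.elim (0 : Fin n → ℝ) v) (0 : Fin p → ℝ) := by
    intro v
    rw [hQ, fromRows_mulVec, fromRows_mulVec]
    simp
  set Tneg : (Fin m → ℝ) →ₗ[ℝ] EuclideanSpace ℝ ((Fin n ⊕ Fin m) ⊕ Fin p) :=
    (WithLp.linearEquiv 2 ℝ (((Fin n ⊕ Fin m) ⊕ Fin p) → ℝ)).symm.toLinearMap ∘ₗ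
      (N * Q).mulVecLin with hTneg
  have hTnegval : ∀ v, (Tneg v : ((Fin n ⊕ Fin m) ⊕ Fin p) → ℝ) = N *ᵥ (Q *ᵥ v) := by
    intro v
    show (N * Q) *ᵥ v = N *ᵥ (Q *ᵥ v)
    rw [mulVec_mulVec]
  have hTneginj : Function.Injective Tneg := by
    intro a b hab
    have h1 : N *ᵥ (Q *ᵥ a) = N *ᵥ (Q *ᵥ b) := by
      rw [← hTnegval, ← hTnegval, hab]
    have h2 := hNinj _ _ h1
    rw [hQval, hQval] at h2
    funext i
    exact congrFun h2 (Sum.inl (Sum.inr i))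
  set Vneg : Submodule ℝ (EuclideanSpace ℝ ((Fin n ⊕ Fin m) ⊕ Fin p)) :=
    LinearMap.range Tneg with hVneg
  have hVnegrank : Module.finrank ℝ Vneg = m := by
    rw [hVneg, LinearMap.finrank_range_of_inj hTneginj, Module.finrank_pi]
    simp
  have hVnegneg : ∀ x ∈ Vneg, x ≠ 0 →
      0 < (-1 : ℝ) * ((x : ((Fin n ⊕ Fin m) ⊕ Fin p) → ℝ) ⬝ᵥ (K *ᵥ x)) := by
    rintro x ⟨v, rfl⟩ hx0
    have hv : v ≠ 0 := by
      rintro rfl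
      exact hx0 (by rw [map_zero])
    have hval : ((Tneg v : ((Fin n ⊕ Fin m) ⊕ Fin p) → ℝ)) ⬝ᵥ
        (K *ᵥ (Tneg v : ((Fin n ⊕ Fin m) ⊕ Fin p) → ℝ))
        = (0 : Fin n → ℝ) ⬝ᵥ (A *ᵥ 0) - v ⬝ᵥ (S₁ *ᵥ v) + (0 : Fin p → ℝ) ⬝ᵥ (S₂ *ᵥ 0) := by
      rw [hTnegval, hQval, hquadK, hGval]
    rw [hval]
    simp only [dotProduct_zero, Matrix.mulVec_zero, zero_sub, add_zero, zero_add]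
    have := hS₁pd.dotProduct_mulVec_pos hv
    simp only [star_trivial] at this
    linarith
  -- apply the counting lemma
  have hposle : n + p ≤ (Finset.univ.filter fun i => 0 < hKherm.eigenvalues i).card := by
    refine le_trans (le_of_eq hVposrank.symm) (key_count' K hKherm 1 _ ?_ Vpos hVpospos)
    intro i hi
    simp only [Finset.mem_filter, Finset.mem_univ, true_and, not_lt] at hi
    linarith
  have hnegle : m ≤ (Finset.univ.filter fun i => hKherm.eigenvalues i < 0).card := by
    refine le_trans (le_of_eq hVnegrank.symm) (key_count' K hKherm (-1) _ ?_ Vneg hVnegneg)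
    intro i hi
    simp only [Finset.mem_filter, Finset.mem_univ, true_and, not_lt] at hi
    linarith
  have hcardι : Fintype.card ((Fin n ⊕ Fin m) ⊕ Fin p) = n + m + p := by
    rw [Fintype.card_sum, Fintype.card_sum, Fintype.card_fin, Fintype.card_fin, Fintype.card_fin]
  have hdisj : Disjoint (Finset.univ.filter fun i => 0 < hKherm.eigenvalues i)
      (Finset.univ.filter fun i => hKherm.eigenvalues i < 0) := by
    rw [Finset.disjoint_left]
    intro i h1 h2
    simp only [Finset.mem_filter] at h1 h2
    linarith [h1.2, h2.2]
  have hunionle : (Finset.univ.filter fun i => 0 < hKherm.eigenvalues i).card +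
      (Finset.univ.filter fun i => hKherm.eigenvalues i < 0).card ≤ n + m + p := by
    rw [← Finset.card_union_of_disjoint hdisj, ← hcardι]
    exact Finset.card_le_univ _
  have hposeq : (Finset.univ.filter fun i => 0 < hKherm.eigenvalues i).card = n + p := by omega
  have hnegeq : (Finset.univ.filter fun i => hKherm.eigenvalues i < 0).card = m := by omega
  refine ⟨hposeq, hnegeq, ?_⟩
  intro i
  have huniv : (Finset.univ.filter fun i => 0 < hKherm.eigenvalues i) ∪
      (Finset.univ.filter fun i => hKherm.eigenvalues i < 0) = Finset.univ := by
    apply Finset.eq_univ_of_card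
    rw [Finset.card_union_of_disjoint hdisj, hposeq, hnegeq, hcardι]
    ring
  have : i ∈ (Finset.univ.filter fun i => 0 < hKherm.eigenvalues i) ∪
      (Finset.univ.filter fun i => hKherm.eigenvalues i < 0) := by
    rw [huniv]; exact Finset.mem_univ i
  rcases Finset.mem_union.mp this with h | h <;>
    simp only [Finset.mem_filter] at h
  · exact ne_of_gt h.2
  · exact ne_of_lt h.2
end

section
/- Root structure of the saddle-point cubic: let a, b, c, d, e be real numbers with a > 0, d ≥ 0, e ≥ 0, s₁ := d + b²/a > 0 and s₂ := e + c²/s₁ > 0. Then the cubic polynomial p(λ) = λ³ + (d − a − e)λ² + (ae − ad − de − b² − c²)λ + (ade + ac² + b²e) has three real roots, exactly two of which are positive and one negative: there exist real numbers x < 0 and y, z > 0 such that p(λ) = (λ − x)(λ − y)(λ − z) for all λ ∈ ℝ. -/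
/-- Factor a monic quadratic with negative constant term into a negative
and a positive root. -/
lemma quad_fac (B C : ℝ) (hC : C < 0) :
    ∃ x z : ℝ, x < 0 ∧ 0 < z ∧ ∀ l : ℝ, l ^ 2 + B * l + C = (l - x) * (l - z) := by
  have hDnn : (0:ℝ) ≤ B ^ 2 - 4 * C := by nlinarith [sq_nonneg B]
  set s := Real.sqrt (B ^ 2 - 4 * C) with hs
  have hs2 : s ^ 2 = B ^ 2 - 4 * C := Real.sq_sqrt hDnn
  have hsnn : 0 ≤ s := Real.sqrt_nonneg _
  have hsB : |B| < s := by
    nlinarith [sq_abs B, abs_nonneg B]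
  refine ⟨(-B - s) / 2, (-B + s) / 2, ?_, ?_, ?_⟩
  · have h1 : -B ≤ |B| := neg_le_abs B
    linarith
  · have h1 : B ≤ |B| := le_abs_self B
    linarith
  · intro l
    linear_combination hs2 / 4

/-- Factor a monic cubic given positivity at 0 and negativity at a positive
point into one negative and two positive roots. -/
lemma cubic_fac (B C D t3 : ℝ) (hD : 0 < D) (h3 : 0 < t3)
    (hp3 : t3 ^ 3 + B * t3 ^ 2 + C * t3 + D < 0) :
    ∃ x y z : ℝ, x < 0 ∧ 0 < y ∧ 0 < z ∧ ∀ l : ℝ,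
      l ^ 3 + B * l ^ 2 + C * l + D = (l - x) * (l - y) * (l - z) := by
  set f : ℝ → ℝ := fun l => l ^ 3 + B * l ^ 2 + C * l + D with hf
  have hcont : Continuous f := by fun_prop
  set M : ℝ := 1 + |B| + |C| + |D| + t3 with hM
  have hM1 : 1 ≤ M := by
    have := abs_nonneg B; have := abs_nonneg C; have := abs_nonneg D; linarith
  have hMt3 : t3 < M := by
    have := abs_nonneg B; have := abs_nonneg C; have := abs_nonneg D; linarith
  have hfM : 0 < f M := by
    have h1 : -|B| ≤ B := neg_abs_le B
    have h2 : -|C| ≤ C := neg_abs_le C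
    have h3' : -|D| ≤ D := neg_abs_le D
    have hMa : |B| + |C| + |D| ≤ M - 1 := by linarith
    have hMpos : 0 < M := by linarith
    have key : M ^ 2 * (M - (|B| + |C| + |D|)) ≤ f M := by
      simp only [hf]
      nlinarith [abs_nonneg B, abs_nonneg C, abs_nonneg D, sq_nonneg M,
        mul_le_mul_of_nonneg_left h1 (sq_nonneg M), sq_nonneg (M - 1),
        mul_le_mul_of_nonneg_left h2 hMpos.le]
    nlinarith [sq_nonneg M]
  have hfnM : f (-M) < 0 := by
    have h1 : B ≤ |B| := le_abs_self B
    have h2 : C ≤ |C| := le_abs_self C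
    have h2' : -|C| ≤ C := neg_abs_le C
    have h3' : D ≤ |D| := le_abs_self D
    have hMpos : 0 < M := by linarith
    simp only [hf]
    nlinarith [abs_nonneg B, abs_nonneg C, abs_nonneg D, sq_nonneg M,
      mul_le_mul_of_nonneg_left h1 (sq_nonneg M), sq_nonneg (M - 1),
      mul_le_mul_of_nonneg_left h2' hMpos.le]
  have hf0 : f 0 = D := by simp [hf]
  -- root in (-M, 0)
  obtain ⟨x, hxmem, hx⟩ : ∃ x ∈ Set.Ioo (-M) (0:ℝ), f x = 0 := by
    have hsub := intermediate_value_Ioo (show (-M:ℝ) ≤ 0 by linarith) hcont.continuousOn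
    have : (0:ℝ) ∈ Set.Ioo (f (-M)) (f 0) := by
      rw [hf0]; exact ⟨hfnM, hD⟩
    exact hsub this
  -- root in (0, t3)
  obtain ⟨y, hymem, hy⟩ : ∃ y ∈ Set.Ioo (0:ℝ) t3, f y = 0 := by
    have hsub := intermediate_value_Ioo' (show (0:ℝ) ≤ t3 by linarith) hcont.continuousOn
    have : (0:ℝ) ∈ Set.Ioo (f t3) (f 0) := by
      rw [hf0]; exact ⟨hp3, hD⟩
    exact hsub this
  -- root in (t3, M)
  obtain ⟨z, hzmem, hz⟩ : ∃ z ∈ Set.Ioo t3 M, f z = 0 := by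
    have hsub := intermediate_value_Ioo (show t3 ≤ M by linarith) hcont.continuousOn
    have : (0:ℝ) ∈ Set.Ioo (f t3) (f M) := ⟨hp3, hfM⟩
    exact hsub this
  obtain ⟨hx1, hx2⟩ := hxmem
  obtain ⟨hy1, hy2⟩ := hymem
  obtain ⟨hz1, hz2⟩ := hzmem
  have hxy : x ≠ y := by linarith
  have hyz : y ≠ z := by linarith
  have hxz : x ≠ z := by linarith
  simp only [hf] at hx hy hz
  have h1 : x ^ 2 + x * y + y ^ 2 + B * (x + y) + C = 0 := by
    have hfac : (x - y) * (x ^ 2 + x * y + y ^ 2 + B * (x + y) + C) = 0 := by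
      linear_combination hx - hy
    rcases mul_eq_zero.mp hfac with h | h
    · exact absurd (sub_eq_zero.mp h) hxy
    · exact h
  have h2 : y ^ 2 + y * z + z ^ 2 + B * (y + z) + C = 0 := by
    have hfac : (y - z) * (y ^ 2 + y * z + z ^ 2 + B * (y + z) + C) = 0 := by
      linear_combination hy - hz
    rcases mul_eq_zero.mp hfac with h | h
    · exact absurd (sub_eq_zero.mp h) hyz
    · exact h
  have hB : B = -(x + y + z) := by
    have hfac : (x - z) * (x + y + z + B) = 0 := by linear_combination h1 - h2
    rcases mul_eq_zero.mp hfac with h | h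
    · exact absurd (sub_eq_zero.mp h) hxz
    · linarith
  have hC : C = x * y + y * z + x * z := by linear_combination h1 - (x + y) * hB
  have hDv : D = -(x * y * z) := by linear_combination hx - x ^ 2 * hB - x * hC
  exact ⟨x, y, z, hx2, hy1, by linarith, fun l => by
    linear_combination l ^ 2 * hB + l * hC + hDv⟩

/-- Root structure of the saddle-point cubic: two positive real roots and one
negative real root. -/
theorem stmt_4 (a b c d e : ℝ) (ha : 0 < a) (hd : 0 ≤ d) (he : 0 ≤ e)
    (hs₁ : 0 < d + b ^ 2 / a) (hs₂ : 0 < e + c ^ 2 / (d + b ^ 2 / a)) :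
    ∃ x y z : ℝ, x < 0 ∧ 0 < y ∧ 0 < z ∧
      ∀ lam : ℝ,
        lam ^ 3 + (d - a - e) * lam ^ 2 + (a * e - a * d - d * e - b ^ 2 - c ^ 2) * lam +
            (a * d * e + a * c ^ 2 + b ^ 2 * e) =
          (lam - x) * (lam - y) * (lam - z) := by
  have hane : a ≠ 0 := ha.ne'
  have hs1ne : d + b ^ 2 / a ≠ 0 := hs₁.ne'
  have had : 0 < a * d + b ^ 2 := by
    have h := mul_pos ha hs₁
    have heq : a * (d + b ^ 2 / a) = a * d + b ^ 2 := by field_simp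
    linarith [heq ▸ h]
  have hDpos : 0 < a * d * e + a * c ^ 2 + b ^ 2 * e := by
    have h := mul_pos (mul_pos ha hs₁) hs₂
    have hne2 : d * a + b ^ 2 ≠ 0 := by
      intro h0; apply had.ne'; linarith [h0]
    have heq : a * (d + b ^ 2 / a) * (e + c ^ 2 / (d + b ^ 2 / a))
        = a * d * e + a * c ^ 2 + b ^ 2 * e := by
      field_simp
      ring
    linarith [heq ▸ h]
  rcases lt_trichotomy a e with hae | hae | hae
  · by_cases hc : c = 0
    · subst hc
      have he' : 0 < e := by
        have : (0:ℝ) ^ 2 / (d + b ^ 2 / a) = 0 := by simp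
        rw [this] at hs₂; linarith
      obtain ⟨x, z, hx, hz, hq⟩ := quad_fac (d - a) (-(a * d + b ^ 2)) (by linarith)
      exact ⟨x, z, e, hx, hz, he', fun l => by linear_combination (l - e) * hq l⟩
    · have hc2 : 0 < c ^ 2 := by positivity
      have hp3 : e ^ 3 + (d - a - e) * e ^ 2 +
          (a * e - a * d - d * e - b ^ 2 - c ^ 2) * e +
          (a * d * e + a * c ^ 2 + b ^ 2 * e) < 0 := by nlinarith
      exact cubic_fac _ _ _ e hDpos (lt_trans ha hae) hp3
  · subst hae
    obtain ⟨x, z, hx, hz, hq⟩ := quad_fac (d - a) (-(a * d + b ^ 2 + c ^ 2))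
      (by nlinarith [sq_nonneg c])
    exact ⟨x, z, a, hx, hz, ha, fun l => by linear_combination (l - a) * hq l⟩
  · by_cases hb : b = 0
    · subst hb
      have hd' : 0 < d := by
        have : (0:ℝ) ^ 2 / a = 0 := by simp
        rw [this] at hs₁; linarith
      have hs₂' : 0 < e + c ^ 2 / d := by
        have h0 : d + (0:ℝ) ^ 2 / a = d := by simp
        rwa [h0] at hs₂
      have hdec : 0 < d * e + c ^ 2 := by
        have h := mul_pos hd' hs₂'
        have heq : d * (e + c ^ 2 / d) = d * e + c ^ 2 := by
          field_simp
        linarith [heq ▸ h]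
      obtain ⟨x, z, hx, hz, hq⟩ := quad_fac (d - e) (-(d * e + c ^ 2)) (by linarith)
      exact ⟨x, z, a, hx, hz, ha, fun l => by linear_combination (l - a) * hq l⟩
    · have hb2 : 0 < b ^ 2 := by positivity
      have hp3 : a ^ 3 + (d - a - e) * a ^ 2 +
          (a * e - a * d - d * e - b ^ 2 - c ^ 2) * a +
          (a * d * e + a * c ^ 2 + b ^ 2 * e) < 0 := by nlinarith
      exact cubic_fac _ _ _ a hDpos ha hp3
end

section
/- Upper bound on the eigenvalues of K: define q(λ) = λ³ + (μD_min − μA_max − μE_max)λ² + (μA_max·μE_max − μA_max·μD_min − μD_min·μE_max − σB_max² − σC_max²)λ + (μA_max·μD_min·μE_max + μA_max·σC_max² + σB_max²·μE_max). If ρ ∈ ℝ satisfies q(ρ) = 0 and every real root t of q satisfies t ≤ ρ (i.e., ρ is the largest real root of q), then every eigenvalue λ of K satisfies λ ≤ ρ. -/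
open Matrix

lemma cubic_le_root (b c d ρ lam : ℝ)
    (hmax : ∀ t : ℝ, t ^ 3 + b * t ^ 2 + c * t + d = 0 → t ≤ ρ)
    (h : lam ^ 3 + b * lam ^ 2 + c * lam + d ≤ 0) : lam ≤ ρ := by
  set T := |lam| + |b| + |c| + |d| + 1 with hT
  have hT1 : 1 ≤ T := by
    have := abs_nonneg lam; have := abs_nonneg b; have := abs_nonneg c; have := abs_nonneg d
    linarith
  have hlamT : lam ≤ T := by
    have := le_abs_self lam; have := abs_nonneg b; have := abs_nonneg c; have := abs_nonneg d
    linarith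
  have hTge : |b| + |c| + |d| + 1 ≤ T := by have := abs_nonneg lam; linarith
  have hqT : 0 < T ^ 3 + b * T ^ 2 + c * T + d := by
    have h1 : -|b| * T ^ 2 ≤ b * T ^ 2 :=
      mul_le_mul_of_nonneg_right (neg_abs_le b) (sq_nonneg T)
    have h2 : -|c| * T ≤ c * T :=
      mul_le_mul_of_nonneg_right (neg_abs_le c) (by linarith)
    have h3 : -|d| ≤ d := neg_abs_le d
    have hT2 : (1:ℝ) ≤ T ^ 2 := by nlinarith
    have hTT2 : T ≤ T ^ 2 := by nlinarith
    have hA : (|b| + |c| + |d| + 1) * T ^ 2 ≤ T * T ^ 2 :=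
      mul_le_mul_of_nonneg_right hTge (sq_nonneg T)
    have hB : |c| * T ≤ |c| * T ^ 2 := mul_le_mul_of_nonneg_left hTT2 (abs_nonneg c)
    have hC : |d| * 1 ≤ |d| * T ^ 2 := mul_le_mul_of_nonneg_left hT2 (abs_nonneg d)
    nlinarith [hA, hB, hC, hT2]
  have hcont : ContinuousOn (fun t : ℝ => t ^ 3 + b * t ^ 2 + c * t + d) (Set.Icc lam T) := by
    fun_prop
  obtain ⟨t, ht, hq⟩ := intermediate_value_Icc hlamT hcont ⟨h, hqT.le⟩
  exact le_trans ht.1 (hmax t hq)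


set_option maxHeartbeats 1000000 in
/-- Upper bound on the eigenvalues of the double saddle-point matrix `K`:
every eigenvalue is at most the largest real root of the cubic `q`. -/
theorem stmt_5 (n m p : ℕ) (hn : 0 < n) (hm : 0 < m) (hp : 0 < p)
    (A : Matrix (Fin n) (Fin n) ℝ) (B : Matrix (Fin m) (Fin n) ℝ)
    (C : Matrix (Fin p) (Fin m) ℝ) (D : Matrix (Fin m) (Fin m) ℝ)
    (E : Matrix (Fin p) (Fin p) ℝ)
    (hA : A.PosDef) (hD : D.PosSemidef) (hE : E.PosSemidef)
    (S₁ : Matrix (Fin m) (Fin m) ℝ) (hS₁ : S₁ = D + B * A⁻¹ * Bᵀ)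
    (S₂ : Matrix (Fin p) (Fin p) ℝ) (hS₂ : S₂ = E + C * S₁⁻¹ * Cᵀ)
    (hS₁pd : S₁.PosDef) (hS₂pd : S₂.PosDef)
    (K : Matrix ((Fin n ⊕ Fin m) ⊕ Fin p) ((Fin n ⊕ Fin m) ⊕ Fin p) ℝ)
    (hK : K = fromBlocks (fromBlocks A Bᵀ B (-D)) (fromRows 0 Cᵀ) (fromCols 0 C) E)
    -- spectral parameters
    (μAmin μAmax μDmin μDmax μEmin μEmax σBmax σBmin σCmax σCmin : ℝ)
    (hμA0 : 0 < μAmin) (hμA : μAmin ≤ μAmax)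
    (hAbnd : ∀ x : Fin n → ℝ,
      μAmin * (x ⬝ᵥ x) ≤ x ⬝ᵥ A.mulVec x ∧ x ⬝ᵥ A.mulVec x ≤ μAmax * (x ⬝ᵥ x))
    (hμD0 : 0 ≤ μDmin) (hμD : μDmin ≤ μDmax)
    (hDbnd : ∀ y : Fin m → ℝ,
      μDmin * (y ⬝ᵥ y) ≤ y ⬝ᵥ D.mulVec y ∧ y ⬝ᵥ D.mulVec y ≤ μDmax * (y ⬝ᵥ y))
    (hμE0 : 0 ≤ μEmin) (hμE : μEmin ≤ μEmax)
    (hEbnd : ∀ z : Fin p → ℝ,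
      μEmin * (z ⬝ᵥ z) ≤ z ⬝ᵥ E.mulVec z ∧ z ⬝ᵥ E.mulVec z ≤ μEmax * (z ⬝ᵥ z))
    (hσBmax : 0 < σBmax)
    (hBmax : ∀ x : Fin n → ℝ, B.mulVec x ⬝ᵥ B.mulVec x ≤ σBmax ^ 2 * (x ⬝ᵥ x))
    (hσBmin : 0 ≤ σBmin)
    (hBmin : ∀ y : Fin m → ℝ, σBmin ^ 2 * (y ⬝ᵥ y) ≤ Bᵀ.mulVec y ⬝ᵥ Bᵀ.mulVec y)
    (hσCmax : 0 < σCmax)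
    (hCmax : ∀ y : Fin m → ℝ, C.mulVec y ⬝ᵥ C.mulVec y ≤ σCmax ^ 2 * (y ⬝ᵥ y))
    (hσCmin : 0 ≤ σCmin)
    (hCmin : ∀ z : Fin p → ℝ, σCmin ^ 2 * (z ⬝ᵥ z) ≤ Cᵀ.mulVec z ⬝ᵥ Cᵀ.mulVec z)
    -- ρ is the largest real root of q
    (ρ : ℝ)
    (hρroot : ρ ^ 3 + (μDmin - μAmax - μEmax) * ρ ^ 2 +
        (μAmax * μEmax - μAmax * μDmin - μDmin * μEmax - σBmax ^ 2 - σCmax ^ 2) * ρ +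
        (μAmax * μDmin * μEmax + μAmax * σCmax ^ 2 + σBmax ^ 2 * μEmax) = 0)
    (hρmax : ∀ t : ℝ,
      t ^ 3 + (μDmin - μAmax - μEmax) * t ^ 2 +
          (μAmax * μEmax - μAmax * μDmin - μDmin * μEmax - σBmax ^ 2 - σCmax ^ 2) * t +
          (μAmax * μDmin * μEmax + μAmax * σCmax ^ 2 + σBmax ^ 2 * μEmax) = 0 → t ≤ ρ) :
    ∀ (lam : ℝ) (v : (Fin n ⊕ Fin m) ⊕ Fin p → ℝ), v ≠ 0 → K.mulVec v = lam • v →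
      lam ≤ ρ := by
  intro lam v hv hKv
  obtain ⟨b, hb⟩ : ∃ b : ℝ, μDmin - μAmax - μEmax = b := ⟨_, rfl⟩
  obtain ⟨c, hc⟩ : ∃ c : ℝ,
      μAmax * μEmax - μAmax * μDmin - μDmin * μEmax - σBmax ^ 2 - σCmax ^ 2 = c := ⟨_, rfl⟩
  obtain ⟨d, hd⟩ : ∃ d : ℝ,
      μAmax * μDmin * μEmax + μAmax * σCmax ^ 2 + σBmax ^ 2 * μEmax = d := ⟨_, rfl⟩
  rw [hb, hc, hd] at hρmax
  have qle : ∀ t : ℝ, t ^ 3 + b * t ^ 2 + c * t + d ≤ 0 → t ≤ ρ :=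
    fun t ht => cubic_le_root b c d ρ t hρmax ht
  by_contra hlt
  push_neg at hlt
  -- ρ is at least μAmax and μEmax
  have hboth : μAmax ≤ ρ ∧ μEmax ≤ ρ := by
    rcases le_total μAmax μEmax with hae | hae
    · have hE' : μEmax ≤ ρ := by
        refine qle μEmax ?_
        nlinarith [mul_nonneg (sq_nonneg σCmax) (sub_nonneg.mpr hae), hb, hc, hd]
      exact ⟨le_trans hae hE', hE'⟩
    · have hA' : μAmax ≤ ρ := by
        refine qle μAmax ?_
        nlinarith [mul_nonneg (sq_nonneg σBmax) (sub_nonneg.mpr hae), hb, hc, hd]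
      exact ⟨hA', le_trans hae hA'⟩
  have ha' : 0 < lam - μAmax := by linarith [hboth.1]
  have he' : 0 < lam - μEmax := by linarith [hboth.2]
  have hq : 0 < lam ^ 3 + b * lam ^ 2 + c * lam + d := by
    by_contra hq0
    push_neg at hq0
    exact absurd (qle lam hq0) (not_le.mpr hlt)
  -- components
  have hv2 : ∃ xyz : ((Fin n → ℝ) × (Fin m → ℝ) × (Fin p → ℝ)),
      v = Sum.elim (Sum.elim xyz.1 xyz.2.1) xyz.2.2 := by
    refine ⟨⟨fun i => v (Sum.inl (Sum.inl i)), fun j => v (Sum.inl (Sum.inr j)),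
      fun k => v (Sum.inr k)⟩, ?_⟩
    funext w; rcases w with (i | j) | k <;> rfl
  obtain ⟨⟨x, y, z⟩, hv'⟩ := hv2
  rw [hv', hK] at hKv
  have hfx : A *ᵥ x + Bᵀ *ᵥ y = lam • x := by
    funext i
    have := congrFun hKv (Sum.inl (Sum.inl i))
    simpa [fromBlocks_mulVec, Sum.elim_comp_inl, Sum.elim_comp_inr] using this
  have hfy : B *ᵥ x + (-D) *ᵥ y + Cᵀ *ᵥ z = lam • y := by
    funext j
    have := congrFun hKv (Sum.inl (Sum.inr j))
    simpa [fromBlocks_mulVec, Sum.elim_comp_inl, Sum.elim_comp_inr, add_assoc] using this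
  have hfz : C *ᵥ y + E *ᵥ z = lam • z := by
    funext k
    have := congrFun hKv (Sum.inr k)
    simpa [fromBlocks_mulVec, Sum.elim_comp_inl, Sum.elim_comp_inr] using this
  -- dot product identities
  have hs_eq : x ⬝ᵥ (Bᵀ *ᵥ y) = (B *ᵥ x) ⬝ᵥ y := by
    rw [dotProduct_mulVec, vecMul_transpose]
  have hr_eq : y ⬝ᵥ (Cᵀ *ᵥ z) = (C *ᵥ y) ⬝ᵥ z := by
    rw [dotProduct_mulVec, vecMul_transpose]
  have h1 : x ⬝ᵥ (A *ᵥ x) + (B *ᵥ x) ⬝ᵥ y = lam * (x ⬝ᵥ x) := by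
    have := congrArg (fun w => x ⬝ᵥ w) hfx
    simpa [dotProduct_add, dotProduct_smul, smul_eq_mul, hs_eq] using this
  have h2 : (B *ᵥ x) ⬝ᵥ y - y ⬝ᵥ (D *ᵥ y) + (C *ᵥ y) ⬝ᵥ z = lam * (y ⬝ᵥ y) := by
    have h := congrArg (fun w => y ⬝ᵥ w) hfy
    simp only [dotProduct_add, dotProduct_smul, smul_eq_mul, neg_mulVec, dotProduct_neg,
      hr_eq] at h
    rw [dotProduct_comm y (B *ᵥ x)] at h
    linarith [h]
  have h3 : (C *ᵥ y) ⬝ᵥ z + z ⬝ᵥ (E *ᵥ z) = lam * (z ⬝ᵥ z) := by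
    have h := congrArg (fun w => z ⬝ᵥ w) hfz
    simp only [dotProduct_add, dotProduct_smul, smul_eq_mul] at h
    rw [dotProduct_comm z (C *ᵥ y)] at h
    linarith [h]
  -- nonnegativity
  have hP : 0 ≤ x ⬝ᵥ x := Finset.sum_nonneg fun i _ => mul_self_nonneg _
  have hQ0 : 0 ≤ y ⬝ᵥ y := Finset.sum_nonneg fun i _ => mul_self_nonneg _
  have hR : 0 ≤ z ⬝ᵥ z := Finset.sum_nonneg fun i _ => mul_self_nonneg _
  -- basic inequalities
  have ineq1 : (lam - μAmax) * (x ⬝ᵥ x) ≤ (B *ᵥ x) ⬝ᵥ y := by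
    have := (hAbnd x).2; linarith [this, h1]
  have ineq2 : (lam - μEmax) * (z ⬝ᵥ z) ≤ (C *ᵥ y) ⬝ᵥ z := by
    have := (hEbnd z).2; linarith [this, h3]
  have ineq3 : (lam + μDmin) * (y ⬝ᵥ y) ≤ (B *ᵥ x) ⬝ᵥ y + (C *ᵥ y) ⬝ᵥ z := by
    have := (hDbnd y).1; linarith [this, h2]
  -- Cauchy-Schwarz
  have hs2 : ((B *ᵥ x) ⬝ᵥ y) ^ 2 ≤ σBmax ^ 2 * (x ⬝ᵥ x) * (y ⬝ᵥ y) := by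
    have hcs : ((B *ᵥ x) ⬝ᵥ y) ^ 2 ≤ ((B *ᵥ x) ⬝ᵥ (B *ᵥ x)) * (y ⬝ᵥ y) := by
      simpa [dotProduct, pow_two] using
        Finset.sum_mul_sq_le_sq_mul_sq Finset.univ (B *ᵥ x) y
    calc ((B *ᵥ x) ⬝ᵥ y) ^ 2 ≤ ((B *ᵥ x) ⬝ᵥ (B *ᵥ x)) * (y ⬝ᵥ y) := hcs
      _ ≤ σBmax ^ 2 * (x ⬝ᵥ x) * (y ⬝ᵥ y) := mul_le_mul_of_nonneg_right (hBmax x) hQ0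
  have hr2 : ((C *ᵥ y) ⬝ᵥ z) ^ 2 ≤ σCmax ^ 2 * (y ⬝ᵥ y) * (z ⬝ᵥ z) := by
    have hcs : ((C *ᵥ y) ⬝ᵥ z) ^ 2 ≤ ((C *ᵥ y) ⬝ᵥ (C *ᵥ y)) * (z ⬝ᵥ z) := by
      simpa [dotProduct, pow_two] using
        Finset.sum_mul_sq_le_sq_mul_sq Finset.univ (C *ᵥ y) z
    calc ((C *ᵥ y) ⬝ᵥ z) ^ 2 ≤ ((C *ᵥ y) ⬝ᵥ (C *ᵥ y)) * (z ⬝ᵥ z) := hcs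
      _ ≤ σCmax ^ 2 * (y ⬝ᵥ y) * (z ⬝ᵥ z) := mul_le_mul_of_nonneg_right (hCmax y) hR
  -- s, r nonneg and Q > 0
  have hs0 : 0 ≤ (B *ᵥ x) ⬝ᵥ y := le_trans (mul_nonneg ha'.le hP) ineq1
  have hr0 : 0 ≤ (C *ᵥ y) ⬝ᵥ z := le_trans (mul_nonneg he'.le hR) ineq2
  have hQ : 0 < y ⬝ᵥ y := by
    rcases hQ0.eq_or_lt with hQz | hQz
    · exfalso
      have hy0 : y = 0 := dotProduct_self_eq_zero.mp hQz.symm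
      have hsz : (B *ᵥ x) ⬝ᵥ y = 0 := by rw [hy0]; simp
      have hrz : (C *ᵥ y) ⬝ᵥ z = 0 := by rw [hy0]; simp
      have hPz : x ⬝ᵥ x = 0 := by
        rw [hsz] at ineq1
        have := mul_nonneg ha'.le hP
        have hle : (lam - μAmax) * (x ⬝ᵥ x) = 0 := le_antisymm ineq1 this
        rcases mul_eq_zero.mp hle with h | h
        · exact absurd h (ne_of_gt ha')
        · exact h
      have hRz : z ⬝ᵥ z = 0 := by
        rw [hrz] at ineq2
        have := mul_nonneg he'.le hR
        have hle : (lam - μEmax) * (z ⬝ᵥ z) = 0 := le_antisymm ineq2 this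
        rcases mul_eq_zero.mp hle with h | h
        · exact absurd h (ne_of_gt he')
        · exact h
      have hx0 : x = 0 := dotProduct_self_eq_zero.mp hPz
      have hz0 : z = 0 := dotProduct_self_eq_zero.mp hRz
      apply hv
      rw [hv', hx0, hy0, hz0]
      funext w; rcases w with (i | j) | k <;> rfl
    · exact hQz
  -- key inequalities
  have key1 : (lam - μAmax) * ((B *ᵥ x) ⬝ᵥ y) ≤ σBmax ^ 2 * (y ⬝ᵥ y) := by
    rcases hs0.eq_or_lt with hsz | hsz
    · rw [← hsz, mul_zero]; exact mul_nonneg (sq_nonneg _) hQ0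
    · refine le_of_mul_le_mul_right ?_ hsz
      calc (lam - μAmax) * ((B *ᵥ x) ⬝ᵥ y) * ((B *ᵥ x) ⬝ᵥ y)
          = (lam - μAmax) * (((B *ᵥ x) ⬝ᵥ y) ^ 2) := by ring
        _ ≤ (lam - μAmax) * (σBmax ^ 2 * (x ⬝ᵥ x) * (y ⬝ᵥ y)) :=
            mul_le_mul_of_nonneg_left hs2 ha'.le
        _ = (σBmax ^ 2 * (y ⬝ᵥ y)) * ((lam - μAmax) * (x ⬝ᵥ x)) := by ring
        _ ≤ (σBmax ^ 2 * (y ⬝ᵥ y)) * ((B *ᵥ x) ⬝ᵥ y) :=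
            mul_le_mul_of_nonneg_left ineq1 (mul_nonneg (sq_nonneg _) hQ0)
  have key2 : (lam - μEmax) * ((C *ᵥ y) ⬝ᵥ z) ≤ σCmax ^ 2 * (y ⬝ᵥ y) := by
    rcases hr0.eq_or_lt with hrz | hrz
    · rw [← hrz, mul_zero]; exact mul_nonneg (sq_nonneg _) hQ0
    · refine le_of_mul_le_mul_right ?_ hrz
      calc (lam - μEmax) * ((C *ᵥ y) ⬝ᵥ z) * ((C *ᵥ y) ⬝ᵥ z)
          = (lam - μEmax) * (((C *ᵥ y) ⬝ᵥ z) ^ 2) := by ring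
        _ ≤ (lam - μEmax) * (σCmax ^ 2 * (y ⬝ᵥ y) * (z ⬝ᵥ z)) :=
            mul_le_mul_of_nonneg_left hr2 he'.le
        _ = (σCmax ^ 2 * (y ⬝ᵥ y)) * ((lam - μEmax) * (z ⬝ᵥ z)) := by ring
        _ ≤ (σCmax ^ 2 * (y ⬝ᵥ y)) * ((C *ᵥ y) ⬝ᵥ z) :=
            mul_le_mul_of_nonneg_left ineq2 (mul_nonneg (sq_nonneg _) hQ0)
  -- final contradiction
  have hqQ : 0 < (lam ^ 3 + b * lam ^ 2 + c * lam + d) * (y ⬝ᵥ y) := mul_pos hq hQ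
  rw [← hb, ← hc, ← hd] at hqQ
  have T1 := mul_le_mul_of_nonneg_left ineq3 (mul_pos ha' he').le
  have T2 := mul_le_mul_of_nonneg_left key1 he'.le
  have T3 := mul_le_mul_of_nonneg_left key2 ha'.le
  nlinarith [T1, T2, T3, hqQ]
end

section
/- Lower bound on the eigenvalues of K: define r(λ) = λ³ + (μD_max − μA_min − μE_min)λ² + (μA_min·μE_min − μA_min·μD_max − μD_max·μE_min − σB_max² − σC_max²)λ + (μA_min·μD_max·μE_min + μA_min·σC_max² + σB_max²·μE_min). If ρ < 0 satisfies r(ρ) = 0 (ρ is the unique negative root of r), then every eigenvalue λ of K satisfies λ ≥ ρ. -/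
open Matrix

private lemma stmt6_cs {ι : Type*} [Fintype ι] (u w : ι → ℝ) :
    (u ⬝ᵥ w) ^ 2 ≤ (u ⬝ᵥ u) * (w ⬝ᵥ w) := by
  simpa [dotProduct, sq] using Finset.sum_mul_sq_le_sq_mul_sq Finset.univ u w

private lemma stmt6_zeroX (a lam X : ℝ) (ha : 0 ≤ a) (hlam : lam < 0) (hX : 0 ≤ X)
    (h : a * X ≤ lam * X) : X = 0 := by nlinarith

private lemma stmt6_dp_nonneg {ι : Type*} [Fintype ι] (u : ι → ℝ) : 0 ≤ u ⬝ᵥ u :=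
  Finset.sum_nonneg fun i _ => mul_self_nonneg (u i)

set_option maxHeartbeats 1000000 in
private lemma stmt6_arith (a d e b2 c2 X Y Z lam ρ sAx s sD t sE : ℝ)
    (ha : 0 < a) (he : 0 ≤ e) (hb2 : 0 ≤ b2) (hc2 : 0 ≤ c2)
    (hX : 0 ≤ X) (hZ : 0 ≤ Z) (hYpos : 0 < Y)
    (hsAx : a * X ≤ sAx) (hsD : sD ≤ d * Y) (hsE : e * Z ≤ sE)
    (hs2 : s ^ 2 ≤ b2 * X * Y) (ht2 : t ^ 2 ≤ c2 * Y * Z)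
    (e1 : sAx + s = lam * X) (e2 : s - sD + t = lam * Y) (e3 : t + sE = lam * Z)
    (hlam : lam < 0) (hρ : ρ < 0) (hlt : lam < ρ)
    (hroot : (ρ + d) * (a - ρ) * (e - ρ) + b2 * (e - ρ) + c2 * (a - ρ) = 0) : False := by
  have hal : 0 < a - lam := by linarith
  have hel : 0 < e - lam := by linarith
  have haρ : 0 < a - ρ := by linarith
  have heρ : 0 < e - ρ := by linarith
  have hsle : (a - lam) * X ≤ -s := by linarith
  have hsle0 : s ≤ 0 := by linarith [mul_nonneg hal.le hX]
  have htle : (e - lam) * Z ≤ -t := by linarith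
  have htle0 : t ≤ 0 := by linarith [mul_nonneg hel.le hZ]
  have h4 : (a - lam) * (-s) ≤ b2 * Y := by
    rcases eq_or_lt_of_le hX with hX0 | hXpos
    · have hs2' := hs2
      rw [← hX0] at hs2'
      have hs0 : s = 0 := by nlinarith [sq_nonneg s]
      rw [hs0]
      nlinarith [mul_nonneg hb2 hYpos.le]
    · have key : (a - lam) * X * (-s) ≤ (-s) * (-s) :=
        mul_le_mul_of_nonneg_right hsle (neg_nonneg.mpr hsle0)
      have h' : X * ((a - lam) * (-s)) ≤ X * (b2 * Y) := by linarith [key, hs2]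
      exact le_of_mul_le_mul_left h' hXpos
  have h5 : (e - lam) * (-t) ≤ c2 * Y := by
    rcases eq_or_lt_of_le hZ with hZ0 | hZpos
    · have ht2' := ht2
      rw [← hZ0] at ht2'
      have ht0 : t = 0 := by nlinarith [sq_nonneg t]
      rw [ht0]
      nlinarith [mul_nonneg hc2 hYpos.le]
    · have key : (e - lam) * Z * (-t) ≤ (-t) * (-t) :=
        mul_le_mul_of_nonneg_right htle (neg_nonneg.mpr htle0)
      have h' : Z * ((e - lam) * (-t)) ≤ Z * (c2 * Y) := by linarith [key, ht2]
      exact le_of_mul_le_mul_left h' hZpos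
  have h6 : s + t ≤ (lam + d) * Y := by linarith
  have hR : 0 ≤ (lam + d) * (a - lam) * (e - lam) + b2 * (e - lam) + c2 * (a - lam) := by
    have k6 : (a - lam) * (e - lam) * (s + t) ≤ (a - lam) * (e - lam) * ((lam + d) * Y) :=
      mul_le_mul_of_nonneg_left h6 (mul_pos hal hel).le
    have k4 : (e - lam) * ((a - lam) * (-s)) ≤ (e - lam) * (b2 * Y) :=
      mul_le_mul_of_nonneg_left h4 hel.le
    have k5 : (a - lam) * ((e - lam) * (-t)) ≤ (a - lam) * (c2 * Y) :=
      mul_le_mul_of_nonneg_left h5 hal.le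
    have hRY : 0 ≤ ((lam + d) * (a - lam) * (e - lam) + b2 * (e - lam) + c2 * (a - lam)) * Y := by
      linarith [k4, k5, k6]
    exact le_of_mul_le_mul_right (by linarith) hYpos
  have hid : ((ρ + d) * (a - ρ) * (e - ρ) + b2 * (e - ρ) + c2 * (a - ρ)) * ((a - lam) * (e - lam))
      - ((lam + d) * (a - lam) * (e - lam) + b2 * (e - lam) + c2 * (a - lam)) * ((a - ρ) * (e - ρ))
      = (ρ - lam) * ((a - ρ) * (e - ρ) * ((a - lam) * (e - lam)) + b2 * ((e - ρ) * (e - lam))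
          + c2 * ((a - ρ) * (a - lam))) := by ring
  rw [hroot] at hid
  have hP : 0 < (a - ρ) * (e - ρ) * ((a - lam) * (e - lam)) + b2 * ((e - ρ) * (e - lam))
      + c2 * ((a - ρ) * (a - lam)) := by
    linarith [mul_pos (mul_pos haρ heρ) (mul_pos hal hel),
      mul_nonneg hb2 (mul_pos heρ hel).le, mul_nonneg hc2 (mul_pos haρ hal).le]
  have h7 : 0 < (ρ - lam) * ((a - ρ) * (e - ρ) * ((a - lam) * (e - lam))
      + b2 * ((e - ρ) * (e - lam)) + c2 * ((a - ρ) * (a - lam))) :=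
    mul_pos (by linarith) hP
  linarith [hid, h7, mul_nonneg hR (mul_pos haρ heρ).le]

/-- Lower bound on the eigenvalues of the double saddle-point matrix `K`:
every eigenvalue is at least the (unique) negative root of the cubic `r`. -/
theorem stmt_6 (n m p : ℕ) (hn : 0 < n) (hm : 0 < m) (hp : 0 < p)
    (A : Matrix (Fin n) (Fin n) ℝ) (B : Matrix (Fin m) (Fin n) ℝ)
    (C : Matrix (Fin p) (Fin m) ℝ) (D : Matrix (Fin m) (Fin m) ℝ)
    (E : Matrix (Fin p) (Fin p) ℝ)
    (hA : A.PosDef) (hD : D.PosSemidef) (hE : E.PosSemidef)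
    (S₁ : Matrix (Fin m) (Fin m) ℝ) (hS₁ : S₁ = D + B * A⁻¹ * Bᵀ)
    (S₂ : Matrix (Fin p) (Fin p) ℝ) (hS₂ : S₂ = E + C * S₁⁻¹ * Cᵀ)
    (hS₁pd : S₁.PosDef) (hS₂pd : S₂.PosDef)
    (K : Matrix ((Fin n ⊕ Fin m) ⊕ Fin p) ((Fin n ⊕ Fin m) ⊕ Fin p) ℝ)
    (hK : K = fromBlocks (fromBlocks A Bᵀ B (-D)) (fromRows 0 Cᵀ) (fromCols 0 C) E)
    -- spectral parameters
    (μAmin μAmax μDmin μDmax μEmin μEmax σBmax σBmin σCmax σCmin : ℝ)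
    (hμA0 : 0 < μAmin) (hμA : μAmin ≤ μAmax)
    (hAbnd : ∀ x : Fin n → ℝ,
      μAmin * (x ⬝ᵥ x) ≤ x ⬝ᵥ A.mulVec x ∧ x ⬝ᵥ A.mulVec x ≤ μAmax * (x ⬝ᵥ x))
    (hμD0 : 0 ≤ μDmin) (hμD : μDmin ≤ μDmax)
    (hDbnd : ∀ y : Fin m → ℝ,
      μDmin * (y ⬝ᵥ y) ≤ y ⬝ᵥ D.mulVec y ∧ y ⬝ᵥ D.mulVec y ≤ μDmax * (y ⬝ᵥ y))
    (hμE0 : 0 ≤ μEmin) (hμE : μEmin ≤ μEmax)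
    (hEbnd : ∀ z : Fin p → ℝ,
      μEmin * (z ⬝ᵥ z) ≤ z ⬝ᵥ E.mulVec z ∧ z ⬝ᵥ E.mulVec z ≤ μEmax * (z ⬝ᵥ z))
    (hσBmax : 0 < σBmax)
    (hBmax : ∀ x : Fin n → ℝ, B.mulVec x ⬝ᵥ B.mulVec x ≤ σBmax ^ 2 * (x ⬝ᵥ x))
    (hσBmin : 0 ≤ σBmin)
    (hBmin : ∀ y : Fin m → ℝ, σBmin ^ 2 * (y ⬝ᵥ y) ≤ Bᵀ.mulVec y ⬝ᵥ Bᵀ.mulVec y)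
    (hσCmax : 0 < σCmax)
    (hCmax : ∀ y : Fin m → ℝ, C.mulVec y ⬝ᵥ C.mulVec y ≤ σCmax ^ 2 * (y ⬝ᵥ y))
    (hσCmin : 0 ≤ σCmin)
    (hCmin : ∀ z : Fin p → ℝ, σCmin ^ 2 * (z ⬝ᵥ z) ≤ Cᵀ.mulVec z ⬝ᵥ Cᵀ.mulVec z)
    -- ρ is the unique negative root of r
    (ρ : ℝ) (hρneg : ρ < 0)
    (hρroot : ρ ^ 3 + (μDmax - μAmin - μEmin) * ρ ^ 2 +
        (μAmin * μEmin - μAmin * μDmax - μDmax * μEmin - σBmax ^ 2 - σCmax ^ 2) * ρ +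
        (μAmin * μDmax * μEmin + μAmin * σCmax ^ 2 + σBmax ^ 2 * μEmin) = 0) :
    ∀ (lam : ℝ) (v : (Fin n ⊕ Fin m) ⊕ Fin p → ℝ), v ≠ 0 → K.mulVec v = lam • v →
      ρ ≤ lam := by
  intro lam v hv0 heig
  by_contra hcon
  push_neg at hcon
  have hlam : lam < 0 := hcon.trans hρneg
  rw [hK] at heig
  set x : Fin n → ℝ := fun i => v (Sum.inl (Sum.inl i)) with hxdef
  set y : Fin m → ℝ := fun j => v (Sum.inl (Sum.inr j)) with hydef
  set z : Fin p → ℝ := fun k => v (Sum.inr k) with hzdef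
  have hv : v = Sum.elim (Sum.elim x y) z := by
    funext i; rcases i with (i | i) | i <;> rfl
  rw [hv] at heig
  simp only [fromBlocks_mulVec, Sum.elim_comp_inl, Sum.elim_comp_inr, fromRows_mulVec,
    fromCols_mulVec_sumElim, zero_mulVec, zero_add, neg_mulVec] at heig
  have hx : A *ᵥ x + Bᵀ *ᵥ y = lam • x := by
    funext i; simpa using congrFun heig (Sum.inl (Sum.inl i))
  have hy : B *ᵥ x - D *ᵥ y + Cᵀ *ᵥ z = lam • y := by
    funext j; simpa [sub_eq_add_neg] using congrFun heig (Sum.inl (Sum.inr j))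
  have hz : C *ᵥ y + E *ᵥ z = lam • z := by
    funext k; simpa using congrFun heig (Sum.inr k)
  -- dot-product equations
  have hs_eq : x ⬝ᵥ Bᵀ *ᵥ y = (B *ᵥ x) ⬝ᵥ y := by
    rw [dotProduct_mulVec, vecMul_transpose]
  have ht_eq : y ⬝ᵥ Cᵀ *ᵥ z = (C *ᵥ y) ⬝ᵥ z := by
    rw [dotProduct_mulVec, vecMul_transpose]
  have e1 : x ⬝ᵥ A *ᵥ x + (B *ᵥ x) ⬝ᵥ y = lam * (x ⬝ᵥ x) := by
    have := congrArg (fun w => x ⬝ᵥ w) hx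
    simpa [dotProduct_add, dotProduct_smul, smul_eq_mul, hs_eq] using this
  have e2 : (B *ᵥ x) ⬝ᵥ y - y ⬝ᵥ D *ᵥ y + (C *ᵥ y) ⬝ᵥ z = lam * (y ⬝ᵥ y) := by
    have := congrArg (fun w => y ⬝ᵥ w) hy
    simpa [dotProduct_add, dotProduct_sub, dotProduct_smul, smul_eq_mul, ht_eq,
      dotProduct_comm y (B *ᵥ x)] using this
  have e3 : (C *ᵥ y) ⬝ᵥ z + z ⬝ᵥ E *ᵥ z = lam * (z ⬝ᵥ z) := by
    have := congrArg (fun w => z ⬝ᵥ w) hz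
    simpa [dotProduct_add, dotProduct_smul, smul_eq_mul,
      dotProduct_comm z (C *ᵥ y)] using this
  have hXnn : 0 ≤ x ⬝ᵥ x := stmt6_dp_nonneg x
  have hYnn : 0 ≤ y ⬝ᵥ y := stmt6_dp_nonneg y
  have hZnn : 0 ≤ z ⬝ᵥ z := stmt6_dp_nonneg z
  by_cases hY0 : y ⬝ᵥ y = 0
  · -- then y = 0, and λ < 0 forces x = 0, z = 0, contradicting v ≠ 0
    have hy0 : y = 0 := dotProduct_self_eq_zero.mp hY0
    have hx0 : x = 0 := by
      rw [hy0] at e1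
      simp only [mulVec_zero, dotProduct_zero, zero_dotProduct, add_zero] at e1
      exact dotProduct_self_eq_zero.mp
        (stmt6_zeroX μAmin lam (x ⬝ᵥ x) hμA0.le hlam hXnn (le_of_le_of_eq (hAbnd x).1 e1))
    have hz0 : z = 0 := by
      rw [hy0] at e3
      simp only [mulVec_zero, dotProduct_zero, zero_dotProduct, zero_add] at e3
      exact dotProduct_self_eq_zero.mp
        (stmt6_zeroX μEmin lam (z ⬝ᵥ z) hμE0 hlam hZnn (le_of_le_of_eq (hEbnd z).1 e3))
    apply hv0
    rw [hv, hx0, hy0, hz0]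
    funext i; rcases i with (i | i) | i <;> simp
  · have hYpos : 0 < y ⬝ᵥ y := lt_of_le_of_ne hYnn (Ne.symm hY0)
    -- Cauchy–Schwarz bounds
    have hs2 : ((B *ᵥ x) ⬝ᵥ y) ^ 2 ≤ σBmax ^ 2 * (x ⬝ᵥ x) * (y ⬝ᵥ y) := by
      have h1 := stmt6_cs (B *ᵥ x) y
      have h2 := hBmax x
      nlinarith [stmt6_dp_nonneg (B *ᵥ x)]
    have ht2 : ((C *ᵥ y) ⬝ᵥ z) ^ 2 ≤ σCmax ^ 2 * (y ⬝ᵥ y) * (z ⬝ᵥ z) := by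
      have h1 := stmt6_cs (C *ᵥ y) z
      have h2 := hCmax y
      have h1' : ((C *ᵥ y) ⬝ᵥ z) ^ 2 ≤ ((C *ᵥ y) ⬝ᵥ (C *ᵥ y)) * (z ⬝ᵥ z) := h1
      nlinarith [stmt6_dp_nonneg (C *ᵥ y)]
    have hroot' : (ρ + μDmax) * (μAmin - ρ) * (μEmin - ρ) + σBmax ^ 2 * (μEmin - ρ)
        + σCmax ^ 2 * (μAmin - ρ) = 0 := by linear_combination hρroot
    exact stmt6_arith μAmin μDmax μEmin (σBmax ^ 2) (σCmax ^ 2)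
      (x ⬝ᵥ x) (y ⬝ᵥ y) (z ⬝ᵥ z) lam ρ
      (x ⬝ᵥ A *ᵥ x) ((B *ᵥ x) ⬝ᵥ y) (y ⬝ᵥ D *ᵥ y) ((C *ᵥ y) ⬝ᵥ z) (z ⬝ᵥ E *ᵥ z)
      hμA0 hμE0 (sq_nonneg σBmax) (sq_nonneg σCmax) hXnn hZnn hYpos
      (hAbnd x).1 (hDbnd y).2 (hEbnd z).1 hs2 ht2 e1 e2 e3 hlam hρneg hcon hroot'
end

section
/- Upper bound on the negative eigenvalues of K: every negative eigenvalue λ of K satisfies λ ≤ (μA_max − √(μA_max² + 4·σB_min²)) / 2. -/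
open Matrix

/-- Nonnegativity of the real dot product of a vector with itself. -/
lemma dps_nonneg {k : ℕ} (w : Fin k → ℝ) : 0 ≤ w ⬝ᵥ w := by
  simpa using dotProduct_star_self_nonneg w

/-- Cauchy–Schwarz for the bilinear form of a real PSD matrix. -/
lemma psd_cauchy_schwarz {k : ℕ} (P : Matrix (Fin k) (Fin k) ℝ) (hP : P.PosSemidef)
    (hPsymm : Pᵀ = P) (u w : Fin k → ℝ) :
    (u ⬝ᵥ P.mulVec w) ^ 2 ≤ (u ⬝ᵥ P.mulVec u) * (w ⬝ᵥ P.mulVec w) := by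
  have hsym : ∀ a b : Fin k → ℝ, a ⬝ᵥ P.mulVec b = b ⬝ᵥ P.mulVec a := by
    intro a b
    rw [dotProduct_mulVec, ← mulVec_transpose, hPsymm, dotProduct_comm]
  have key : ∀ t : ℝ, 0 ≤ (w ⬝ᵥ P.mulVec w) * (t * t)
      + (2 * (u ⬝ᵥ P.mulVec w)) * t + (u ⬝ᵥ P.mulVec u) := by
    intro t
    have h0 := hP.dotProduct_mulVec_nonneg (u + t • w)
    simp only [star_trivial] at h0
    have hexp : (u + t • w) ⬝ᵥ P.mulVec (u + t • w)
        = (w ⬝ᵥ P.mulVec w) * (t * t) + (2 * (u ⬝ᵥ P.mulVec w)) * t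
          + (u ⬝ᵥ P.mulVec u) := by
      simp only [mulVec_add, mulVec_smul, dotProduct_add, add_dotProduct,
        smul_dotProduct, dotProduct_smul, smul_eq_mul]
      rw [hsym w u]
      ring
    rw [hexp] at h0
    linarith
  have hd := discrim_le_zero key
  rw [discrim] at hd
  nlinarith [hd]

/-- If `P` is PSD with quadratic form bounded by `c`, then `xᵀP²x ≤ c xᵀPx`. -/
lemma psd_sq_bound {k : ℕ} (P : Matrix (Fin k) (Fin k) ℝ) (hP : P.PosSemidef)
    (hPsymm : Pᵀ = P) (c : ℝ) (hc : 0 ≤ c)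
    (hbc : ∀ x, x ⬝ᵥ P.mulVec x ≤ c * (x ⬝ᵥ x)) (x : Fin k → ℝ) :
    P.mulVec x ⬝ᵥ P.mulVec x ≤ c * (x ⬝ᵥ P.mulVec x) := by
  have hrw : P.mulVec x ⬝ᵥ P.mulVec x = x ⬝ᵥ P.mulVec (P.mulVec x) := by
    rw [dotProduct_mulVec, ← mulVec_transpose, hPsymm, dotProduct_comm,
      dotProduct_mulVec, ← mulVec_transpose, hPsymm]
  have ht0 : 0 ≤ x ⬝ᵥ P.mulVec x := by
    have := hP.dotProduct_mulVec_nonneg x; simpa using this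
  have hcs := psd_cauchy_schwarz P hP hPsymm x (P.mulVec x)
  have h2 : (P.mulVec x) ⬝ᵥ P.mulVec (P.mulVec x)
      ≤ c * (x ⬝ᵥ P.mulVec (P.mulVec x)) := by
    have := hbc (P.mulVec x)
    rw [hrw] at this
    exact this
  rw [hrw]
  have hs0 : 0 ≤ x ⬝ᵥ P.mulVec (P.mulVec x) := hrw ▸ dps_nonneg _
  rcases eq_or_lt_of_le hs0 with h | h
  · rw [← h]; positivity
  · nlinarith [hcs, h2, ht0, h]

/-- Upper bound on the negative eigenvalues of the double saddle-point matrix `K`. -/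
theorem stmt_7 (n m p : ℕ) (hn : 0 < n) (hm : 0 < m) (hp : 0 < p)
    (A : Matrix (Fin n) (Fin n) ℝ) (B : Matrix (Fin m) (Fin n) ℝ)
    (C : Matrix (Fin p) (Fin m) ℝ) (D : Matrix (Fin m) (Fin m) ℝ)
    (E : Matrix (Fin p) (Fin p) ℝ)
    (hA : A.PosDef) (hD : D.PosSemidef) (hE : E.PosSemidef)
    (S₁ : Matrix (Fin m) (Fin m) ℝ) (hS₁ : S₁ = D + B * A⁻¹ * Bᵀ)
    (S₂ : Matrix (Fin p) (Fin p) ℝ) (hS₂ : S₂ = E + C * S₁⁻¹ * Cᵀ)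
    (hS₁pd : S₁.PosDef) (hS₂pd : S₂.PosDef)
    (K : Matrix ((Fin n ⊕ Fin m) ⊕ Fin p) ((Fin n ⊕ Fin m) ⊕ Fin p) ℝ)
    (hK : K = fromBlocks (fromBlocks A Bᵀ B (-D)) (fromRows 0 Cᵀ) (fromCols 0 C) E)
    (μAmin μAmax σBmin : ℝ)
    (hμA0 : 0 < μAmin) (hμA : μAmin ≤ μAmax)
    (hAbnd : ∀ x : Fin n → ℝ,
      μAmin * (x ⬝ᵥ x) ≤ x ⬝ᵥ A.mulVec x ∧ x ⬝ᵥ A.mulVec x ≤ μAmax * (x ⬝ᵥ x))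
    (hσBmin : 0 ≤ σBmin)
    (hBmin : ∀ y : Fin m → ℝ, σBmin ^ 2 * (y ⬝ᵥ y) ≤ Bᵀ.mulVec y ⬝ᵥ Bᵀ.mulVec y) :
    ∀ (lam : ℝ) (v : (Fin n ⊕ Fin m) ⊕ Fin p → ℝ), v ≠ 0 → K.mulVec v = lam • v →
      lam < 0 → lam ≤ (μAmax - Real.sqrt (μAmax ^ 2 + 4 * σBmin ^ 2)) / 2 := by
  intro lam v hv hKv hlam
  set x : Fin n → ℝ := fun i => v (Sum.inl (Sum.inl i)) with hx
  set y : Fin m → ℝ := fun i => v (Sum.inl (Sum.inr i)) with hy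
  set z : Fin p → ℝ := fun i => v (Sum.inr i) with hz
  have hvdec : v = Sum.elim (Sum.elim x y) z := by
    funext i; rcases i with (i | i) | i <;> rfl
  rw [hvdec, hK, fromBlocks_mulVec] at hKv
  -- the three block equations
  have heq1 : A.mulVec x + Bᵀ.mulVec y = lam • x := by
    funext i
    have h := congrFun hKv (Sum.inl (Sum.inl i))
    simp only [Sum.elim_comp_inl, Sum.elim_comp_inr, fromBlocks_mulVec,
      fromRows_mulVec, Matrix.zero_mulVec, Sum.elim_inl, Sum.elim_inr,
      Pi.add_apply, Pi.smul_apply, smul_eq_mul, Pi.zero_apply, add_zero] at h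
    simpa using h
  have heq2 : B.mulVec x - D.mulVec y + Cᵀ.mulVec z = lam • y := by
    funext i
    have h := congrFun hKv (Sum.inl (Sum.inr i))
    simp only [Sum.elim_comp_inl, Sum.elim_comp_inr, fromBlocks_mulVec,
      fromRows_mulVec, Matrix.zero_mulVec, Sum.elim_inl, Sum.elim_inr,
      Pi.add_apply, Pi.smul_apply, smul_eq_mul, Pi.zero_apply, add_zero,
      neg_mulVec, Pi.neg_apply] at h
    simp only [Pi.add_apply, Pi.sub_apply, Pi.smul_apply, smul_eq_mul]
    linarith
  have heq3 : C.mulVec y + E.mulVec z = lam • z := by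
    funext i
    have h := congrFun hKv (Sum.inr i)
    simp only [Sum.elim_comp_inl, Sum.elim_comp_inr, fromCols_mulVec_sumElim,
      Matrix.zero_mulVec, Sum.elim_inl, Sum.elim_inr,
      Pi.add_apply, Pi.smul_apply, smul_eq_mul, Pi.zero_apply, zero_add] at h
    simpa using h
  -- basic facts
  have hAsymm : Aᵀ = A := by
    have h := hA.1.eq
    rwa [conjTranspose_eq_transpose_of_trivial] at h
  have hDd : ∀ w, 0 ≤ w ⬝ᵥ D.mulVec w := fun w => by simpa using hD.dotProduct_mulVec_nonneg w
  have hEd : ∀ w, 0 ≤ w ⬝ᵥ E.mulVec w := fun w => by simpa using hE.dotProduct_mulVec_nonneg w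
  have hdotT : ∀ (u : Fin m → ℝ) (w : Fin n → ℝ),
      u ⬝ᵥ B.mulVec w = w ⬝ᵥ Bᵀ.mulVec u := by
    intro u w
    rw [dotProduct_mulVec, ← mulVec_transpose, dotProduct_comm]
  have hdotC : ∀ (u : Fin p → ℝ) (w : Fin m → ℝ),
      u ⬝ᵥ C.mulVec w = w ⬝ᵥ Cᵀ.mulVec u := by
    intro u w
    rw [dotProduct_mulVec, ← mulVec_transpose, dotProduct_comm]
  by_cases hy0 : y = 0
  · exfalso
    have hx0 : x = 0 := by
      have hAx : A.mulVec x = lam • x := by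
        have h := heq1; rw [hy0] at h; simpa using h
      have hq : x ⬝ᵥ A.mulVec x = lam * (x ⬝ᵥ x) := by
        rw [hAx, dotProduct_smul]; rfl
      have h1 := (hAbnd x).1
      by_contra hxne
      have hxx' : 0 < x ⬝ᵥ x := by
        rcases eq_or_lt_of_le (dps_nonneg x) with h | h
        · exact absurd (dotProduct_self_eq_zero.mp h.symm) hxne
        · exact h
      nlinarith
    have hz0 : z = 0 := by
      have hEz : E.mulVec z = lam • z := by
        have h := heq3; rw [hy0] at h; simpa using h
      have hq : z ⬝ᵥ E.mulVec z = lam * (z ⬝ᵥ z) := by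
        rw [hEz, dotProduct_smul]; rfl
      have hE' := hEd z
      by_contra hzne
      have hzz' : 0 < z ⬝ᵥ z := by
        rcases eq_or_lt_of_le (dps_nonneg z) with h | h
        · exact absurd (dotProduct_self_eq_zero.mp h.symm) hzne
        · exact h
      nlinarith
    apply hv
    rw [hvdec, hx0, hy0, hz0]
    funext i; rcases i with (i | i) | i <;> rfl
  · -- main case y ≠ 0
    set P : Matrix (Fin n) (Fin n) ℝ := A - lam • 1 with hPdef
    have hPmv : ∀ w, P.mulVec w = A.mulVec w - lam • w := by
      intro w
      rw [hPdef, sub_mulVec, smul_mulVec, one_mulVec]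
    have hPsymm : Pᵀ = P := by
      rw [hPdef, transpose_sub, hAsymm, transpose_smul, transpose_one]
    have hPpsd : P.PosSemidef := by
      refine PosSemidef.of_dotProduct_mulVec_nonneg ?_ ?_
      · show Pᴴ = P
        rw [conjTranspose_eq_transpose_of_trivial]
        exact hPsymm
      · intro w
        simp only [star_trivial]
        rw [hPmv, dotProduct_sub, dotProduct_smul]
        simp only [smul_eq_mul]
        nlinarith [(hAbnd w).1, dps_nonneg w, hlam, hμA0]
    have hPub : ∀ w, w ⬝ᵥ P.mulVec w ≤ (μAmax - lam) * (w ⬝ᵥ w) := by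
      intro w
      rw [hPmv, dotProduct_sub, dotProduct_smul]
      simp only [smul_eq_mul]
      nlinarith [(hAbnd w).2]
    have hcμ : 0 < μAmax - lam := by linarith [lt_of_lt_of_le hμA0 hμA]
    have hPx : P.mulVec x = -(Bᵀ.mulVec y) := by
      funext i
      have h1 := congrFun heq1 i
      simp only [Pi.add_apply, Pi.smul_apply, smul_eq_mul] at h1
      rw [hPmv]
      simp only [Pi.sub_apply, Pi.neg_apply, Pi.smul_apply, smul_eq_mul]
      linarith
    have hBB : Bᵀ.mulVec y ⬝ᵥ Bᵀ.mulVec y = P.mulVec x ⬝ᵥ P.mulVec x := by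
      rw [hPx]; simp
    have hkey : Bᵀ.mulVec y ⬝ᵥ Bᵀ.mulVec y ≤ (μAmax - lam) * (x ⬝ᵥ P.mulVec x) := by
      rw [hBB]
      exact psd_sq_bound P hPpsd hPsymm (μAmax - lam) (le_of_lt hcμ) hPub x
    have hxPx : x ⬝ᵥ P.mulVec x = -(y ⬝ᵥ B.mulVec x) := by
      rw [hPx, hdotT, dotProduct_neg]
    have hzCy : z ⬝ᵥ C.mulVec y = lam * (z ⬝ᵥ z) - z ⬝ᵥ E.mulVec z := by
      have h3 := congrArg (fun w => z ⬝ᵥ w) heq3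
      simp only [dotProduct_add, dotProduct_smul, smul_eq_mul] at h3
      linarith
    have hzCy0 : z ⬝ᵥ C.mulVec y ≤ 0 := by
      rw [hzCy]
      nlinarith [hEd z, dps_nonneg z, hlam]
    have hyBx : lam * (y ⬝ᵥ y) ≤ y ⬝ᵥ B.mulVec x := by
      have h2 := congrArg (fun w => y ⬝ᵥ w) heq2
      simp only [dotProduct_add, dotProduct_sub, dotProduct_smul, smul_eq_mul] at h2
      have hCz : y ⬝ᵥ Cᵀ.mulVec z = z ⬝ᵥ C.mulVec y := (hdotC z y).symm
      rw [hCz] at h2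
      linarith [hDd y]
    have hyy : 0 < y ⬝ᵥ y := by
      rcases eq_or_lt_of_le (dps_nonneg y) with h | h
      · exact absurd (dotProduct_self_eq_zero.mp h.symm) hy0
      · exact h
    have hxPxle : x ⬝ᵥ P.mulVec x ≤ -lam * (y ⬝ᵥ y) := by
      rw [hxPx]; linarith
    have hchain : σBmin ^ 2 * (y ⬝ᵥ y) ≤ (μAmax - lam) * (-lam * (y ⬝ᵥ y)) :=
      calc σBmin ^ 2 * (y ⬝ᵥ y) ≤ Bᵀ.mulVec y ⬝ᵥ Bᵀ.mulVec y := hBmin y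
        _ ≤ (μAmax - lam) * (x ⬝ᵥ P.mulVec x) := hkey
        _ ≤ (μAmax - lam) * (-lam * (y ⬝ᵥ y)) :=
            mul_le_mul_of_nonneg_left hxPxle (le_of_lt hcμ)
    have hquad : σBmin ^ 2 ≤ (μAmax - lam) * (-lam) := by nlinarith [hchain, hyy]
    have hsq : μAmax ^ 2 + 4 * σBmin ^ 2 ≤ (μAmax - 2 * lam) ^ 2 := by nlinarith
    have hsqrt : Real.sqrt (μAmax ^ 2 + 4 * σBmin ^ 2) ≤ μAmax - 2 * lam := by
      have h1 : Real.sqrt (μAmax ^ 2 + 4 * σBmin ^ 2)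
          ≤ Real.sqrt ((μAmax - 2 * lam) ^ 2) := Real.sqrt_le_sqrt hsq
      rwa [Real.sqrt_sq (by linarith [lt_of_lt_of_le hμA0 hμA])] at h1
    linarith
end

section
/- Eigenvalue localization for the preconditioned matrix when D = 0: let g(λ) = λ³ − λ² − 2λ + 1 and let ζ⁻ < 0 < ζ₁ < ζ₂ be real numbers with g(ζ⁻) = g(ζ₁) = g(ζ₂) = 0 (the three real roots of g). Assume D = 0. Then every eigenvalue λ of M⁻¹K lies in [ζ⁻, (1 − √5)/2] ∪ [ζ₁, 1] ∪ [(1 + √5)/2, ζ₂]. -/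
open Matrix

private lemma cubic_fac_s11 {a b c : ℝ} (h₁ : a < 0) (h₂ : 0 < b) (h₃ : b < c)
    (ha : a ^ 3 - a ^ 2 - 2 * a + 1 = 0) (hb : b ^ 3 - b ^ 2 - 2 * b + 1 = 0)
    (hc : c ^ 3 - c ^ 2 - 2 * c + 1 = 0) :
    ∀ x : ℝ, x ^ 3 - x ^ 2 - 2 * x + 1 = (x - a) * (x - b) * (x - c) := by
  have hab : a - b ≠ 0 := sub_ne_zero.2 (ne_of_lt (h₁.trans h₂))
  have hac : a - c ≠ 0 := sub_ne_zero.2 (ne_of_lt (h₁.trans (h₂.trans h₃)))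
  have hbc : b - c ≠ 0 := sub_ne_zero.2 (ne_of_lt h₃)
  have E01 : a ^ 2 + a * b + b ^ 2 - a - b - 2 = 0 := by
    have h : (a - b) * (a ^ 2 + a * b + b ^ 2 - a - b - 2) = 0 := by linear_combination ha - hb
    rcases mul_eq_zero.1 h with h | h
    · exact absurd h hab
    · exact h
  have E02 : a ^ 2 + a * c + c ^ 2 - a - c - 2 = 0 := by
    have h : (a - c) * (a ^ 2 + a * c + c ^ 2 - a - c - 2) = 0 := by linear_combination ha - hc
    rcases mul_eq_zero.1 h with h | h
    · exact absurd h hac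
    · exact h
  have e1 : a + b + c = 1 := by
    have h : (b - c) * (a + b + c - 1) = 0 := by linear_combination E01 - E02
    rcases mul_eq_zero.1 h with h | h
    · exact absurd h hbc
    · linarith [sub_eq_zero.1 h]
  have e2 : a * b + a * c + b * c = -2 := by linear_combination (a + b) * e1 - E01
  have eab : a * b = c ^ 2 - c - 2 := by linear_combination (a + b - c) * e1 - E01
  have e3 : a * b * c = -1 := by linear_combination c * eab + hc
  intro x
  linear_combination x ^ 2 * e1 - x * e2 + e3

set_option maxHeartbeats 1000000 in
private lemma key (ζneg ζ₁ ζ₂ : ℝ) (h₁ : ζneg < 0) (h₂ : 0 < ζ₁) (h₃ : ζ₁ < ζ₂)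
    (hgneg : ζneg ^ 3 - ζneg ^ 2 - 2 * ζneg + 1 = 0)
    (hg₁ : ζ₁ ^ 3 - ζ₁ ^ 2 - 2 * ζ₁ + 1 = 0)
    (hg₂ : ζ₂ ^ 3 - ζ₂ ^ 2 - 2 * ζ₂ + 1 = 0)
    (lam a s : ℝ) (hs : 0 < s) (ha : 0 ≤ a) (has : a ≤ s)
    (heq : lam * (2 - lam) * a = (lam - 1) * (lam ^ 2 - lam - 1) * s) :
    (ζneg ≤ lam ∧ lam ≤ (1 - Real.sqrt 5) / 2) ∨
      (ζ₁ ≤ lam ∧ lam ≤ 1) ∨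
      ((1 + Real.sqrt 5) / 2 ≤ lam ∧ lam ≤ ζ₂) := by
  have hfac := cubic_fac_s11 h₁ h₂ h₃ hgneg hg₁ hg₂
  have h5 : Real.sqrt 5 ^ 2 = 5 := Real.sq_sqrt (by norm_num)
  have h5l : 2 < Real.sqrt 5 := by nlinarith [Real.sqrt_nonneg 5]
  have h5u : Real.sqrt 5 < 3 := by nlinarith [Real.sqrt_nonneg 5]
  rcases le_or_gt lam ((1 - Real.sqrt 5) / 2) with hψ | hψ
  · left
    refine ⟨?_, hψ⟩
    by_contra hcon
    push_neg at hcon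
    -- lam < ζneg : here r < 0, g < 0 so q < r
    have hlt0 : lam < 0 := lt_trans hcon h₁
    have hprod : (lam - ζneg) * (lam - ζ₁) * (lam - ζ₂) < 0 :=
      mul_neg_of_pos_of_neg
        (mul_pos_of_neg_of_neg (by linarith) (by linarith)) (by linarith)
    have hg : lam ^ 3 - lam ^ 2 - 2 * lam + 1 < 0 := by rw [hfac lam]; exact hprod
    have hqr : (lam - 1) * (lam ^ 2 - lam - 1) < lam * (2 - lam) := by nlinarith [hg]
    have hr : lam * (2 - lam) < 0 := mul_neg_of_neg_of_pos hlt0 (by linarith)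
    have t1 : (lam - 1) * (lam ^ 2 - lam - 1) * s < lam * (2 - lam) * s :=
      mul_lt_mul_of_pos_right hqr hs
    have t2 : lam * (2 - lam) * s ≤ lam * (2 - lam) * a := by
      have := mul_le_mul_of_nonpos_left has hr.le
      linarith [this]
    linarith [heq]
  · rcases le_or_gt lam 1 with h1 | h1
    · right; left
      refine ⟨?_, h1⟩
      by_contra hcon
      push_neg at hcon
      -- (1-√5)/2 < lam < ζ₁
      rcases lt_trichotomy lam 0 with hneg | h0 | hpos
      · -- q > 0, r < 0
        have hqneg : lam ^ 2 - lam - 1 < 0 := by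
          have hp : (lam - (1 - Real.sqrt 5) / 2) * (lam - (1 + Real.sqrt 5) / 2) < 0 :=
            mul_neg_of_pos_of_neg (by linarith) (by nlinarith)
          nlinarith [hp]
        have hq : 0 < (lam - 1) * (lam ^ 2 - lam - 1) :=
          mul_pos_of_neg_of_neg (by linarith) hqneg
        have hr : lam * (2 - lam) < 0 := mul_neg_of_neg_of_pos hneg (by linarith)
        nlinarith [mul_pos hq hs, mul_nonneg (neg_nonneg.2 hr.le) ha, heq]
      · rw [h0] at heq
        norm_num at heq
        linarith
      · -- 0 < lam < ζ₁ : g > 0, r > 0, q > r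
        have hprod : 0 < (lam - ζneg) * (lam - ζ₁) * (lam - ζ₂) :=
          mul_pos_of_neg_of_neg
            (mul_neg_of_pos_of_neg (by linarith) (by linarith)) (by linarith)
        have hg : 0 < lam ^ 3 - lam ^ 2 - 2 * lam + 1 := by rw [hfac lam]; exact hprod
        have hqr : lam * (2 - lam) < (lam - 1) * (lam ^ 2 - lam - 1) := by nlinarith [hg]
        have hr : 0 < lam * (2 - lam) := mul_pos hpos (by linarith)
        have t1 : lam * (2 - lam) * a ≤ lam * (2 - lam) * s :=
          mul_le_mul_of_nonneg_left has hr.le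
        have t2 : lam * (2 - lam) * s < (lam - 1) * (lam ^ 2 - lam - 1) * s :=
          mul_lt_mul_of_pos_right hqr hs
        linarith [heq]
    · rcases le_or_gt ((1 + Real.sqrt 5) / 2) lam with hφ | hφ
      · right; right
        refine ⟨hφ, ?_⟩
        by_contra hcon
        push_neg at hcon
        -- ζ₂ < lam
        rcases lt_or_ge lam 2 with h2 | h2
        · -- g > 0, r > 0, q > r
          have hprod : 0 < (lam - ζneg) * (lam - ζ₁) * (lam - ζ₂) :=
            mul_pos (mul_pos (by linarith) (by linarith)) (by linarith)
          have hg : 0 < lam ^ 3 - lam ^ 2 - 2 * lam + 1 := by rw [hfac lam]; exact hprod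
          have hqr : lam * (2 - lam) < (lam - 1) * (lam ^ 2 - lam - 1) := by nlinarith [hg]
          have hr : 0 < lam * (2 - lam) := mul_pos (by linarith) (by linarith)
          have t1 : lam * (2 - lam) * a ≤ lam * (2 - lam) * s :=
            mul_le_mul_of_nonneg_left has hr.le
          have t2 : lam * (2 - lam) * s < (lam - 1) * (lam ^ 2 - lam - 1) * s :=
            mul_lt_mul_of_pos_right hqr hs
          linarith [heq]
        · -- lam ≥ 2 : r ≤ 0, q > 0
          have hq : 0 < (lam - 1) * (lam ^ 2 - lam - 1) :=
            mul_pos (by linarith) (by nlinarith)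
          have hr : lam * (2 - lam) ≤ 0 := by
            nlinarith [mul_nonneg (by linarith : (0:ℝ) ≤ lam) (by linarith : (0:ℝ) ≤ lam - 2)]
          nlinarith [mul_pos hq hs, mul_nonneg (neg_nonneg.2 hr) ha, heq]
      · -- 1 < lam < (1+√5)/2 : q < 0, r > 0 : contradiction
        exfalso
        have hqneg : lam ^ 2 - lam - 1 < 0 := by
          have hp : (lam - (1 - Real.sqrt 5) / 2) * (lam - (1 + Real.sqrt 5) / 2) < 0 :=
            mul_neg_of_pos_of_neg (by linarith) (by linarith)
          nlinarith [hp]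
        have hq : (lam - 1) * (lam ^ 2 - lam - 1) < 0 :=
          mul_neg_of_pos_of_neg (by linarith) hqneg
        have hr : 0 < lam * (2 - lam) := mul_pos (by linarith) (by linarith)
        nlinarith [mul_neg_of_neg_of_pos hq hs, mul_nonneg hr.le ha, heq]

set_option maxHeartbeats 1000000 in
private lemma bounds (ζneg ζ₁ ζ₂ : ℝ) (h₁ : ζneg < 0) (h₂ : 0 < ζ₁) (h₃ : ζ₁ < ζ₂)
    (hgneg : ζneg ^ 3 - ζneg ^ 2 - 2 * ζneg + 1 = 0)
    (hg₁ : ζ₁ ^ 3 - ζ₁ ^ 2 - 2 * ζ₁ + 1 = 0)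
    (hg₂ : ζ₂ ^ 3 - ζ₂ ^ 2 - 2 * ζ₂ + 1 = 0) :
    ζ₁ ≤ 1 ∧ ζneg ≤ (1 - Real.sqrt 5) / 2 ∧ (1 + Real.sqrt 5) / 2 ≤ ζ₂ := by
  have hfac := cubic_fac_s11 h₁ h₂ h₃ hgneg hg₁ hg₂
  have h5 : Real.sqrt 5 ^ 2 = 5 := Real.sq_sqrt (by norm_num)
  have h5l : 2 < Real.sqrt 5 := by nlinarith [Real.sqrt_nonneg 5]
  have h5u : Real.sqrt 5 < 3 := by nlinarith [Real.sqrt_nonneg 5]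
  have hψval : ((1 - Real.sqrt 5) / 2) ^ 3 - ((1 - Real.sqrt 5) / 2) ^ 2 -
      2 * ((1 - Real.sqrt 5) / 2) + 1 = 1 - (1 - Real.sqrt 5) / 2 := by
    linear_combination (-(Real.sqrt 5 - 1) / 8) * h5
  have hφval : ((1 + Real.sqrt 5) / 2) ^ 3 - ((1 + Real.sqrt 5) / 2) ^ 2 -
      2 * ((1 + Real.sqrt 5) / 2) + 1 = 1 - (1 + Real.sqrt 5) / 2 := by
    linear_combination ((Real.sqrt 5 + 1) / 8) * h5
  refine ⟨?_, ?_, ?_⟩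
  · by_contra hcon
    push_neg at hcon
    have h := hfac 1
    nlinarith [mul_pos_of_neg_of_neg (show 1 - ζ₁ < 0 by linarith)
      (show 1 - ζ₂ < 0 by linarith), h, show (0:ℝ) < 1 - ζneg by linarith]
  · by_contra hcon
    push_neg at hcon
    have h := hfac ((1 - Real.sqrt 5) / 2)
    rw [hψval] at h
    set ψ := (1 - Real.sqrt 5) / 2 with hψdef
    have hψneg : ψ < 0 := by rw [hψdef]; linarith
    nlinarith [mul_pos_of_neg_of_neg (show ψ - ζneg < 0 by linarith)
      (show ψ - ζ₁ < 0 by linarith), show ψ - ζ₂ < 0 by linarith, h]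
  · by_contra hcon
    push_neg at hcon
    have h := hfac ((1 + Real.sqrt 5) / 2)
    rw [hφval] at h
    set φ := (1 + Real.sqrt 5) / 2 with hφdef
    have hφ1 : 1 < φ := by rw [hφdef]; linarith
    nlinarith [mul_pos (mul_pos (show 0 < φ - ζneg by linarith)
      (show 0 < φ - ζ₁ by linarith)) (show 0 < φ - ζ₂ by linarith), h]

set_option maxHeartbeats 1000000 in
/-- Eigenvalue localization for the preconditioned matrix `M⁻¹K` when `D = 0`. -/
theorem stmt_11 (n m p : ℕ) (hp : 0 < p) (hmp : p ≤ m) (hnm : m ≤ n)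
    (A : Matrix (Fin n) (Fin n) ℝ) (B : Matrix (Fin m) (Fin n) ℝ)
    (C : Matrix (Fin p) (Fin m) ℝ) (D : Matrix (Fin m) (Fin m) ℝ)
    (E : Matrix (Fin p) (Fin p) ℝ)
    (hA : A.PosDef) (hD : D.PosSemidef) (hE : E.PosSemidef)
    (hB : B.rank = m)
    (hD0 : D = 0)
    (K : Matrix ((Fin n ⊕ Fin m) ⊕ Fin p) ((Fin n ⊕ Fin m) ⊕ Fin p) ℝ)
    (hK : K = fromBlocks (fromBlocks A Bᵀ B (-D)) (fromRows 0 Cᵀ) (fromCols 0 C) E)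
    (S₁ : Matrix (Fin m) (Fin m) ℝ) (hS₁ : S₁ = D + B * A⁻¹ * Bᵀ)
    (S₂ : Matrix (Fin p) (Fin p) ℝ) (hS₂ : S₂ = E + C * S₁⁻¹ * Cᵀ)
    (hS₁pd : S₁.PosDef) (hS₂pd : S₂.PosDef)
    (M : Matrix ((Fin n ⊕ Fin m) ⊕ Fin p) ((Fin n ⊕ Fin m) ⊕ Fin p) ℝ)
    (hM : M = fromBlocks (fromBlocks A 0 0 S₁) 0 0 S₂)
    -- the three real roots of g(λ) = λ³ − λ² − 2λ + 1
    (ζneg ζ₁ ζ₂ : ℝ) (h₁ : ζneg < 0) (h₂ : 0 < ζ₁) (h₃ : ζ₁ < ζ₂)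
    (hgneg : ζneg ^ 3 - ζneg ^ 2 - 2 * ζneg + 1 = 0)
    (hg₁ : ζ₁ ^ 3 - ζ₁ ^ 2 - 2 * ζ₁ + 1 = 0)
    (hg₂ : ζ₂ ^ 3 - ζ₂ ^ 2 - 2 * ζ₂ + 1 = 0) :
    ∀ (lam : ℝ) (v : (Fin n ⊕ Fin m) ⊕ Fin p → ℝ), v ≠ 0 →
      K.mulVec v = lam • M.mulVec v →
      (ζneg ≤ lam ∧ lam ≤ (1 - Real.sqrt 5) / 2) ∨
      (ζ₁ ≤ lam ∧ lam ≤ 1) ∨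
      ((1 + Real.sqrt 5) / 2 ≤ lam ∧ lam ≤ ζ₂) := by
  intro lam v hv0 hKv
  obtain ⟨hb1, hb2, hb3⟩ := bounds ζneg ζ₁ ζ₂ h₁ h₂ h₃ hgneg hg₁ hg₂
  subst hD0
  have hS₁' : S₁ = B * A⁻¹ * Bᵀ := by rw [hS₁, zero_add]
  obtain ⟨x, y, z, hv'⟩ : ∃ x y z, v = Sum.elim (Sum.elim x y) z :=
    ⟨_, _, _, by funext i; rcases i with (i | i) | i <;> rfl⟩
  subst hv'
  rw [hK, hM] at hKv
  -- extract the three block equations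
  have E1 : A *ᵥ x + Bᵀ *ᵥ y = lam • (A *ᵥ x) := by
    funext i
    have hc := congrFun hKv (Sum.inl (Sum.inl i))
    simp only [fromBlocks_mulVec, fromRows_mulVec, fromCols_mulVec_sumElim,
      Sum.elim_comp_inl, Sum.elim_comp_inr, Sum.elim_inl, Sum.elim_inr,
      Pi.add_apply, Pi.smul_apply, smul_eq_mul, zero_mulVec, mulVec_zero,
      add_zero, zero_add, neg_zero, Pi.zero_apply] at hc
    simp only [Pi.add_apply, Pi.smul_apply, smul_eq_mul]
    linarith [hc]
  have E2 : B *ᵥ x + Cᵀ *ᵥ z = lam • (S₁ *ᵥ y) := by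
    funext i
    have hc := congrFun hKv (Sum.inl (Sum.inr i))
    simp only [fromBlocks_mulVec, fromRows_mulVec, fromCols_mulVec_sumElim,
      Sum.elim_comp_inl, Sum.elim_comp_inr, Sum.elim_inl, Sum.elim_inr,
      Pi.add_apply, Pi.smul_apply, smul_eq_mul, zero_mulVec, mulVec_zero,
      add_zero, zero_add, neg_zero, Pi.zero_apply] at hc
    simp only [Pi.add_apply, Pi.smul_apply, smul_eq_mul]
    linarith [hc]
  have E3 : C *ᵥ y + E *ᵥ z = lam • (S₂ *ᵥ z) := by
    funext i
    have hc := congrFun hKv (Sum.inr i)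
    simp only [fromBlocks_mulVec, fromRows_mulVec, fromCols_mulVec_sumElim,
      Sum.elim_comp_inl, Sum.elim_comp_inr, Sum.elim_inl, Sum.elim_inr,
      Pi.add_apply, Pi.smul_apply, smul_eq_mul, zero_mulVec, mulVec_zero,
      add_zero, zero_add, neg_zero, Pi.zero_apply] at hc
    simp only [Pi.add_apply, Pi.smul_apply, smul_eq_mul]
    linarith [hc]
  have hAdet : IsUnit A.det := isUnit_iff_ne_zero.2 hA.det_pos.ne'
  have hS₁det : IsUnit S₁.det := isUnit_iff_ne_zero.2 hS₁pd.det_pos.ne'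
  have hAinv : A⁻¹ * A = 1 := nonsing_inv_mul A hAdet
  have E1' : Bᵀ *ᵥ y = (lam - 1) • (A *ᵥ x) := by
    funext i
    have hc := congrFun E1 i
    simp only [Pi.add_apply, Pi.smul_apply, smul_eq_mul] at hc ⊢
    linear_combination hc
  have hS1y : S₁ *ᵥ y = (lam - 1) • (B *ᵥ x) := by
    calc S₁ *ᵥ y = B *ᵥ (A⁻¹ *ᵥ (Bᵀ *ᵥ y)) := by
          rw [hS₁', ← mulVec_mulVec, ← mulVec_mulVec]
      _ = B *ᵥ (A⁻¹ *ᵥ ((lam - 1) • (A *ᵥ x))) := by rw [E1']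
      _ = (lam - 1) • (B *ᵥ x) := by
          rw [mulVec_smul, mulVec_mulVec, hAinv, one_mulVec, mulVec_smul]
  have hstar : (lam ^ 2 - lam - 1) • (S₁ *ᵥ y) = (lam - 1) • (Cᵀ *ᵥ z) := by
    funext i
    have c1 := congrFun hS1y i
    have c2 := congrFun E2 i
    simp only [Pi.add_apply, Pi.smul_apply, smul_eq_mul] at c1 c2 ⊢
    linear_combination -c1 - (lam - 1) * c2
  by_cases hl1 : lam = 1
  · subst hl1
    exact Or.inr (Or.inl ⟨hb1, le_refl 1⟩)
  by_cases hq0 : lam ^ 2 - lam - 1 = 0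
  · have h5 : Real.sqrt 5 ^ 2 = 5 := Real.sq_sqrt (by norm_num)
    have hsplit : (lam - (1 - Real.sqrt 5) / 2) * (lam - (1 + Real.sqrt 5) / 2) = 0 := by
      linear_combination hq0 - (1 / 4) * h5
    rcases mul_eq_zero.1 hsplit with h | h
    · have h := sub_eq_zero.1 h
      exact Or.inl ⟨h ▸ hb2, le_of_eq h⟩
    · have h := sub_eq_zero.1 h
      exact Or.inr (Or.inr ⟨ge_of_eq h, h ▸ hb3⟩)
  by_cases hz : z = 0
  · exfalso
    have hy : y = 0 := by
      rw [hz, mulVec_zero, smul_zero] at hstar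
      rcases smul_eq_zero.1 hstar with h | h
      · exact absurd h hq0
      · exact mulVec_injective_iff_isUnit.2 hS₁pd.isUnit (by rw [h, mulVec_zero])
    have hx : x = 0 := by
      rw [hy, mulVec_zero] at E1'
      rcases smul_eq_zero.1 E1'.symm with h | h
      · exact absurd (by linarith [sub_eq_zero.1 (by linarith [h] : lam - 1 = 0)] : lam = 1) hl1
      · exact mulVec_injective_iff_isUnit.2 hA.isUnit (by rw [h, mulVec_zero])
    apply hv0
    funext i
    rcases i with (i | i) | i <;> simp [hx, hy, hz]
  · -- main case: z ≠ 0
    have hCS : C * S₁⁻¹ * S₁ = C := by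
      rw [Matrix.mul_assoc, nonsing_inv_mul S₁ hS₁det, Matrix.mul_one]
    have hCy : (lam ^ 2 - lam - 1) • (C *ᵥ y) = (lam - 1) • ((C * S₁⁻¹ * Cᵀ) *ᵥ z) := by
      have h := congrArg (fun w => (C * S₁⁻¹) *ᵥ w) hstar
      simpa only [mulVec_smul, mulVec_mulVec, hCS] using h
    have hW : (C * S₁⁻¹ * Cᵀ).PosSemidef := by
      have h := (hS₁pd.inv).posSemidef.mul_mul_conjTranspose_same C
      simpa using h
    set aa := z ⬝ᵥ ((C * S₁⁻¹ * Cᵀ) *ᵥ z) with haa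
    set ss := z ⬝ᵥ (S₂ *ᵥ z) with hss
    set ee := z ⬝ᵥ (E *ᵥ z) with hee
    have hann : 0 ≤ aa := by
      have h := hW.dotProduct_mulVec_nonneg z
      simpa using h
    have henn : 0 ≤ ee := by
      have h := hE.dotProduct_mulVec_nonneg z
      simpa using h
    have hspos : 0 < ss := by
      have h := hS₂pd.dotProduct_mulVec_pos hz
      simpa using h
    have h7 : ss = ee + aa := by
      rw [hss, hee, haa, hS₂, add_mulVec, dotProduct_add]
    have h5eq : (lam ^ 2 - lam - 1) * (z ⬝ᵥ (C *ᵥ y)) = (lam - 1) * aa := by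
      have h := congrArg (fun w => z ⬝ᵥ w) hCy
      simpa only [dotProduct_smul, smul_eq_mul] using h
    have h6eq : z ⬝ᵥ (C *ᵥ y) + ee = lam * ss := by
      have h := congrArg (fun w => z ⬝ᵥ w) E3
      simpa only [dotProduct_add, dotProduct_smul, smul_eq_mul] using h
    have heq : lam * (2 - lam) * aa = (lam - 1) * (lam ^ 2 - lam - 1) * ss := by
      linear_combination -h5eq + (lam ^ 2 - lam - 1) * h6eq + (lam ^ 2 - lam - 1) * h7
    exact key ζneg ζ₁ ζ₂ h₁ h₂ h₃ hgneg hg₁ hg₂ lam aa ss hspos hann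
      (by linarith) heq
end

section
/- Correspondence between Schur-complement eigenvalues and preconditioned eigenvalues when D = 0: assume D = 0. Suppose δ ∈ (0, 1] and z ∈ ℝᵖ is nonzero with C S₁⁻¹ Cᵀ z = δ · (S₂ z). Then every real root λ of the cubic λ³ − (2 − δ)λ² − 2δλ + 1 = 0 is an eigenvalue of M⁻¹K; that is, there exists a nonzero v ∈ ℝ^{n+m+p} with K v = λ (M v). -/
open Matrix

/-- Correspondence between Schur-complement eigenvalues and preconditioned
eigenvalues when `D = 0`. -/
theorem stmt_12 (n m p : ℕ) (hp : 0 < p) (hmp : p ≤ m) (hnm : m ≤ n)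
    (A : Matrix (Fin n) (Fin n) ℝ) (B : Matrix (Fin m) (Fin n) ℝ)
    (C : Matrix (Fin p) (Fin m) ℝ) (D : Matrix (Fin m) (Fin m) ℝ)
    (E : Matrix (Fin p) (Fin p) ℝ)
    (hA : A.PosDef) (hD : D.PosSemidef) (hE : E.PosSemidef)
    (hB : B.rank = m)
    (hD0 : D = 0)
    (K : Matrix ((Fin n ⊕ Fin m) ⊕ Fin p) ((Fin n ⊕ Fin m) ⊕ Fin p) ℝ)
    (hK : K = fromBlocks (fromBlocks A Bᵀ B (-D)) (fromRows 0 Cᵀ) (fromCols 0 C) E)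
    (S₁ : Matrix (Fin m) (Fin m) ℝ) (hS₁ : S₁ = D + B * A⁻¹ * Bᵀ)
    (S₂ : Matrix (Fin p) (Fin p) ℝ) (hS₂ : S₂ = E + C * S₁⁻¹ * Cᵀ)
    (hS₁pd : S₁.PosDef) (hS₂pd : S₂.PosDef)
    (M : Matrix ((Fin n ⊕ Fin m) ⊕ Fin p) ((Fin n ⊕ Fin m) ⊕ Fin p) ℝ)
    (hM : M = fromBlocks (fromBlocks A 0 0 S₁) 0 0 S₂)
    (δ : ℝ) (hδ0 : 0 < δ) (hδ1 : δ ≤ 1)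
    (z : Fin p → ℝ) (hz : z ≠ 0)
    (hzeig : (C * S₁⁻¹ * Cᵀ).mulVec z = δ • S₂.mulVec z) :
    ∀ lam : ℝ, lam ^ 3 - (2 - δ) * lam ^ 2 - 2 * δ * lam + 1 = 0 →
      ∃ v : (Fin n ⊕ Fin m) ⊕ Fin p → ℝ, v ≠ 0 ∧ K.mulVec v = lam • M.mulVec v := by
  intro lam hcubic
  set t : ℝ := lam ^ 2 - lam - 1 with ht_def
  -- t ≠ 0
  have ht : t ≠ 0 := by
    intro h
    have h1 : δ * (1 - lam) = 0 := by
      have h' : lam ^ 2 - lam - 1 = 0 := h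
      linear_combination hcubic - (lam + δ - 1) * h'
    have hlam : lam = 1 := by
      rcases mul_eq_zero.1 h1 with h2 | h2
      · exact absurd h2 (ne_of_gt hδ0)
      · linarith
    have h' : lam ^ 2 - lam - 1 = 0 := by rw [← ht_def]; exact h
    rw [hlam] at h'
    norm_num at h'
  -- building blocks
  have hAdet : IsUnit A.det := isUnit_iff_ne_zero.2 (ne_of_gt hA.det_pos)
  have hS₁det : IsUnit S₁.det := isUnit_iff_ne_zero.2 (ne_of_gt hS₁pd.det_pos)
  set w : Fin m → ℝ := S₁⁻¹.mulVec (Cᵀ.mulVec z) with hw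
  set u : Fin n → ℝ := Bᵀ.mulVec w with hu
  set x : Fin n → ℝ := A⁻¹.mulVec u with hx
  set y : Fin m → ℝ := (lam - 1) • w with hy
  set zp : Fin p → ℝ := t • z with hzp
  have hS₁w : S₁.mulVec w = Cᵀ.mulVec z := by
    rw [hw, mulVec_mulVec, Matrix.mul_nonsing_inv _ hS₁det, one_mulVec]
  have hAx : A.mulVec x = u := by
    rw [hx, mulVec_mulVec, Matrix.mul_nonsing_inv _ hAdet, one_mulVec]
  have hBx : B.mulVec x = Cᵀ.mulVec z := by
    rw [hx, hu, mulVec_mulVec, mulVec_mulVec]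
    have : B * A⁻¹ * Bᵀ = S₁ := by rw [hS₁, hD0, zero_add]
    rw [this, hS₁w]
  -- the three block equations
  have e1 : A.mulVec x + Bᵀ.mulVec y = lam • A.mulVec x := by
    rw [hAx, hy, mulVec_smul, ← hu]
    module
  have e2 : B.mulVec x + Cᵀ.mulVec zp = lam • S₁.mulVec y := by
    rw [hBx, hy, hzp, mulVec_smul, mulVec_smul, hS₁w, smul_smul]
    have hs : (1 : ℝ) + t = lam * (lam - 1) := by rw [ht_def]; ring
    calc Cᵀ.mulVec z + t • Cᵀ.mulVec z = ((1:ℝ) + t) • Cᵀ.mulVec z := by module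
      _ = (lam * (lam - 1)) • Cᵀ.mulVec z := by rw [hs]
  have hE : E = S₂ - C * S₁⁻¹ * Cᵀ := by rw [hS₂, add_sub_cancel_right]
  have e3 : C.mulVec y + E.mulVec zp = lam • S₂.mulVec zp := by
    rw [hy, hzp, mulVec_smul, mulVec_smul, mulVec_smul, hE, sub_mulVec, hw,
      mulVec_mulVec, mulVec_mulVec]
    rw [hzeig]
    have hs : (lam - 1) * δ + t * (1 - δ) = lam * t := by
      rw [ht_def]; linear_combination -hcubic
    calc (lam - 1) • δ • S₂.mulVec z + t • (S₂.mulVec z - δ • S₂.mulVec z)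
        = ((lam - 1) * δ + t * (1 - δ)) • S₂.mulVec z := by module
      _ = (lam * t) • S₂.mulVec z := by rw [hs]
      _ = lam • t • S₂.mulVec z := by rw [smul_smul]
  refine ⟨Sum.elim (Sum.elim x y) zp, ?_, ?_⟩
  · intro h0
    obtain ⟨i, hi⟩ := Function.ne_iff.1 hz
    have : zp i = 0 := congrFun h0 (Sum.inr i)
    rw [hzp] at this
    exact hi (by simpa [ht] using this)
  · rw [hK, hM]
    rw [fromBlocks_mulVec, fromBlocks_mulVec]
    have hcl : (Sum.elim (Sum.elim x y) zp ∘ Sum.inl) = Sum.elim x y := rfl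
    have hcr : (Sum.elim (Sum.elim x y) zp ∘ Sum.inr) = zp := rfl
    rw [hcl, hcr, fromBlocks_mulVec, fromBlocks_mulVec]
    funext i
    rcases i with (i | i) | i <;>
      simp only [Sum.elim_inl, Sum.elim_inr, Pi.smul_apply, Pi.add_apply,
        fromRows_mulVec, fromCols_mulVec_sumElim, Matrix.zero_mulVec,
        Matrix.mulVec_zero, hD0, neg_zero, Pi.zero_apply, add_zero, zero_add,
        smul_add]
    · have := congrFun e1 i
      simpa using this
    · have := congrFun e2 i
      simpa using this
    · have := congrFun e3 i
      simpa using this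
end

section
/- Negative eigenvalue bounds for the Schur-complement preconditioned matrix: every negative eigenvalue λ of M⁻¹K satisfies −(1 + √5)/2 ≤ λ ≤ (1 − √5)/2. -/
open Matrix

set_option maxHeartbeats 1600000

lemma dot_swap {α β : Type*} [Fintype α] [Fintype β] (P : Matrix α β ℝ) (u : α → ℝ) (w : β → ℝ) :
    u ⬝ᵥ (P *ᵥ w) = w ⬝ᵥ (Pᵀ *ᵥ u) := by
  rw [dotProduct_mulVec, mulVec_transpose, dotProduct_comm]

lemma pd_dot {α : Type*} [Fintype α] {S : Matrix α α ℝ} (hS : S.PosDef) {x : α → ℝ} (hx : x ≠ 0) :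
    0 < x ⬝ᵥ (S *ᵥ x) := by simpa using hS.re_dotProduct_pos hx

lemma psd_dot {α : Type*} [Fintype α] {S : Matrix α α ℝ} (hS : S.PosSemidef) (x : α → ℝ) :
    0 ≤ x ⬝ᵥ (S *ᵥ x) := by simpa using hS.re_dotProduct_nonneg x

lemma cs_aux {k : ℕ} (S : Matrix (Fin k) (Fin k) ℝ) (hS : S.PosDef) (y w : Fin k → ℝ) :
    (y ⬝ᵥ w)^2 ≤ (w ⬝ᵥ (S⁻¹ *ᵥ w)) * (y ⬝ᵥ (S *ᵥ y)) := by
  have hdet : IsUnit S.det := hS.det_pos.ne'.isUnit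
  have hu : S *ᵥ (S⁻¹ *ᵥ w) = w := by
    rw [mulVec_mulVec, mul_nonsing_inv _ hdet, one_mulVec]
  have hSt : Sᵀ = S := by
    rw [← conjTranspose_eq_transpose_of_trivial]; exact hS.isHermitian
  have hsym : (S⁻¹ *ᵥ w) ⬝ᵥ (S *ᵥ y) = y ⬝ᵥ w := by
    rw [dot_swap, mulVec_mulVec, hSt, mul_nonsing_inv _ hdet, one_mulVec]
  have hq : ∀ r : ℝ, 0 ≤ (w ⬝ᵥ (S⁻¹ *ᵥ w)) * (r * r) + (2 * (y ⬝ᵥ w)) * r + (y ⬝ᵥ (S *ᵥ y)) := by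
    intro r
    have h0 := psd_dot hS.posSemidef (y + r • (S⁻¹ *ᵥ w))
    rw [mulVec_add, mulVec_smul, hu, add_dotProduct, dotProduct_add, dotProduct_add,
      smul_dotProduct, smul_dotProduct, dotProduct_smul, dotProduct_smul, hsym,
      dotProduct_comm (S⁻¹ *ᵥ w) w] at h0
    simp only [smul_eq_mul] at h0
    nlinarith [h0]
  have hd := discrim_le_zero hq
  rw [discrim] at hd
  nlinarith [hd]

lemma sqrt_low {lam : ℝ} (hlam : lam < 0) (hf : lam^2 + lam - 1 ≤ 0) :
    -(1 + Real.sqrt 5) / 2 ≤ lam := by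
  have h5 : Real.sqrt 5 * Real.sqrt 5 = 5 := Real.mul_self_sqrt (by norm_num)
  have h5nn : 0 ≤ Real.sqrt 5 := Real.sqrt_nonneg 5
  by_contra h
  push_neg at h
  have h2 : Real.sqrt 5 < -2*lam - 1 := by linarith
  have h3 : 5 < (-2*lam - 1) * (-2*lam - 1) := by nlinarith [h2, h5nn, h5]
  nlinarith [hf, h3]

lemma sqrt_up {lam : ℝ} (hlam : lam < 0) (hg : 0 ≤ lam^2 - lam - 1) :
    lam ≤ (1 - Real.sqrt 5) / 2 := by
  have h5 : Real.sqrt 5 * Real.sqrt 5 = 5 := Real.mul_self_sqrt (by norm_num)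
  have h5nn : 0 ≤ Real.sqrt 5 := Real.sqrt_nonneg 5
  by_contra h
  push_neg at h
  have h2 : 1 - 2*lam < Real.sqrt 5 := by linarith
  have h3 : (1 - 2*lam) * (1 - 2*lam) < 5 := by nlinarith [h2, hlam, h5]
  nlinarith [hg, h3]

/-- Negative eigenvalue bounds for the Schur-complement preconditioned matrix:
every negative eigenvalue of `M⁻¹K` lies in `[−(1+√5)/2, (1−√5)/2]`. -/
theorem stmt_13 (n m p : ℕ) (hn : 0 < n) (hm : 0 < m) (hp : 0 < p)
    (A : Matrix (Fin n) (Fin n) ℝ) (B : Matrix (Fin m) (Fin n) ℝ)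
    (C : Matrix (Fin p) (Fin m) ℝ) (D : Matrix (Fin m) (Fin m) ℝ)
    (E : Matrix (Fin p) (Fin p) ℝ)
    (hA : A.PosDef) (hD : D.PosSemidef) (hE : E.PosSemidef)
    (K : Matrix ((Fin n ⊕ Fin m) ⊕ Fin p) ((Fin n ⊕ Fin m) ⊕ Fin p) ℝ)
    (hK : K = fromBlocks (fromBlocks A Bᵀ B (-D)) (fromRows 0 Cᵀ) (fromCols 0 C) E)
    (S₁ : Matrix (Fin m) (Fin m) ℝ) (hS₁ : S₁ = D + B * A⁻¹ * Bᵀ)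
    (S₂ : Matrix (Fin p) (Fin p) ℝ) (hS₂ : S₂ = E + C * S₁⁻¹ * Cᵀ)
    (hS₁pd : S₁.PosDef) (hS₂pd : S₂.PosDef)
    (M : Matrix ((Fin n ⊕ Fin m) ⊕ Fin p) ((Fin n ⊕ Fin m) ⊕ Fin p) ℝ)
    (hM : M = fromBlocks (fromBlocks A 0 0 S₁) 0 0 S₂) :
    ∀ (lam : ℝ) (v : (Fin n ⊕ Fin m) ⊕ Fin p → ℝ), v ≠ 0 →
      K.mulVec v = lam • M.mulVec v → lam < 0 →
      -(1 + Real.sqrt 5) / 2 ≤ lam ∧ lam ≤ (1 - Real.sqrt 5) / 2 := by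
  intro lam v hv hKv hlam
  subst hK hM
  have hAdet : IsUnit A.det := hA.det_pos.ne'.isUnit
  set x : Fin n → ℝ := fun i => v (Sum.inl (Sum.inl i)) with hxdef
  set y : Fin m → ℝ := fun j => v (Sum.inl (Sum.inr j)) with hydef
  set z : Fin p → ℝ := fun k => v (Sum.inr k) with hzdef
  have hvE : v = Sum.elim (Sum.elim x y) z := by
    funext i; rcases i with (i | j) | k <;> rfl
  rw [hvE] at hKv
  simp only [fromBlocks_mulVec, fromRows_mulVec, fromCols_mulVec_sumElim,
    Sum.elim_comp_inl, Sum.elim_comp_inr, zero_mulVec, neg_mulVec, zero_add, add_zero,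
    Matrix.smul_mulVec] at hKv
  have E1 : A *ᵥ x + Bᵀ *ᵥ y = lam • (A *ᵥ x) := by
    funext i; have h := congrFun hKv (Sum.inl (Sum.inl i)); simpa using h
  have E2 : B *ᵥ x + -(D *ᵥ y) + Cᵀ *ᵥ z = lam • (S₁ *ᵥ y) := by
    funext j; have h := congrFun hKv (Sum.inl (Sum.inr j)); simpa using h
  have E3 : C *ᵥ y + E *ᵥ z = lam • (S₂ *ᵥ z) := by
    funext k; have h := congrFun hKv (Sum.inr k); simpa using h
  -- key vector identity from E1
  have key1 : Bᵀ *ᵥ y = (lam - 1) • (A *ᵥ x) := by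
    funext i
    have h := congrFun E1 i
    simp only [Pi.add_apply, Pi.smul_apply, smul_eq_mul] at h ⊢
    ring_nf
    ring_nf at h
    linarith
  -- scalar quantities
  have ha0 : 0 ≤ x ⬝ᵥ (A *ᵥ x) := psd_dot hA.posSemidef x
  have hd0 : 0 ≤ y ⬝ᵥ (D *ᵥ y) := psd_dot hD y
  have he0 : 0 ≤ z ⬝ᵥ (E *ᵥ z) := psd_dot hE z
  have ht0 : 0 ≤ (Cᵀ *ᵥ z) ⬝ᵥ (S₁⁻¹ *ᵥ (Cᵀ *ᵥ z)) := psd_dot hS₁pd.inv.posSemidef _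
  have hs1nn : 0 ≤ y ⬝ᵥ (S₁ *ᵥ y) := psd_dot hS₁pd.posSemidef y
  have hb : y ⬝ᵥ (B *ᵥ x) = (lam - 1) * (x ⬝ᵥ (A *ᵥ x)) := by
    rw [dot_swap, key1, dotProduct_smul, smul_eq_mul]
  have hs1 : y ⬝ᵥ (S₁ *ᵥ y) = y ⬝ᵥ (D *ᵥ y) + (lam - 1)^2 * (x ⬝ᵥ (A *ᵥ x)) := by
    rw [hS₁, add_mulVec, dotProduct_add]
    congr 1
    rw [← mulVec_mulVec, ← mulVec_mulVec, key1, mulVec_smul, mulVec_mulVec,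
      nonsing_inv_mul _ hAdet, one_mulVec, mulVec_smul, dotProduct_smul, smul_eq_mul, hb]
    ring
  have hc2 : y ⬝ᵥ (B *ᵥ x) + -(y ⬝ᵥ (D *ᵥ y)) + y ⬝ᵥ (Cᵀ *ᵥ z) = lam * (y ⬝ᵥ (S₁ *ᵥ y)) := by
    have h := congrArg (fun u => y ⬝ᵥ u) E2
    simpa only [dotProduct_add, dotProduct_neg, dotProduct_smul, smul_eq_mul] using h
  have hs2e : z ⬝ᵥ (S₂ *ᵥ z) = z ⬝ᵥ (E *ᵥ z) + (Cᵀ *ᵥ z) ⬝ᵥ (S₁⁻¹ *ᵥ (Cᵀ *ᵥ z)) := by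
    rw [hS₂, add_mulVec, dotProduct_add, ← mulVec_mulVec, ← mulVec_mulVec, dot_swap C,
      dotProduct_comm (S₁⁻¹ *ᵥ (Cᵀ *ᵥ z)) (Cᵀ *ᵥ z)]
  have hc3 : y ⬝ᵥ (Cᵀ *ᵥ z) + z ⬝ᵥ (E *ᵥ z) = lam * (z ⬝ᵥ (S₂ *ᵥ z)) := by
    have h := congrArg (fun u => z ⬝ᵥ u) E3
    simp only [dotProduct_add, dotProduct_smul, smul_eq_mul] at h
    rw [dot_swap C z y] at h
    exact h
  have hCS0 := cs_aux S₁ hS₁pd y (Cᵀ *ᵥ z)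
  -- the "all zero implies contradiction"
  have hfalse : x ⬝ᵥ (A *ᵥ x) = 0 → y ⬝ᵥ (S₁ *ᵥ y) = 0 → z ⬝ᵥ (S₂ *ᵥ z) = 0 → False := by
    intro h1 h2 h3
    have hx : x = 0 := by by_contra hx; exact (pd_dot hA hx).ne' h1
    have hy : y = 0 := by by_contra hy; exact (pd_dot hS₁pd hy).ne' h2
    have hz : z = 0 := by by_contra hz; exact (pd_dot hS₂pd hz).ne' h3
    apply hv
    rw [hvE, hx, hy, hz]
    funext i; rcases i with (i | j) | k <;> simp
  -- abstract to scalars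
  set a := x ⬝ᵥ (A *ᵥ x) with hadef
  set d := y ⬝ᵥ (D *ᵥ y) with hddef
  set e := z ⬝ᵥ (E *ᵥ z) with hedef
  set c := y ⬝ᵥ (Cᵀ *ᵥ z) with hcdef
  set t := (Cᵀ *ᵥ z) ⬝ᵥ (S₁⁻¹ *ᵥ (Cᵀ *ᵥ z)) with htdef
  set s1v := y ⬝ᵥ (S₁ *ᵥ y) with hs1vdef
  set s2v := z ⬝ᵥ (S₂ *ᵥ z) with hs2vdef
  have hCS : c^2 ≤ t * s1v := hCS0
  have cI : c = (1 + lam) * d + (lam - 1) * (lam^2 - lam - 1) * a := by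
    linear_combination hc2 - hb + lam * hs1
  have hc3' : c = (lam - 1) * e + lam * t := by
    linear_combination hc3 + lam * hs2e
  -- upper bound : 0 ≤ lam^2 - lam - 1
  have hg : 0 ≤ lam^2 - lam - 1 := by
    by_contra hg'
    push_neg at hg'
    have h1l : 0 < 1 + lam := by nlinarith [sq_nonneg lam]
    have hpos : 0 < (lam - 1) * (lam^2 - lam - 1) :=
      mul_pos_of_neg_of_neg (by linarith) (by linarith)
    have hcnn : 0 ≤ c := by
      rw [cI]; exact add_nonneg (mul_nonneg h1l.le hd0) (mul_nonneg hpos.le ha0)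
    have hcnp : c ≤ 0 := by
      nlinarith [mul_nonneg (neg_nonneg.mpr hlam.le) he0,
        mul_nonneg (neg_nonneg.mpr hlam.le) ht0]
    have hc0 : c = 0 := le_antisymm hcnp hcnn
    have hdz : d = 0 := le_antisymm (by nlinarith [mul_nonneg hpos.le ha0]) hd0
    have haz : a = 0 := le_antisymm (by nlinarith [mul_nonneg h1l.le hd0]) ha0
    have hez : e = 0 := le_antisymm (by nlinarith [mul_nonneg (neg_nonneg.mpr hlam.le) ht0]) he0
    have htz : t = 0 := le_antisymm (by nlinarith [mul_nonneg (neg_nonneg.mpr hlam.le) he0]) ht0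
    exact hfalse haz (by rw [hs1, hdz, haz]; ring) (by rw [hs2e, hez, htz]; ring)
  -- lower bound : lam^2 + lam - 1 ≤ 0
  have hf : lam^2 + lam - 1 ≤ 0 := by
    by_contra hf'
    push_neg at hf'
    have hlam1 : lam < -1 := by
      by_contra h
      push_neg at h
      nlinarith [mul_nonneg (by linarith : (0:ℝ) ≤ lam + 1) (by linarith : (0:ℝ) ≤ -lam)]
    have hg2 : 0 < lam^2 - lam - 1 := by linarith
    have hneg : (lam - 1) * (lam^2 - lam - 1) < 0 := mul_neg_of_neg_of_pos (by linarith) hg2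
    have hcnp : c ≤ 0 := by
      rw [cI]
      nlinarith [mul_nonneg hd0 (by linarith : (0:ℝ) ≤ -(1 + lam)),
        mul_nonneg ha0 (neg_nonneg.mpr hneg.le)]
    rcases lt_or_eq_of_le hcnp with hclt | hceq
    · -- c < 0
      have hts : c ≤ lam * t := by
        nlinarith [mul_nonneg (by linarith : (0:ℝ) ≤ 1 - lam) he0]
      have h1 : c * s1v ≤ lam * t * s1v := mul_le_mul_of_nonneg_right hts hs1nn
      have hkey : lam * c ≤ s1v := by
        nlinarith [h1, mul_nonneg (neg_nonneg.mpr hlam.le) (sub_nonneg.mpr hCS),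
          mul_pos (neg_pos.mpr hclt) (neg_pos.mpr hclt)]
      have hkey2 : lam * ((1 + lam) * d + (lam - 1) * (lam^2 - lam - 1) * a)
          ≤ d + (lam - 1)^2 * a := by
        rw [← cI]
        calc lam * c ≤ s1v := hkey
        _ = d + (lam - 1)^2 * a := hs1
      have hh : 0 < (lam^2 - 3*lam + 3) * (lam^2 + lam - 1) + (2 - 3*lam) := by
        have h31 : 0 < lam^2 - 3*lam + 3 := by nlinarith [sq_nonneg (lam - 1)]
        nlinarith [mul_pos h31 hf']
      have hdz : d = 0 :=
        le_antisymm (by nlinarith [hkey2, mul_nonneg ha0 hh.le, hf']) hd0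
      have haz : a = 0 :=
        le_antisymm (by nlinarith [hkey2, mul_nonneg hd0 hf'.le, hh]) ha0
      rw [hdz, haz] at cI
      simp at cI
      linarith
    · -- c = 0
      have hdz : d = 0 :=
        le_antisymm (by nlinarith [mul_nonneg ha0 (neg_nonneg.mpr hneg.le)]) hd0
      have haz : a = 0 :=
        le_antisymm (by nlinarith [mul_nonneg hd0 (by linarith : (0:ℝ) ≤ -(1 + lam)), hneg]) ha0
      have hez : e = 0 :=
        le_antisymm (by nlinarith [mul_nonneg (neg_nonneg.mpr hlam.le) ht0]) he0
      have htz : t = 0 :=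
        le_antisymm (by nlinarith [mul_nonneg (neg_nonneg.mpr hlam.le) he0]) ht0
      exact hfalse haz (by rw [hs1, hdz, haz]; ring) (by rw [hs2e, hez, htz]; ring)
  exact ⟨sqrt_low hlam hf, sqrt_up hlam hg⟩
end

section
/- Positive eigenvalue bounds for the Schur-complement preconditioned matrix: every positive eigenvalue λ of M⁻¹K satisfies λ³ − λ² − 2λ + 1 ≤ 0; equivalently, λ lies between the smallest and largest positive roots of the cubic λ³ − λ² − 2λ + 1 (approximately 0.4450 and 1.8019). -/
open Matrix

private lemma dot_nonneg' {ι : Type*} [Fintype ι] {P : Matrix ι ι ℝ} (hP : P.PosSemidef)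
    (u : ι → ℝ) : 0 ≤ u ⬝ᵥ P *ᵥ u := by simpa using hP.dotProduct_mulVec_nonneg u

private lemma dot_pos' {ι : Type*} [Fintype ι] {P : Matrix ι ι ℝ} (hP : P.PosDef)
    {u : ι → ℝ} (hu : u ≠ 0) : 0 < u ⬝ᵥ P *ᵥ u := by simpa using hP.dotProduct_mulVec_pos hu

private lemma sym_dot {ι : Type*} [Fintype ι] {P : Matrix ι ι ℝ} (hP : Pᵀ = P)
    (u v : ι → ℝ) : u ⬝ᵥ P *ᵥ v = v ⬝ᵥ P *ᵥ u := by
  conv_lhs => rw [← hP, mulVec_transpose]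
  rw [dotProduct_comm, ← dotProduct_mulVec]

private lemma psd_transpose_eq {ι : Type*} [Fintype ι] {P : Matrix ι ι ℝ}
    (hP : P.IsHermitian) : Pᵀ = P := by
  rw [← conjTranspose_eq_transpose_of_trivial]; exact hP

private lemma my_cs {ι : Type*} [Fintype ι] {P : Matrix ι ι ℝ} (hP : P.PosSemidef)
    (a b : ι → ℝ) : (a ⬝ᵥ P *ᵥ b) ^ 2 ≤ (a ⬝ᵥ P *ᵥ a) * (b ⬝ᵥ P *ᵥ b) := by
  have hsym := sym_dot (psd_transpose_eq hP.1) b a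
  have key : ∀ s t : ℝ, 0 ≤ s ^ 2 * (a ⬝ᵥ P *ᵥ a) + 2 * s * t * (a ⬝ᵥ P *ᵥ b)
      + t ^ 2 * (b ⬝ᵥ P *ᵥ b) := by
    intro s t
    have h0 := dot_nonneg' hP (s • a + t • b)
    simp only [mulVec_add, mulVec_smul, dotProduct_add, add_dotProduct, dotProduct_smul,
      smul_dotProduct, smul_eq_mul] at h0
    rw [hsym] at h0
    ring_nf at h0 ⊢
    linarith [h0]
  set p := a ⬝ᵥ P *ᵥ a
  set q := a ⬝ᵥ P *ᵥ b
  set r := b ⬝ᵥ P *ᵥ b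
  have hp : 0 ≤ p := dot_nonneg' hP a
  have hr : 0 ≤ r := dot_nonneg' hP b
  rcases eq_or_lt_of_le hr with hr0 | hr0
  · by_contra hlt
    push_neg at hlt
    have hq : q ≠ 0 := by
      intro h
      rw [h] at hlt
      nlinarith
    have h2 := key 1 (-(p + 1) / (2 * q))
    rw [← hr0] at h2
    have h3 : 2 * 1 * (-(p + 1) / (2 * q)) * q = -(p + 1) := by field_simp
    nlinarith [h2, h3]
  · have h2 := key r (-q)
    nlinarith [h2, hr0, mul_pos hr0 hr0]

private lemma cubic_bound (lam s1 d e d2 c T : ℝ) (hlam : 0 < lam) (hl1 : ¬ lam = 1)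
    (hlam' : 0 ≤ lam)
    (hc : (lam - 1) * c = (lam ^ 2 - lam - 1) * s1 + lam * d)
    (hT : (lam - 1) ^ 2 * T = (lam ^ 2 - lam - 1) ^ 2 * s1
      + 2 * (lam ^ 2 - lam - 1) * lam * d + lam ^ 2 * d2)
    (hce : c + e = lam * (e + T))
    (hs1 : 0 < s1) (hd : 0 ≤ d) (he : 0 ≤ e) (hds1 : d ≤ s1)
    (hd2_nonneg : 0 ≤ d2) (hd2_le : d2 ≤ d) (hd_sq : d ^ 2 ≤ s1 * d2)
    (hcon : 0 < lam ^ 3 - lam ^ 2 - 2 * lam + 1) : False := by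
  have POLY : (lam - 1) * ((lam ^ 2 - lam - 1) * s1 + lam * d)
      = (lam - 1) ^ 3 * e + lam * ((lam ^ 2 - lam - 1) ^ 2 * s1
        + 2 * (lam ^ 2 - lam - 1) * lam * d + lam ^ 2 * d2) := by
    linear_combination (lam - 1) ^ 2 * hce - (lam - 1) * hc + lam * hT
  -- final contradiction
  rcases lt_or_gt_of_ne hl1 with h1 | h1
  · -- lam < 1
    have hq : 0 < 1 - lam - lam ^ 2 := by nlinarith [hcon, h1, hlam, mul_pos hlam hlam]
    have hG2 : 0 < 1 + lam - lam ^ 2 := by nlinarith [h1, hlam]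
    have key2 : (lam - 1) ^ 3 * e
        = (lam ^ 3 - lam ^ 2 - 2 * lam + 1) * (1 + lam - lam ^ 2) * (s1 - d)
          + (lam - 1) ^ 2 * (lam + 1) * (1 - lam - lam ^ 2) * d
          + lam ^ 3 * (d - d2) := by
      linear_combination (-1 : ℝ) * POLY
    have ht1 : 0 ≤ (lam ^ 3 - lam ^ 2 - 2 * lam + 1) * (1 + lam - lam ^ 2) * (s1 - d) := by
      apply mul_nonneg (mul_nonneg hcon.le hG2.le)
      linarith
    have ht2 : 0 ≤ (lam - 1) ^ 2 * (lam + 1) * (1 - lam - lam ^ 2) * d := by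
      apply mul_nonneg (mul_nonneg (mul_nonneg (sq_nonneg _) (by linarith)) hq.le) hd
    have ht3 : 0 ≤ lam ^ 3 * (d - d2) := by
      apply mul_nonneg (by positivity)
      linarith
    have hlhs : (lam - 1) ^ 3 * e ≤ 0 := by
      apply mul_nonpos_of_nonpos_of_nonneg _ he
      nlinarith [h1]
    by_cases hd0 : d = 0
    · have hstrict : 0 < (lam ^ 3 - lam ^ 2 - 2 * lam + 1) * (1 + lam - lam ^ 2) * (s1 - d) := by
        apply mul_pos (mul_pos hcon hG2)
        rw [hd0]; linarith
      linarith [key2, hstrict, ht2, ht3, hlhs]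
    · have hdpos : 0 < d := lt_of_le_of_ne hd (Ne.symm hd0)
      have hstrict : 0 < (lam - 1) ^ 2 * (lam + 1) * (1 - lam - lam ^ 2) * d := by
        apply mul_pos (mul_pos (mul_pos _ (by linarith)) hq) hdpos
        exact pow_two_pos_of_ne_zero (sub_ne_zero.mpr hl1)
      linarith [key2, hstrict, ht1, ht3, hlhs]
  · -- lam > 1
    have hG : 0 < lam ^ 2 - lam - 1 := by nlinarith [hcon, h1, hlam]
    have key1 : s1 * ((lam - 1) ^ 3 * e)
        = -(((lam ^ 2 - lam - 1) * s1 + lam * d)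
            * ((lam ^ 3 - lam ^ 2 - 2 * lam + 1) * s1 + lam ^ 2 * d))
          - lam ^ 3 * (d2 * s1 - d ^ 2) := by
      linear_combination (-s1) * POLY
    have hS : 0 < (lam ^ 2 - lam - 1) * s1 + lam * d := by
      linarith [mul_pos hG hs1, mul_nonneg hlam.le hd]
    have hfs : 0 < (lam ^ 3 - lam ^ 2 - 2 * lam + 1) * s1 + lam ^ 2 * d := by
      have hl2 : 0 ≤ lam ^ 2 * d := by positivity
      linarith [mul_pos hcon hs1]
    have h2 : 0 < ((lam ^ 2 - lam - 1) * s1 + lam * d)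
        * ((lam ^ 3 - lam ^ 2 - 2 * lam + 1) * s1 + lam ^ 2 * d) := mul_pos hS hfs
    have h3 : 0 ≤ lam ^ 3 * (d2 * s1 - d ^ 2) := by
      apply mul_nonneg (by positivity)
      nlinarith [hd_sq]
    have h4 : 0 ≤ s1 * ((lam - 1) ^ 3 * e) := by
      apply mul_nonneg hs1.le
      apply mul_nonneg _ he
      have : (0:ℝ) ≤ lam - 1 := by linarith
      positivity
    linarith [key1, h2, h3, h4]

/-- Positive eigenvalue bounds for the Schur-complement preconditioned matrix:
every positive eigenvalue `λ` of `M⁻¹K` satisfies `λ³ − λ² − 2λ + 1 ≤ 0`. -/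
theorem stmt_14 (n m p : ℕ) (hn : 0 < n) (hm : 0 < m) (hp : 0 < p)
    (A : Matrix (Fin n) (Fin n) ℝ) (B : Matrix (Fin m) (Fin n) ℝ)
    (C : Matrix (Fin p) (Fin m) ℝ) (D : Matrix (Fin m) (Fin m) ℝ)
    (E : Matrix (Fin p) (Fin p) ℝ)
    (hA : A.PosDef) (hD : D.PosSemidef) (hE : E.PosSemidef)
    (K : Matrix ((Fin n ⊕ Fin m) ⊕ Fin p) ((Fin n ⊕ Fin m) ⊕ Fin p) ℝ)
    (hK : K = fromBlocks (fromBlocks A Bᵀ B (-D)) (fromRows 0 Cᵀ) (fromCols 0 C) E)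
    (S₁ : Matrix (Fin m) (Fin m) ℝ) (hS₁ : S₁ = D + B * A⁻¹ * Bᵀ)
    (S₂ : Matrix (Fin p) (Fin p) ℝ) (hS₂ : S₂ = E + C * S₁⁻¹ * Cᵀ)
    (hS₁pd : S₁.PosDef) (hS₂pd : S₂.PosDef)
    (M : Matrix ((Fin n ⊕ Fin m) ⊕ Fin p) ((Fin n ⊕ Fin m) ⊕ Fin p) ℝ)
    (hM : M = fromBlocks (fromBlocks A 0 0 S₁) 0 0 S₂) :
    ∀ (lam : ℝ) (v : (Fin n ⊕ Fin m) ⊕ Fin p → ℝ), v ≠ 0 →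
      K.mulVec v = lam • M.mulVec v → 0 < lam →
      lam ^ 3 - lam ^ 2 - 2 * lam + 1 ≤ 0 := by
  intro lam v hv hKv hlam
  by_cases hl1 : lam = 1
  · subst hl1; norm_num
  -- block components of v
  set x : Fin n → ℝ := fun i => v (Sum.inl (Sum.inl i)) with hxdef
  set y : Fin m → ℝ := fun j => v (Sum.inl (Sum.inr j)) with hydef
  set z : Fin p → ℝ := fun k => v (Sum.inr k) with hzdef
  have hvdef : v = Sum.elim (Sum.elim x y) z := by
    funext i; rcases i with (i | j) | k <;> rfl
  have hne1 : lam - 1 ≠ 0 := sub_ne_zero.mpr hl1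
  -- the three block equations
  have e1 : A *ᵥ x + Bᵀ *ᵥ y = lam • (A *ᵥ x) := by
    funext i
    have h := congrFun hKv (Sum.inl (Sum.inl i))
    rw [hK, hM, hvdef] at h
    simpa [fromBlocks_mulVec, fromRows_mulVec, fromCols_mulVec_sumElim,
      Sum.elim_comp_inl, Sum.elim_comp_inr, zero_mulVec] using h
  have e2 : B *ᵥ x - D *ᵥ y + Cᵀ *ᵥ z = lam • (S₁ *ᵥ y) := by
    funext j
    have h := congrFun hKv (Sum.inl (Sum.inr j))
    rw [hK, hM, hvdef] at h
    simpa [fromBlocks_mulVec, fromRows_mulVec, fromCols_mulVec_sumElim,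
      Sum.elim_comp_inl, Sum.elim_comp_inr, zero_mulVec, neg_mulVec, sub_eq_add_neg]
      using h
  have e3 : C *ᵥ y + E *ᵥ z = lam • (S₂ *ᵥ z) := by
    funext k
    have h := congrFun hKv (Sum.inr k)
    rw [hK, hM, hvdef] at h
    simpa [fromBlocks_mulVec, fromRows_mulVec, fromCols_mulVec_sumElim,
      Sum.elim_comp_inl, Sum.elim_comp_inr, zero_mulVec] using h
  -- invertibility
  have hAdet : IsUnit A.det := hA.det_pos.ne'.isUnit
  have hS1det : IsUnit S₁.det := hS₁pd.det_pos.ne'.isUnit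
  have hAinvA : ∀ w : Fin n → ℝ, A⁻¹ *ᵥ (A *ᵥ w) = w := by
    intro w; rw [mulVec_mulVec, nonsing_inv_mul A hAdet, one_mulVec]
  have hS1S1inv : ∀ w : Fin m → ℝ, S₁ *ᵥ (S₁⁻¹ *ᵥ w) = w := by
    intro w; rw [mulVec_mulVec, mul_nonsing_inv S₁ hS1det, one_mulVec]
  have hBy : Bᵀ *ᵥ y = (lam - 1) • (A *ᵥ x) := by
    rw [sub_smul, one_smul, eq_sub_iff_add_eq, add_comm]
    exact e1
  by_cases hy : y = 0
  · exfalso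
    have hAx0 : A *ᵥ x = 0 := by
      have h0 : (lam - 1) • (A *ᵥ x) = 0 := by rw [← hBy, hy, mulVec_zero]
      rcases smul_eq_zero.mp h0 with h | h
      · exact absurd h hne1
      · exact h
    have hx0 : x = 0 := by
      by_contra hx
      have := dot_pos' hA hx
      rw [hAx0, dotProduct_zero] at this
      exact lt_irrefl 0 this
    have hCz : Cᵀ *ᵥ z = 0 := by
      have h := e2
      rw [hx0, hy] at h
      simpa using h
    have hz0 : z = 0 := by
      have h3 := congrArg (fun w => z ⬝ᵥ w) e3
      simp only [hy, mulVec_zero, zero_add, dotProduct_add, dotProduct_smul,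
        smul_eq_mul] at h3
      have hS2z : z ⬝ᵥ S₂ *ᵥ z = z ⬝ᵥ E *ᵥ z := by
        rw [hS₂, add_mulVec, dotProduct_add,
          show (C * S₁⁻¹ * Cᵀ) *ᵥ z = C *ᵥ (S₁⁻¹ *ᵥ (Cᵀ *ᵥ z)) from by
            rw [mulVec_mulVec, mulVec_mulVec],
          hCz, mulVec_zero, mulVec_zero, dotProduct_zero, add_zero]
      rw [hS2z] at h3
      have he0 : z ⬝ᵥ E *ᵥ z = 0 := by
        have : (lam - 1) * (z ⬝ᵥ E *ᵥ z) = 0 := by linarith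
        rcases mul_eq_zero.mp this with h | h
        · exact absurd h hne1
        · exact h
      by_contra hz
      have hpos := dot_pos' hS₂pd hz
      rw [hS2z, he0] at hpos
      exact lt_irrefl 0 hpos
    apply hv
    rw [hvdef, hx0, hy, hz0]
    funext i; rcases i with (i | j) | k <;> rfl
  -- main case : y ≠ 0
  by_contra hcon
  push_neg at hcon
  have hBx : (lam - 1) • (B *ᵥ x) = S₁ *ᵥ y - D *ᵥ y := by
    have h1 : (B * A⁻¹ * Bᵀ) *ᵥ y = (lam - 1) • (B *ᵥ x) := by
      rw [show (B * A⁻¹ * Bᵀ) *ᵥ y = B *ᵥ (A⁻¹ *ᵥ (Bᵀ *ᵥ y)) from by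
          rw [mulVec_mulVec, mulVec_mulVec],
        hBy, mulVec_smul, hAinvA, mulVec_smul]
    rw [← h1, hS₁, add_mulVec]
    abel
  have hW : (lam - 1) • (Cᵀ *ᵥ z) = (lam ^ 2 - lam - 1) • (S₁ *ᵥ y) + lam • (D *ᵥ y) := by
    funext j
    have h1 := congrFun e2 j
    have h2 := congrFun hBx j
    simp only [Pi.add_apply, Pi.sub_apply, Pi.smul_apply, smul_eq_mul] at h1 h2 ⊢
    linear_combination (lam - 1) * h1 - h2
  have hs1sym : S₁ᵀ = S₁ := psd_transpose_eq hS₁pd.1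
  set s1 := y ⬝ᵥ S₁ *ᵥ y with hs1def
  set d := y ⬝ᵥ D *ᵥ y with hddef
  set e := z ⬝ᵥ E *ᵥ z with hedef
  set u := S₁⁻¹ *ᵥ (D *ᵥ y) with hudef
  set d2 := (D *ᵥ y) ⬝ᵥ u with hd2def
  set c := y ⬝ᵥ (Cᵀ *ᵥ z) with hcdef
  set T := (Cᵀ *ᵥ z) ⬝ᵥ (S₁⁻¹ *ᵥ (Cᵀ *ᵥ z)) with hTdef
  have hSu : S₁ *ᵥ u = D *ᵥ y := hS1S1inv _
  -- scalar equation 1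
  have hc : (lam - 1) * c = (lam ^ 2 - lam - 1) * s1 + lam * d := by
    have h := congrArg (fun w => y ⬝ᵥ w) hW
    simpa [dotProduct_add, dotProduct_smul, smul_eq_mul] using h
  -- scalar equation 2
  have hS1yu : (S₁ *ᵥ y) ⬝ᵥ u = d := by
    rw [dotProduct_comm, sym_dot hs1sym u y, hSu]
  have hT : (lam - 1) ^ 2 * T = (lam ^ 2 - lam - 1) ^ 2 * s1
      + 2 * (lam ^ 2 - lam - 1) * lam * d + lam ^ 2 * d2 := by
    have hWS : S₁⁻¹ *ᵥ ((lam - 1) • (Cᵀ *ᵥ z)) = (lam ^ 2 - lam - 1) • y + lam • u := by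
      rw [hW, mulVec_add, mulVec_smul, mulVec_smul]
      congr 1
      rw [mulVec_mulVec, nonsing_inv_mul S₁ hS1det, one_mulVec]
    have h0 : ((lam - 1) • (Cᵀ *ᵥ z)) ⬝ᵥ (S₁⁻¹ *ᵥ ((lam - 1) • (Cᵀ *ᵥ z)))
        = (lam - 1) ^ 2 * T := by
      rw [mulVec_smul, smul_dotProduct, dotProduct_smul, smul_eq_mul, smul_eq_mul]
      ring
    rw [hWS, hW] at h0
    simp only [add_dotProduct, dotProduct_add, smul_dotProduct, dotProduct_smul,
      smul_eq_mul] at h0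
    rw [hS1yu] at h0
    have hyS1y : (S₁ *ᵥ y) ⬝ᵥ y = s1 := dotProduct_comm _ _
    have hDyy : (D *ᵥ y) ⬝ᵥ y = d := dotProduct_comm _ _
    rw [hyS1y, hDyy] at h0
    rw [← h0, ← hd2def]
    ring
  -- scalar equation 3
  have hce : c + e = lam * (e + T) := by
    have h := congrArg (fun w => z ⬝ᵥ w) e3
    simp only [dotProduct_add, dotProduct_smul, smul_eq_mul] at h
    have h1 : z ⬝ᵥ C *ᵥ y = c := by
      rw [dotProduct_mulVec, ← mulVec_transpose, hcdef]
      exact dotProduct_comm _ _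
    have h2 : z ⬝ᵥ S₂ *ᵥ z = e + T := by
      rw [hS₂, add_mulVec, dotProduct_add,
        show (C * S₁⁻¹ * Cᵀ) *ᵥ z = C *ᵥ (S₁⁻¹ *ᵥ (Cᵀ *ᵥ z)) from by
          rw [mulVec_mulVec, mulVec_mulVec],
        dotProduct_mulVec z C, ← mulVec_transpose]
    rw [h1, h2] at h
    exact h
  -- inequalities
  have hs1 : 0 < s1 := dot_pos' hS₁pd hy
  have hd : 0 ≤ d := dot_nonneg' hD y
  have he : 0 ≤ e := dot_nonneg' hE z
  have hBAB : ∀ w : Fin m → ℝ, 0 ≤ w ⬝ᵥ (B * A⁻¹ * Bᵀ) *ᵥ w := by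
    intro w
    rw [show (B * A⁻¹ * Bᵀ) *ᵥ w = B *ᵥ (A⁻¹ *ᵥ (Bᵀ *ᵥ w)) from by
        rw [mulVec_mulVec, mulVec_mulVec],
      dotProduct_mulVec, ← mulVec_transpose]
    exact dot_nonneg' hA.inv.posSemidef _
  have hds1 : d ≤ s1 := by
    have h1 := hBAB y
    have h2 : s1 = d + y ⬝ᵥ (B * A⁻¹ * Bᵀ) *ᵥ y := by
      rw [hs1def, hddef, hS₁, add_mulVec, dotProduct_add]
    linarith
  have hd2_nonneg : 0 ≤ d2 := dot_nonneg' hS₁pd.inv.posSemidef _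
  have huS1u : u ⬝ᵥ S₁ *ᵥ u = d2 := by
    rw [hSu, hd2def]
    exact dotProduct_comm _ _
  have hd2_le : d2 ≤ d := by
    have h1 := my_cs hD u y
    have h2 : u ⬝ᵥ D *ᵥ u ≤ d2 := by
      have h3 := hBAB u
      have h4 : u ⬝ᵥ S₁ *ᵥ u = u ⬝ᵥ D *ᵥ u + u ⬝ᵥ (B * A⁻¹ * Bᵀ) *ᵥ u := by
        rw [hS₁, add_mulVec, dotProduct_add]
      linarith [huS1u]
    have h5 : u ⬝ᵥ D *ᵥ y = d2 := by rw [hd2def]; exact dotProduct_comm _ _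
    rw [h5] at h1
    have h6 : 0 ≤ u ⬝ᵥ D *ᵥ u := dot_nonneg' hD u
    nlinarith [h1, h2, hd, hd2_nonneg]
  have hd_sq : d ^ 2 ≤ s1 * d2 := by
    have h1 := my_cs hS₁pd.posSemidef y u
    have h2 : y ⬝ᵥ S₁ *ᵥ u = d := by rw [hSu, hddef]
    rw [h2, huS1u, ← hs1def] at h1
    exact h1
  exact cubic_bound lam s1 d e d2 c T hlam hl1 hlam.le hc hT hce hs1 hd he hds1
    hd2_nonneg hd2_le hd_sq hcon
end

section
/- Singular value bounds for the transformed block B̃ = S̃₁^{-1/2} B Ã^{-1/2}: for all y ∈ ℝᵐ, (α₀·α₁/(1 + η_D)) · yᵀ S̃₁ y ≤ yᵀ B Ã⁻¹ Bᵀ y ≤ β₀·β₁ · yᵀ S̃₁ y; equivalently, the singular values of B̃ lie in the interval [√(α₀α₁/(1 + η_D)), √(β₀β₁)]. -/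
open Matrix

private lemma symm_dot {k : ℕ} {M : Matrix (Fin k) (Fin k) ℝ} (h : M.IsHermitian)
    (x y : Fin k → ℝ) : x ⬝ᵥ M.mulVec y = y ⬝ᵥ M.mulVec x := by
  rw [dotProduct_mulVec, ← mulVec_transpose, show Mᵀ = M from h, dotProduct_comm]

private lemma inv_mulVec_cancel {k : ℕ} {M : Matrix (Fin k) (Fin k) ℝ} (hM : M.PosDef)
    (v : Fin k → ℝ) : M.mulVec (M⁻¹.mulVec v) = v := by
  rw [mulVec_mulVec, mul_nonsing_inv M (isUnit_iff_ne_zero.mpr hM.det_pos.ne'), one_mulVec]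

/-- variational lower bound: `2⟨x,v⟩ − xᵀMx ≤ vᵀM⁻¹v` for posdef `M`. -/
private lemma quad_lb {k : ℕ} {M : Matrix (Fin k) (Fin k) ℝ} (hM : M.PosDef)
    (x v : Fin k → ℝ) : 2 * (x ⬝ᵥ v) - x ⬝ᵥ M.mulVec x ≤ v ⬝ᵥ M⁻¹.mulVec v := by
  have hMu : M.mulVec (M⁻¹.mulVec v) = v := inv_mulVec_cancel hM v
  have h0 : 0 ≤ (x - M⁻¹.mulVec v) ⬝ᵥ M.mulVec (x - M⁻¹.mulVec v) := by
    simpa using hM.posSemidef.dotProduct_mulVec_nonneg (x - M⁻¹.mulVec v)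
  have h1 : (M⁻¹.mulVec v) ⬝ᵥ M.mulVec x = x ⬝ᵥ v := by
    rw [symm_dot hM.1, hMu]
  have h2 : x ⬝ᵥ M.mulVec (M⁻¹.mulVec v) = x ⬝ᵥ v := by rw [hMu]
  have h3 : (M⁻¹.mulVec v) ⬝ᵥ M.mulVec (M⁻¹.mulVec v) = v ⬝ᵥ M⁻¹.mulVec v := by
    rw [hMu, dotProduct_comm]
  rw [mulVec_sub, dotProduct_sub, sub_dotProduct, sub_dotProduct, h1, h2, h3] at h0
  linarith

/-- value at the optimum. -/
private lemma quad_eq {k : ℕ} {M : Matrix (Fin k) (Fin k) ℝ} (hM : M.PosDef)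
    (v : Fin k → ℝ) :
    v ⬝ᵥ M⁻¹.mulVec v
      = 2 * ((M⁻¹.mulVec v) ⬝ᵥ v) - (M⁻¹.mulVec v) ⬝ᵥ M.mulVec (M⁻¹.mulVec v) := by
  have hMu : M.mulVec (M⁻¹.mulVec v) = v := inv_mulVec_cancel hM v
  have h3 : (M⁻¹.mulVec v) ⬝ᵥ M.mulVec (M⁻¹.mulVec v) = (M⁻¹.mulVec v) ⬝ᵥ v := by
    rw [hMu]
  rw [h3, dotProduct_comm]; ring

private lemma sandwich {k l : ℕ} (B : Matrix (Fin l) (Fin k) ℝ)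
    (M : Matrix (Fin k) (Fin k) ℝ) (y : Fin l → ℝ) :
    y ⬝ᵥ (B * M * Bᵀ).mulVec y = (Bᵀ.mulVec y) ⬝ᵥ M.mulVec (Bᵀ.mulVec y) := by
  rw [← mulVec_mulVec, ← mulVec_mulVec, dotProduct_mulVec, ← mulVec_transpose]

private lemma inv_comp {k : ℕ} {A Atil : Matrix (Fin k) (Fin k) ℝ}
    (hA : A.PosDef) (hAtil : Atil.PosDef) {α β : ℝ} (hα : 0 < α) (hβ : 0 < β)
    (hequiv : ∀ x : Fin k → ℝ,
      α * (x ⬝ᵥ Atil.mulVec x) ≤ x ⬝ᵥ A.mulVec x ∧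
      x ⬝ᵥ A.mulVec x ≤ β * (x ⬝ᵥ Atil.mulVec x)) (v : Fin k → ℝ) :
    α * (v ⬝ᵥ A⁻¹.mulVec v) ≤ v ⬝ᵥ Atil⁻¹.mulVec v ∧
    v ⬝ᵥ Atil⁻¹.mulVec v ≤ β * (v ⬝ᵥ A⁻¹.mulVec v) := by
  constructor
  · -- take x = α • A⁻¹ v in variational bound for Atil
    have hMu : A.mulVec (A⁻¹.mulVec v) = v := inv_mulVec_cancel hA v
    have hq : (A⁻¹.mulVec v) ⬝ᵥ v = v ⬝ᵥ A⁻¹.mulVec v := dotProduct_comm _ _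
    have hlb := quad_lb hAtil (α • (A⁻¹.mulVec v)) v
    have hdot : (α • (A⁻¹.mulVec v)) ⬝ᵥ v = α * (v ⬝ᵥ A⁻¹.mulVec v) := by
      rw [smul_dotProduct, hq, smul_eq_mul]
    have hAu : (α • (A⁻¹.mulVec v)) ⬝ᵥ A.mulVec (α • (A⁻¹.mulVec v))
        = α ^ 2 * (v ⬝ᵥ A⁻¹.mulVec v) := by
      rw [smul_dotProduct, mulVec_smul, dotProduct_smul, hMu, hq, smul_eq_mul, smul_eq_mul]
      ring
    have hub := (hequiv (α • (A⁻¹.mulVec v))).1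
    rw [hAu] at hub
    -- hub : α * s ≤ α² q₀, so s ≤ α q₀
    have hs : (α • (A⁻¹.mulVec v)) ⬝ᵥ Atil.mulVec (α • (A⁻¹.mulVec v))
        ≤ α * (v ⬝ᵥ A⁻¹.mulVec v) := by
      have := (mul_le_mul_iff_right₀ hα).mp (by nlinarith : α * ((α • (A⁻¹.mulVec v)) ⬝ᵥ Atil.mulVec (α • (A⁻¹.mulVec v))) ≤ α * (α * (v ⬝ᵥ A⁻¹.mulVec v)))
      exact this
    rw [hdot] at hlb
    linarith
  · -- at optimum x = Atil⁻¹ v, compare and rescale by 1/β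
    have heq := quad_eq hAtil v
    have hub := (hequiv (Atil⁻¹.mulVec v)).2
    have hlb := quad_lb hA (β⁻¹ • (Atil⁻¹.mulVec v)) v
    have hsm1 : (β⁻¹ • (Atil⁻¹.mulVec v)) ⬝ᵥ v = β⁻¹ * ((Atil⁻¹.mulVec v) ⬝ᵥ v) := by
      rw [smul_dotProduct, smul_eq_mul]
    have hsm2 : (β⁻¹ • (Atil⁻¹.mulVec v)) ⬝ᵥ A.mulVec (β⁻¹ • (Atil⁻¹.mulVec v))
        = β⁻¹ ^ 2 * ((Atil⁻¹.mulVec v) ⬝ᵥ A.mulVec (Atil⁻¹.mulVec v)) := by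
      rw [smul_dotProduct, mulVec_smul, dotProduct_smul, smul_eq_mul, smul_eq_mul]; ring
    rw [hsm1, hsm2] at hlb
    have h5 := mul_le_mul_of_nonneg_left hlb hβ.le
    have e1 : β * (2 * (β⁻¹ * ((Atil⁻¹.mulVec v) ⬝ᵥ v))
        - β⁻¹ ^ 2 * ((Atil⁻¹.mulVec v) ⬝ᵥ A.mulVec (Atil⁻¹.mulVec v)))
        = 2 * ((Atil⁻¹.mulVec v) ⬝ᵥ v)
          - β⁻¹ * ((Atil⁻¹.mulVec v) ⬝ᵥ A.mulVec (Atil⁻¹.mulVec v)) := by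
      field_simp
    rw [e1] at h5
    have h6 := mul_le_mul_of_nonneg_left hub (inv_nonneg.mpr hβ.le)
    have e2 : β⁻¹ * (β * ((Atil⁻¹.mulVec v) ⬝ᵥ Atil.mulVec (Atil⁻¹.mulVec v)))
        = (Atil⁻¹.mulVec v) ⬝ᵥ Atil.mulVec (Atil⁻¹.mulVec v) := by
      field_simp
    rw [e2] at h6
    linarith

/-- Singular value bounds for the transformed block `B̃ = S₁til^{-1/2} B Atil^{-1/2}`,
expressed via quadratic forms: for all `y`,
`(α₀α₁/(1+η_D)) · yᵀS₁tily ≤ yᵀ B Atil⁻¹ Bᵀ y ≤ β₀β₁ · yᵀS₁tily`. -/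
theorem stmt_15 (n m p : ℕ) (hp : 0 < p) (hmp : p ≤ m) (hnm : m ≤ n)
    (A : Matrix (Fin n) (Fin n) ℝ) (B : Matrix (Fin m) (Fin n) ℝ)
    (C : Matrix (Fin p) (Fin m) ℝ) (D : Matrix (Fin m) (Fin m) ℝ)
    (E : Matrix (Fin p) (Fin p) ℝ)
    (hA : A.PosDef) (hD : D.PosSemidef) (hE : E.PosSemidef)
    (hB : B.rank = m) (hC : C.rank = p)
    (S₁ : Matrix (Fin m) (Fin m) ℝ) (hS₁ : S₁ = D + B * A⁻¹ * Bᵀ)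
    (S₂ : Matrix (Fin p) (Fin p) ℝ) (hS₂ : S₂ = E + C * S₁⁻¹ * Cᵀ)
    (hS₁pd : S₁.PosDef) (hS₂pd : S₂.PosDef)
    (Atil : Matrix (Fin n) (Fin n) ℝ) (S₁til : Matrix (Fin m) (Fin m) ℝ)
    (S₂til : Matrix (Fin p) (Fin p) ℝ)
    (hAtil : Atil.PosDef) (hS₁til : S₁til.PosDef) (hS₂til : S₂til.PosDef)
    (α₀ β₀ α₁ β₁ α₂ β₂ : ℝ)
    (hα₀ : 0 < α₀) (hα₀1 : α₀ ≤ 1) (hβ₀ : 1 ≤ β₀)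
    (hα₁ : 0 < α₁) (hα₁1 : α₁ ≤ 1) (hβ₁ : 1 ≤ β₁)
    (hα₂ : 0 < α₂) (hα₂1 : α₂ ≤ 1) (hβ₂ : 1 ≤ β₂)
    (hAequiv : ∀ x : Fin n → ℝ,
      α₀ * (x ⬝ᵥ Atil.mulVec x) ≤ x ⬝ᵥ A.mulVec x ∧
      x ⬝ᵥ A.mulVec x ≤ β₀ * (x ⬝ᵥ Atil.mulVec x))
    (hS₁equiv : ∀ y : Fin m → ℝ,
      α₁ * (y ⬝ᵥ S₁til.mulVec y) ≤ y ⬝ᵥ S₁.mulVec y ∧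
      y ⬝ᵥ S₁.mulVec y ≤ β₁ * (y ⬝ᵥ S₁til.mulVec y))
    (hS₂equiv : ∀ z : Fin p → ℝ,
      α₂ * (z ⬝ᵥ S₂til.mulVec z) ≤ z ⬝ᵥ S₂.mulVec z ∧
      z ⬝ᵥ S₂.mulVec z ≤ β₂ * (z ⬝ᵥ S₂til.mulVec z))
    (ηD : ℝ) (hηD0 : 0 ≤ ηD)
    (hηD : ∀ y : Fin m → ℝ, y ⬝ᵥ D.mulVec y ≤ ηD * (y ⬝ᵥ (B * A⁻¹ * Bᵀ).mulVec y))
    (ηE : ℝ) (hηE0 : 0 ≤ ηE)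
    (hηE : ∀ z : Fin p → ℝ, z ⬝ᵥ E.mulVec z ≤ ηE * (z ⬝ᵥ (C * S₁⁻¹ * Cᵀ).mulVec z)) :
    ∀ y : Fin m → ℝ,
      α₀ * α₁ / (1 + ηD) * (y ⬝ᵥ S₁til.mulVec y) ≤ y ⬝ᵥ (B * Atil⁻¹ * Bᵀ).mulVec y ∧
      y ⬝ᵥ (B * Atil⁻¹ * Bᵀ).mulVec y ≤ β₀ * β₁ * (y ⬝ᵥ S₁til.mulVec y) := by
  intro y
  have hβ₀0 : (0:ℝ) < β₀ := lt_of_lt_of_le one_pos hβ₀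
  have h1η : (0:ℝ) < 1 + ηD := by linarith
  -- quadratic forms via v = Bᵀ y
  have hq0 : y ⬝ᵥ (B * A⁻¹ * Bᵀ).mulVec y
      = (Bᵀ.mulVec y) ⬝ᵥ A⁻¹.mulVec (Bᵀ.mulVec y) := sandwich B A⁻¹ y
  have hqt : y ⬝ᵥ (B * Atil⁻¹ * Bᵀ).mulVec y
      = (Bᵀ.mulVec y) ⬝ᵥ Atil⁻¹.mulVec (Bᵀ.mulVec y) := sandwich B Atil⁻¹ y
  obtain ⟨hic1, hic2⟩ := inv_comp hA hAtil hα₀ hβ₀0 hAequiv (Bᵀ.mulVec y)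
  rw [← hq0, ← hqt] at hic1 hic2
  -- S₁ split
  have hsplit : y ⬝ᵥ S₁.mulVec y
      = y ⬝ᵥ D.mulVec y + y ⬝ᵥ (B * A⁻¹ * Bᵀ).mulVec y := by
    rw [hS₁, add_mulVec, dotProduct_add]
  have hDnn : 0 ≤ y ⬝ᵥ D.mulVec y := by simpa using hD.dotProduct_mulVec_nonneg y
  obtain ⟨hs1l, hs1u⟩ := hS₁equiv y
  have hηDy := hηD y
  -- bounds on q₀ := y ⬝ᵥ (B * A⁻¹ * Bᵀ).mulVec y
  have hq0u : y ⬝ᵥ (B * A⁻¹ * Bᵀ).mulVec y ≤ β₁ * (y ⬝ᵥ S₁til.mulVec y) := by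
    linarith
  have hq0l : α₁ * (y ⬝ᵥ S₁til.mulVec y)
      ≤ (1 + ηD) * (y ⬝ᵥ (B * A⁻¹ * Bᵀ).mulVec y) := by linarith
  constructor
  · rw [div_mul_eq_mul_div, div_le_iff₀ h1η]
    nlinarith [mul_le_mul_of_nonneg_left hq0l hα₀.le,
      mul_le_mul_of_nonneg_left hic1 h1η.le]
  · nlinarith [mul_le_mul_of_nonneg_left hq0u hβ₀0.le]
end

section
/- Singular value bounds for the transformed block C̃ = S̃₂^{-1/2} C S̃₁^{-1/2}: for all z ∈ ℝᵖ, (α₁·α₂/(1 + η_E)) · zᵀ S̃₂ z ≤ zᵀ C S̃₁⁻¹ Cᵀ z ≤ β₁·β₂ · zᵀ S̃₂ z; equivalently, the singular values of C̃ lie in the interval [√(α₁α₂/(1 + η_E)), √(β₁β₂)]. -/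
open Matrix

/-- If `xᵀPx ≤ c·xᵀQx` for posdef `P, Q`, then `xᵀQ⁻¹x ≤ c·xᵀP⁻¹x`. -/
lemma inv_form_le {k : ℕ} {P Q : Matrix (Fin k) (Fin k) ℝ} (hP : P.PosDef) (hQ : Q.PosDef)
    {c : ℝ} (hc : 0 < c) (h : ∀ x, x ⬝ᵥ P.mulVec x ≤ c * (x ⬝ᵥ Q.mulVec x)) :
    ∀ x, x ⬝ᵥ Q⁻¹.mulVec x ≤ c * (x ⬝ᵥ P⁻¹.mulVec x) := by
  intro x
  have hPinvT : (P⁻¹)ᵀ = P⁻¹ := by simpa [IsHermitian] using hP.isHermitian.inv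
  have hQinvT : (Q⁻¹)ᵀ = Q⁻¹ := by simpa [IsHermitian] using hQ.isHermitian.inv
  have hPmul : P * P⁻¹ = 1 := mul_nonsing_inv P (isUnit_iff_ne_zero.mpr hP.det_pos.ne')
  have hQmul : Q * Q⁻¹ = 1 := mul_nonsing_inv Q (isUnit_iff_ne_zero.mpr hQ.det_pos.ne')
  set v : Fin k → ℝ := Q⁻¹.mulVec x with hv
  have hQv : Q.mulVec v = x := by
    rw [hv, mulVec_mulVec, hQmul, one_mulVec]
  set y : Fin k → ℝ := c⁻¹ • v with hy
  -- key: 2⟨x,y⟩ - ⟨y,Py⟩ ≤ ⟨x,P⁻¹x⟩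
  have hkey : 2 * (x ⬝ᵥ y) - y ⬝ᵥ P.mulVec y ≤ x ⬝ᵥ P⁻¹.mulVec x := by
    have h0 : 0 ≤ (y - P⁻¹.mulVec x) ⬝ᵥ P.mulVec (y - P⁻¹.mulVec x) :=
      by simpa using hP.posSemidef.dotProduct_mulVec_nonneg (y - P⁻¹.mulVec x)
    have hPw : P.mulVec (P⁻¹.mulVec x) = x := by
      rw [mulVec_mulVec, hPmul, one_mulVec]
    have hsym : (P⁻¹.mulVec x) ⬝ᵥ P.mulVec y = x ⬝ᵥ y := by
      have hPT : Pᵀ = P := (by simpa using hP.isHermitian : P.IsSymm).eq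
      rw [dotProduct_mulVec, ← mulVec_transpose, mulVec_mulVec,
        show Pᵀ * P⁻¹ = 1 by rw [hPT, hPmul], one_mulVec]
    have hsym2 : y ⬝ᵥ x = x ⬝ᵥ y := dotProduct_comm _ _
    have hexp : (y - P⁻¹.mulVec x) ⬝ᵥ P.mulVec (y - P⁻¹.mulVec x)
        = y ⬝ᵥ P.mulVec y - 2 * (x ⬝ᵥ y) + x ⬝ᵥ P⁻¹.mulVec x := by
      rw [mulVec_sub, sub_dotProduct, dotProduct_sub, dotProduct_sub, hPw, hsym, hsym2]
      have : P⁻¹.mulVec x ⬝ᵥ x = x ⬝ᵥ P⁻¹.mulVec x := dotProduct_comm _ _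
      rw [this]; ring
    linarith [hexp ▸ h0]
  have hyv : x ⬝ᵥ y = c⁻¹ * (x ⬝ᵥ v) := by
    rw [hy, dotProduct_smul]; simp
  have hvQ : v ⬝ᵥ Q.mulVec v = x ⬝ᵥ v := by
    rw [hQv, dotProduct_comm]
  have hyP : y ⬝ᵥ P.mulVec y ≤ c⁻¹ * (x ⬝ᵥ v) := by
    have := h y
    have hyQ : y ⬝ᵥ Q.mulVec y = c⁻¹ * c⁻¹ * (x ⬝ᵥ v) := by
      rw [hy, mulVec_smul, dotProduct_smul, smul_dotProduct, hvQ]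
      simp [mul_assoc]
    calc y ⬝ᵥ P.mulVec y ≤ c * (y ⬝ᵥ Q.mulVec y) := h y
      _ = c⁻¹ * (x ⬝ᵥ v) := by rw [hyQ]; field_simp
  have hxv : x ⬝ᵥ v = x ⬝ᵥ Q⁻¹.mulVec x := rfl
  have : c⁻¹ * (x ⬝ᵥ Q⁻¹.mulVec x) ≤ x ⬝ᵥ P⁻¹.mulVec x := by
    have := hkey
    rw [hyv, hxv] at this
    nlinarith [hyP, hxv]
  calc x ⬝ᵥ Q⁻¹.mulVec x = c * (c⁻¹ * (x ⬝ᵥ Q⁻¹.mulVec x)) := by field_simp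
    _ ≤ c * (x ⬝ᵥ P⁻¹.mulVec x) := by
        exact mul_le_mul_of_nonneg_left this hc.le

/-- Singular value bounds for the transformed block `B̃ = S₁til^{-1/2} B Atil^{-1/2}`,
expressed via quadratic forms: for all `y`,
`(α₀α₁/(1+η_D)) · yᵀS₁tily ≤ yᵀ B Atil⁻¹ Bᵀ y ≤ β₀β₁ · yᵀS₁tily`. -/
theorem stmt_16 (n m p : ℕ) (hp : 0 < p) (hmp : p ≤ m) (hnm : m ≤ n)
    (A : Matrix (Fin n) (Fin n) ℝ) (B : Matrix (Fin m) (Fin n) ℝ)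
    (C : Matrix (Fin p) (Fin m) ℝ) (D : Matrix (Fin m) (Fin m) ℝ)
    (E : Matrix (Fin p) (Fin p) ℝ)
    (hA : A.PosDef) (hD : D.PosSemidef) (hE : E.PosSemidef)
    (hB : B.rank = m) (hC : C.rank = p)
    (S₁ : Matrix (Fin m) (Fin m) ℝ) (hS₁ : S₁ = D + B * A⁻¹ * Bᵀ)
    (S₂ : Matrix (Fin p) (Fin p) ℝ) (hS₂ : S₂ = E + C * S₁⁻¹ * Cᵀ)
    (hS₁pd : S₁.PosDef) (hS₂pd : S₂.PosDef)
    (Atil : Matrix (Fin n) (Fin n) ℝ) (S₁til : Matrix (Fin m) (Fin m) ℝ)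
    (S₂til : Matrix (Fin p) (Fin p) ℝ)
    (hAtil : Atil.PosDef) (hS₁til : S₁til.PosDef) (hS₂til : S₂til.PosDef)
    (α₀ β₀ α₁ β₁ α₂ β₂ : ℝ)
    (hα₀ : 0 < α₀) (hα₀1 : α₀ ≤ 1) (hβ₀ : 1 ≤ β₀)
    (hα₁ : 0 < α₁) (hα₁1 : α₁ ≤ 1) (hβ₁ : 1 ≤ β₁)
    (hα₂ : 0 < α₂) (hα₂1 : α₂ ≤ 1) (hβ₂ : 1 ≤ β₂)
    (hAequiv : ∀ x : Fin n → ℝ,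
      α₀ * (x ⬝ᵥ Atil.mulVec x) ≤ x ⬝ᵥ A.mulVec x ∧
      x ⬝ᵥ A.mulVec x ≤ β₀ * (x ⬝ᵥ Atil.mulVec x))
    (hS₁equiv : ∀ y : Fin m → ℝ,
      α₁ * (y ⬝ᵥ S₁til.mulVec y) ≤ y ⬝ᵥ S₁.mulVec y ∧
      y ⬝ᵥ S₁.mulVec y ≤ β₁ * (y ⬝ᵥ S₁til.mulVec y))
    (hS₂equiv : ∀ z : Fin p → ℝ,
      α₂ * (z ⬝ᵥ S₂til.mulVec z) ≤ z ⬝ᵥ S₂.mulVec z ∧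
      z ⬝ᵥ S₂.mulVec z ≤ β₂ * (z ⬝ᵥ S₂til.mulVec z))
    (ηD : ℝ) (hηD0 : 0 ≤ ηD)
    (hηD : ∀ y : Fin m → ℝ, y ⬝ᵥ D.mulVec y ≤ ηD * (y ⬝ᵥ (B * A⁻¹ * Bᵀ).mulVec y))
    (ηE : ℝ) (hηE0 : 0 ≤ ηE)
    (hηE : ∀ z : Fin p → ℝ, z ⬝ᵥ E.mulVec z ≤ ηE * (z ⬝ᵥ (C * S₁⁻¹ * Cᵀ).mulVec z)) :
    ∀ z : Fin p → ℝ,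
      α₁ * α₂ / (1 + ηE) * (z ⬝ᵥ S₂til.mulVec z) ≤ z ⬝ᵥ (C * S₁til⁻¹ * Cᵀ).mulVec z ∧
      z ⬝ᵥ (C * S₁til⁻¹ * Cᵀ).mulVec z ≤ β₁ * β₂ * (z ⬝ᵥ S₂til.mulVec z) := by
  intro z
  set w : Fin m → ℝ := Cᵀ.mulVec z with hw
  have hform : ∀ (M : Matrix (Fin m) (Fin m) ℝ),
      z ⬝ᵥ (C * M * Cᵀ).mulVec z = w ⬝ᵥ M.mulVec w := by
    intro M
    rw [Matrix.mul_assoc, ← mulVec_mulVec, dotProduct_mulVec, ← mulVec_transpose,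
      ← mulVec_mulVec]
  have hS₂z : z ⬝ᵥ S₂.mulVec z = z ⬝ᵥ E.mulVec z + w ⬝ᵥ S₁⁻¹.mulVec w := by
    rw [hS₂, add_mulVec, dotProduct_add, hform]
  have hinv_up : ∀ x, x ⬝ᵥ S₁til⁻¹.mulVec x ≤ β₁ * (x ⬝ᵥ S₁⁻¹.mulVec x) :=
    inv_form_le hS₁pd hS₁til (by linarith) (fun y => (hS₁equiv y).2)
  have hinv_lo : ∀ x, x ⬝ᵥ S₁⁻¹.mulVec x ≤ α₁⁻¹ * (x ⬝ᵥ S₁til⁻¹.mulVec x) := by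
    refine inv_form_le hS₁til hS₁pd (inv_pos.mpr hα₁) (fun y => ?_)
    have h := (hS₁equiv y).1
    have h2 := mul_le_mul_of_nonneg_left h (inv_nonneg.mpr hα₁.le)
    rwa [← mul_assoc, inv_mul_cancel₀ hα₁.ne', one_mul] at h2
  have hEz : 0 ≤ z ⬝ᵥ E.mulVec z := by simpa using hE.dotProduct_mulVec_nonneg z
  have hηEz : z ⬝ᵥ E.mulVec z ≤ ηE * (w ⬝ᵥ S₁⁻¹.mulVec w) := by
    rw [← hform]; exact hηE z
  have hS₂u := (hS₂equiv z).2
  have hS₂l := (hS₂equiv z).1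
  have h3 := hinv_lo w
  have h4 : α₁ * (w ⬝ᵥ S₁⁻¹.mulVec w) ≤ w ⬝ᵥ S₁til⁻¹.mulVec w := by
    have h5 := mul_le_mul_of_nonneg_left h3 hα₁.le
    rwa [← mul_assoc, mul_inv_cancel₀ hα₁.ne', one_mul] at h5
  rw [hform]
  constructor
  · rw [div_mul_eq_mul_div, div_le_iff₀ (by linarith : (0:ℝ) < 1 + ηE)]
    have h2 : z ⬝ᵥ S₂.mulVec z ≤ (1 + ηE) * (w ⬝ᵥ S₁⁻¹.mulVec w) := by
      rw [hS₂z]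
      have hs : 0 ≤ w ⬝ᵥ S₁⁻¹.mulVec w := by simpa using hS₁pd.inv.posSemidef.dotProduct_mulVec_nonneg w
      nlinarith
    have e1 := mul_le_mul_of_nonneg_left hS₂l hα₁.le
    have e2 := mul_le_mul_of_nonneg_left h2 hα₁.le
    have e3 := mul_le_mul_of_nonneg_left h4 (by linarith : (0:ℝ) ≤ 1 + ηE)
    nlinarith [e1, e2, e3]
  · have hs : w ⬝ᵥ S₁⁻¹.mulVec w ≤ z ⬝ᵥ S₂.mulVec z := by rw [hS₂z]; linarith
    have e1 := hinv_up w
    have e2 := mul_le_mul_of_nonneg_left hs (by linarith : (0:ℝ) ≤ β₁)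
    have e3 := mul_le_mul_of_nonneg_left hS₂u (by linarith : (0:ℝ) ≤ β₁)
    nlinarith [e1, e2, e3]
end

section
/- Negative eigenvalue bounds for the approximately preconditioned matrix: define w(λ) = λ³ + (β₁ − α₀)λ² − (α₀β₁ + β₀β₁ + β₁β₂)λ + α₀β₁β₂, and let ρ_w < 0 satisfy w(ρ_w) = 0 (the unique negative root of w). Then every negative eigenvalue λ of M̃⁻¹K satisfies ρ_w ≤ λ ≤ (β₀ − √(β₀² + 4·α₀α₁/(1 + η_D))) / 2. -/
open Matrix

private lemma dp_flip {k l : ℕ} (M : Matrix (Fin k) (Fin l) ℝ) (u : Fin k → ℝ) (w : Fin l → ℝ) :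
    u ⬝ᵥ M *ᵥ w = w ⬝ᵥ Mᵀ *ᵥ u := by
  rw [Matrix.dotProduct_mulVec, ← Matrix.mulVec_transpose, dotProduct_comm]

private lemma dp_symm {k : ℕ} {M : Matrix (Fin k) (Fin k) ℝ} (hM : Mᵀ = M)
    (u v : Fin k → ℝ) : u ⬝ᵥ M *ᵥ v = v ⬝ᵥ M *ᵥ u := by
  rw [dp_flip, hM]

private lemma pd_pos {k : ℕ} {M : Matrix (Fin k) (Fin k) ℝ} (h : M.PosDef) {v : Fin k → ℝ}
    (hv : v ≠ 0) : 0 < v ⬝ᵥ M *ᵥ v := by simpa using h.dotProduct_mulVec_pos hv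

private lemma psd_nonneg {k : ℕ} {M : Matrix (Fin k) (Fin k) ℝ} (h : M.PosSemidef)
    (v : Fin k → ℝ) : 0 ≤ v ⬝ᵥ M *ᵥ v := by simpa using h.dotProduct_mulVec_nonneg v

private lemma pd_transpose {k : ℕ} {M : Matrix (Fin k) (Fin k) ℝ} (h : M.IsHermitian) :
    Mᵀ = M := by simpa [Matrix.IsSymm] using h

private lemma cs_ineq {k : ℕ} {M : Matrix (Fin k) (Fin k) ℝ} (hM : Mᵀ = M)
    (hpsd : ∀ v : Fin k → ℝ, 0 ≤ v ⬝ᵥ M *ᵥ v) (x w : Fin k → ℝ) :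
    (x ⬝ᵥ M *ᵥ w) ^ 2 ≤ (x ⬝ᵥ M *ᵥ x) * (w ⬝ᵥ M *ᵥ w) := by
  have key : ∀ t : ℝ, 0 ≤ (w ⬝ᵥ M *ᵥ w) * (t * t) + (2 * (x ⬝ᵥ M *ᵥ w)) * t
      + x ⬝ᵥ M *ᵥ x := by
    intro t
    have h0 := hpsd (x + t • w)
    have hsym := dp_symm hM w x
    simp only [Matrix.mulVec_add, Matrix.mulVec_smul, dotProduct_add,
      add_dotProduct, dotProduct_smul, smul_dotProduct,
      smul_eq_mul] at h0
    rw [hsym] at h0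
    linarith [h0]
  have hd := discrim_le_zero key
  unfold discrim at hd
  linarith [hd]

set_option maxHeartbeats 1000000 in
/-- Negative eigenvalue bounds for the approximately preconditioned matrix `M̃⁻¹K`:
every negative eigenvalue lies in `[ρ_w, (β₀ − √(β₀² + 4α₀α₁/(1+η_D)))/2]`. -/
theorem stmt_18 (n m p : ℕ) (hp : 0 < p) (hmp : p ≤ m) (hnm : m ≤ n)
    (A : Matrix (Fin n) (Fin n) ℝ) (B : Matrix (Fin m) (Fin n) ℝ)
    (C : Matrix (Fin p) (Fin m) ℝ) (D : Matrix (Fin m) (Fin m) ℝ)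
    (E : Matrix (Fin p) (Fin p) ℝ)
    (hA : A.PosDef) (hD : D.PosSemidef) (hE : E.PosSemidef)
    (hB : B.rank = m) (hC : C.rank = p)
    (S₁ : Matrix (Fin m) (Fin m) ℝ) (hS₁ : S₁ = D + B * A⁻¹ * Bᵀ)
    (S₂ : Matrix (Fin p) (Fin p) ℝ) (hS₂ : S₂ = E + C * S₁⁻¹ * Cᵀ)
    (hS₁pd : S₁.PosDef) (hS₂pd : S₂.PosDef)
    (Atil : Matrix (Fin n) (Fin n) ℝ) (S₁til : Matrix (Fin m) (Fin m) ℝ)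
    (S₂til : Matrix (Fin p) (Fin p) ℝ)
    (hAtil : Atil.PosDef) (hS₁til : S₁til.PosDef) (hS₂til : S₂til.PosDef)
    (α₀ β₀ α₁ β₁ α₂ β₂ : ℝ)
    (hα₀ : 0 < α₀) (hα₀1 : α₀ ≤ 1) (hβ₀ : 1 ≤ β₀)
    (hα₁ : 0 < α₁) (hα₁1 : α₁ ≤ 1) (hβ₁ : 1 ≤ β₁)
    (hα₂ : 0 < α₂) (hα₂1 : α₂ ≤ 1) (hβ₂ : 1 ≤ β₂)
    (hAequiv : ∀ x : Fin n → ℝ,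
      α₀ * (x ⬝ᵥ Atil.mulVec x) ≤ x ⬝ᵥ A.mulVec x ∧
      x ⬝ᵥ A.mulVec x ≤ β₀ * (x ⬝ᵥ Atil.mulVec x))
    (hS₁equiv : ∀ y : Fin m → ℝ,
      α₁ * (y ⬝ᵥ S₁til.mulVec y) ≤ y ⬝ᵥ S₁.mulVec y ∧
      y ⬝ᵥ S₁.mulVec y ≤ β₁ * (y ⬝ᵥ S₁til.mulVec y))
    (hS₂equiv : ∀ z : Fin p → ℝ,
      α₂ * (z ⬝ᵥ S₂til.mulVec z) ≤ z ⬝ᵥ S₂.mulVec z ∧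
      z ⬝ᵥ S₂.mulVec z ≤ β₂ * (z ⬝ᵥ S₂til.mulVec z))
    (ηD : ℝ) (hηD0 : 0 ≤ ηD)
    (hηD : ∀ y : Fin m → ℝ, y ⬝ᵥ D.mulVec y ≤ ηD * (y ⬝ᵥ (B * A⁻¹ * Bᵀ).mulVec y))
    (ηE : ℝ) (hηE0 : 0 ≤ ηE)
    (hηE : ∀ z : Fin p → ℝ, z ⬝ᵥ E.mulVec z ≤ ηE * (z ⬝ᵥ (C * S₁⁻¹ * Cᵀ).mulVec z))
    (K : Matrix ((Fin n ⊕ Fin m) ⊕ Fin p) ((Fin n ⊕ Fin m) ⊕ Fin p) ℝ)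
    (hK : K = fromBlocks (fromBlocks A Bᵀ B (-D)) (fromRows 0 Cᵀ) (fromCols 0 C) E)
    (Mtil : Matrix ((Fin n ⊕ Fin m) ⊕ Fin p) ((Fin n ⊕ Fin m) ⊕ Fin p) ℝ)
    (hMtil : Mtil = fromBlocks (fromBlocks Atil 0 0 S₁til) 0 0 S₂til)
    -- ρw is the unique negative root of w
    (ρw : ℝ) (hρwneg : ρw < 0)
    (hρw : ρw ^ 3 + (β₁ - α₀) * ρw ^ 2 - (α₀ * β₁ + β₀ * β₁ + β₁ * β₂) * ρw
        + α₀ * β₁ * β₂ = 0) :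
    ∀ (lam : ℝ) (v : (Fin n ⊕ Fin m) ⊕ Fin p → ℝ), v ≠ 0 →
      K.mulVec v = lam • Mtil.mulVec v → lam < 0 →
      ρw ≤ lam ∧
      lam ≤ (β₀ - Real.sqrt (β₀ ^ 2 + 4 * (α₀ * α₁) / (1 + ηD))) / 2 := by
  intro lam v hv hKv hlam
  -- basic positivity facts
  have hβ₁0 : (0:ℝ) < β₁ := lt_of_lt_of_le one_pos hβ₁
  have hβ₀0 : (0:ℝ) < β₀ := lt_of_lt_of_le one_pos hβ₀
  have hβ₂0 : (0:ℝ) < β₂ := lt_of_lt_of_le one_pos hβ₂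
  have hη1 : (0:ℝ) < 1 + ηD := by linarith only [hηD0]
  have hlne : (0:ℝ) ≤ -lam := by linarith only [hlam]
  have hαl : (0:ℝ) < α₀ - lam := by linarith only [hα₀, hlam]
  have hβl : (0:ℝ) < β₀ - lam := by linarith only [hβ₀0, hlam]
  -- components of v
  set x : Fin n → ℝ := fun i => v (Sum.inl (Sum.inl i)) with hxdef
  set y : Fin m → ℝ := fun i => v (Sum.inl (Sum.inr i)) with hydef
  set z : Fin p → ℝ := fun i => v (Sum.inr i) with hzdef
  have hvdef : v = Sum.elim (Sum.elim x y) z := by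
    funext i; rcases i with (i | i) | i <;> rfl
  rw [hK, hMtil, hvdef] at hKv
  have E1 : A *ᵥ x + Bᵀ *ᵥ y = lam • (Atil *ᵥ x) := by
    funext i
    have h := congrFun hKv (Sum.inl (Sum.inl i))
    simpa [Matrix.fromBlocks_mulVec, Matrix.fromRows_mulVec,
      Matrix.fromCols_mulVec_sumElim, Matrix.zero_mulVec] using h
  have E2 : B *ᵥ x - D *ᵥ y + Cᵀ *ᵥ z = lam • (S₁til *ᵥ y) := by
    funext i
    have h := congrFun hKv (Sum.inl (Sum.inr i))
    simpa [Matrix.fromBlocks_mulVec, Matrix.fromRows_mulVec,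
      Matrix.fromCols_mulVec_sumElim, Matrix.zero_mulVec, Matrix.neg_mulVec,
      sub_eq_add_neg] using h
  have E3 : C *ᵥ y + E *ᵥ z = lam • (S₂til *ᵥ z) := by
    funext i
    have h := congrFun hKv (Sum.inr i)
    simpa [Matrix.fromBlocks_mulVec, Matrix.fromRows_mulVec,
      Matrix.fromCols_mulVec_sumElim, Matrix.zero_mulVec] using h
  -- scalar equations
  have q1 : x ⬝ᵥ A *ᵥ x + x ⬝ᵥ Bᵀ *ᵥ y = lam * (x ⬝ᵥ Atil *ᵥ x) := by
    have h := congrArg (fun w => x ⬝ᵥ w) E1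
    simpa [dotProduct_add, dotProduct_smul, smul_eq_mul] using h
  have q2 : x ⬝ᵥ Bᵀ *ᵥ y - y ⬝ᵥ D *ᵥ y + y ⬝ᵥ Cᵀ *ᵥ z = lam * (y ⬝ᵥ S₁til *ᵥ y) := by
    have h := congrArg (fun w => y ⬝ᵥ w) E2
    simp only [dotProduct_add, dotProduct_sub, dotProduct_smul,
      smul_eq_mul] at h
    rw [dp_flip B y x] at h
    exact h
  have q3 : y ⬝ᵥ Cᵀ *ᵥ z + z ⬝ᵥ E *ᵥ z = lam * (z ⬝ᵥ S₂til *ᵥ z) := by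
    have h := congrArg (fun w => z ⬝ᵥ w) E3
    simp only [dotProduct_add, dotProduct_smul, smul_eq_mul] at h
    rw [dp_flip C z y] at h
    exact h
  -- nonnegativity
  have ha0 : 0 ≤ x ⬝ᵥ A *ᵥ x := psd_nonneg hA.posSemidef x
  have hta0 : 0 ≤ x ⬝ᵥ Atil *ᵥ x := psd_nonneg hAtil.posSemidef x
  have hd0 : 0 ≤ y ⬝ᵥ D *ᵥ y := psd_nonneg hD y
  have he0 : 0 ≤ z ⬝ᵥ E *ᵥ z := psd_nonneg hE z
  have hs1n : 0 ≤ y ⬝ᵥ S₁til *ᵥ y := psd_nonneg hS₁til.posSemidef y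
  have hs2n : 0 ≤ z ⬝ᵥ S₂til *ᵥ z := psd_nonneg hS₂til.posSemidef z
  -- degenerate case y = 0 is impossible
  have hyne : y ≠ 0 := by
    intro hy
    have hbq0 : x ⬝ᵥ Bᵀ *ᵥ y = 0 := by rw [hy]; simp
    have hx0 : x = 0 := by
      by_contra hx0
      have hapos := pd_pos hA hx0
      linarith only [q1, hbq0, hapos, mul_nonneg hlne hta0]
    have hgq0 : y ⬝ᵥ Cᵀ *ᵥ z = 0 := by rw [hy]; simp
    have hz0 : z = 0 := by
      by_contra hz0
      have hs2pos := pd_pos hS₂til hz0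
      linarith only [q3, hgq0, he0, mul_neg_of_neg_of_pos hlam hs2pos]
    exact hv (by rw [hvdef, hx0, hy, hz0]; funext i; rcases i with (i | i) | i <;> simp)
  have hs1pos : 0 < y ⬝ᵥ S₁til *ᵥ y := pd_pos hS₁til hyne
  -- transposes and inverses
  have hAt : Aᵀ = A := pd_transpose hA.1
  have hAtilt : Atilᵀ = Atil := pd_transpose hAtil.1
  have hS₁t : S₁ᵀ = S₁ := pd_transpose hS₁pd.1
  have hAmul : A * A⁻¹ = 1 :=
    Matrix.mul_nonsing_inv A ((Matrix.isUnit_iff_isUnit_det A).mp hA.isUnit)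
  have hS₁mul : S₁ * S₁⁻¹ = 1 :=
    Matrix.mul_nonsing_inv S₁ ((Matrix.isUnit_iff_isUnit_det S₁).mp hS₁pd.isUnit)
  -- rB as a quadratic form in wv
  set wv : Fin n → ℝ := A⁻¹ *ᵥ (Bᵀ *ᵥ y) with hwvdef
  have hAw : A *ᵥ wv = Bᵀ *ᵥ y := by
    rw [hwvdef, Matrix.mulVec_mulVec, hAmul, Matrix.one_mulVec]
  have hrB_eq : y ⬝ᵥ (B * A⁻¹ * Bᵀ) *ᵥ y = wv ⬝ᵥ A *ᵥ wv := by
    have h1 : (B * A⁻¹ * Bᵀ) *ᵥ y = B *ᵥ wv := by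
      rw [hwvdef, Matrix.mulVec_mulVec, Matrix.mulVec_mulVec]
    rw [h1, dp_flip B y wv, ← hAw]
  have hrB0 : 0 ≤ y ⬝ᵥ (B * A⁻¹ * Bᵀ) *ᵥ y := by
    rw [hrB_eq]; exact psd_nonneg hA.posSemidef wv
  -- rC as a quadratic form in wz
  set wz : Fin m → ℝ := S₁⁻¹ *ᵥ (Cᵀ *ᵥ z) with hwzdef
  have hS₁w : S₁ *ᵥ wz = Cᵀ *ᵥ z := by
    rw [hwzdef, Matrix.mulVec_mulVec, hS₁mul, Matrix.one_mulVec]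
  have hrC_eq : z ⬝ᵥ (C * S₁⁻¹ * Cᵀ) *ᵥ z = wz ⬝ᵥ S₁ *ᵥ wz := by
    have h1 : (C * S₁⁻¹ * Cᵀ) *ᵥ z = C *ᵥ wz := by
      rw [hwzdef, Matrix.mulVec_mulVec, Matrix.mulVec_mulVec]
    rw [h1, dp_flip C z wz, ← hS₁w]
  have hrC0 : 0 ≤ z ⬝ᵥ (C * S₁⁻¹ * Cᵀ) *ᵥ z := by
    rw [hrC_eq]; exact psd_nonneg hS₁pd.posSemidef wz
  -- Cauchy-Schwarz for the off-diagonal terms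
  have csβ : (x ⬝ᵥ Bᵀ *ᵥ y) ^ 2 ≤ (x ⬝ᵥ A *ᵥ x) * (y ⬝ᵥ (B * A⁻¹ * Bᵀ) *ᵥ y) := by
    rw [hrB_eq, ← hAw]
    exact cs_ineq hAt (psd_nonneg hA.posSemidef) x wv
  have csγ : (y ⬝ᵥ Cᵀ *ᵥ z) ^ 2 ≤ (y ⬝ᵥ S₁ *ᵥ y) * (z ⬝ᵥ (C * S₁⁻¹ * Cᵀ) *ᵥ z) := by
    rw [hrC_eq, ← hS₁w]
    exact cs_ineq hS₁t (psd_nonneg hS₁pd.posSemidef) y wz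
  -- splitting of the Schur complements
  have hS1split : y ⬝ᵥ S₁ *ᵥ y = y ⬝ᵥ D *ᵥ y + y ⬝ᵥ (B * A⁻¹ * Bᵀ) *ᵥ y := by
    rw [hS₁, Matrix.add_mulVec, dotProduct_add]
  have hS2split : z ⬝ᵥ S₂ *ᵥ z = z ⬝ᵥ E *ᵥ z + z ⬝ᵥ (C * S₁⁻¹ * Cᵀ) *ᵥ z := by
    rw [hS₂, Matrix.add_mulVec, dotProduct_add]
  have hys1a : α₁ * (y ⬝ᵥ S₁til *ᵥ y) ≤ y ⬝ᵥ S₁ *ᵥ y := (hS₁equiv y).1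
  have hys1b : y ⬝ᵥ S₁ *ᵥ y ≤ β₁ * (y ⬝ᵥ S₁til *ᵥ y) := (hS₁equiv y).2
  have hzS2b : z ⬝ᵥ S₂ *ᵥ z ≤ β₂ * (z ⬝ᵥ S₂til *ᵥ z) := (hS₂equiv z).2
  have haeq1 : α₀ * (x ⬝ᵥ Atil *ᵥ x) ≤ x ⬝ᵥ A *ᵥ x := (hAequiv x).1
  have haeq2 : x ⬝ᵥ A *ᵥ x ≤ β₀ * (x ⬝ᵥ Atil *ᵥ x) := (hAequiv x).2
  have hdη : y ⬝ᵥ D *ᵥ y ≤ ηD * (y ⬝ᵥ (B * A⁻¹ * Bᵀ) *ᵥ y) := hηD y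
  -- the matrix G = A - lam • Atil
  set G : Matrix (Fin n) (Fin n) ℝ := A - lam • Atil with hGdef
  have hGt : Gᵀ = G := by
    rw [hGdef, Matrix.transpose_sub, Matrix.transpose_smul, hAt, hAtilt]
  have hGquad : ∀ v' : Fin n → ℝ,
      v' ⬝ᵥ G *ᵥ v' = v' ⬝ᵥ A *ᵥ v' - lam * (v' ⬝ᵥ Atil *ᵥ v') := by
    intro v'
    rw [hGdef, Matrix.sub_mulVec, dotProduct_sub, Matrix.smul_mulVec,
      dotProduct_smul, smul_eq_mul]
  have hGpsd : ∀ v' : Fin n → ℝ, 0 ≤ v' ⬝ᵥ G *ᵥ v' := by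
    intro v'
    rw [hGquad]
    linarith only [psd_nonneg hA.posSemidef v',
      mul_nonneg hlne (psd_nonneg hAtil.posSemidef v')]
  have hGx : G *ᵥ x = -(Bᵀ *ᵥ y) := by
    have h : A *ᵥ x = lam • (Atil *ᵥ x) - Bᵀ *ᵥ y := by
      rw [← E1]; abel
    rw [hGdef, Matrix.sub_mulVec, Matrix.smul_mulVec, h]; abel
  -- key bound : rB * α₀ ≤ g * (α₀ - lam)
  set g : ℝ := x ⬝ᵥ G *ᵥ x with hgdef
  have hg_eq : g = x ⬝ᵥ A *ᵥ x - lam * (x ⬝ᵥ Atil *ᵥ x) := hGquad x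
  have hgn : 0 ≤ g := hGpsd x
  set wq : Fin n → ℝ := A⁻¹ *ᵥ (G *ᵥ x) with hwqdef
  have hwq : wq = -wv := by
    rw [hwqdef, hGx, hwvdef, Matrix.mulVec_neg]
  have hAwq : A *ᵥ wq = G *ᵥ x := by
    rw [hwqdef, Matrix.mulVec_mulVec, hAmul, Matrix.one_mulVec]
  have hrB2 : y ⬝ᵥ (B * A⁻¹ * Bᵀ) *ᵥ y = wq ⬝ᵥ A *ᵥ wq := by
    rw [hrB_eq, hwq, Matrix.mulVec_neg, dotProduct_neg, neg_dotProduct,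
      neg_neg]
  have hxGwq : x ⬝ᵥ G *ᵥ wq = y ⬝ᵥ (B * A⁻¹ * Bᵀ) *ᵥ y := by
    rw [dp_symm hGt x wq, ← hAwq, hrB2]
  have hwGw : α₀ * (wq ⬝ᵥ G *ᵥ wq) ≤ (y ⬝ᵥ (B * A⁻¹ * Bᵀ) *ᵥ y) * (α₀ - lam) := by
    have h2 := (hAequiv wq).1
    rw [hrB2, hGquad wq]
    linarith only [mul_nonneg hlne (sub_nonneg.2 h2)]
  have csQ : (y ⬝ᵥ (B * A⁻¹ * Bᵀ) *ᵥ y) ^ 2 ≤ g * (wq ⬝ᵥ G *ᵥ wq) := by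
    have h := cs_ineq hGt hGpsd x wq
    rw [hxGwq] at h
    exact h
  have hQ : (y ⬝ᵥ (B * A⁻¹ * Bᵀ) *ᵥ y) * α₀ ≤ g * (α₀ - lam) := by
    rcases eq_or_lt_of_le hrB0 with h | h
    · rw [← h]
      linarith only [mul_nonneg hgn hαl.le]
    · have t1 : g * (α₀ * (wq ⬝ᵥ G *ᵥ wq)) ≤
          g * ((y ⬝ᵥ (B * A⁻¹ * Bᵀ) *ᵥ y) * (α₀ - lam)) :=
        mul_le_mul_of_nonneg_left hwGw hgn
      have t2 := mul_le_mul_of_nonneg_right csQ hα₀.le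
      have d1 : (y ⬝ᵥ (B * A⁻¹ * Bᵀ) *ᵥ y) ^ 2 * α₀ ≤
          g * ((y ⬝ᵥ (B * A⁻¹ * Bᵀ) *ᵥ y) * (α₀ - lam)) := by linarith only [t1, t2]
      nlinarith only [d1, h]
  -- sign facts about the off-diagonal scalars
  have hgq_eq : y ⬝ᵥ Cᵀ *ᵥ z = lam * (z ⬝ᵥ S₂til *ᵥ z) - z ⬝ᵥ E *ᵥ z := by
    linarith only [q3]
  have hgq_np : y ⬝ᵥ Cᵀ *ᵥ z ≤ 0 := by
    linarith only [hgq_eq, mul_nonneg hlne hs2n, he0]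
  have hbq_eq : x ⬝ᵥ Bᵀ *ᵥ y = -g := by rw [hg_eq]; linarith only [q1]
  -- UPPER BOUND
  have hgs : g ≤ -lam * (y ⬝ᵥ S₁til *ᵥ y) := by
    linarith only [q2, hbq_eq, hgq_np, hd0]
  have keyc : α₀ * α₁ ≤ (1 + ηD) * (-lam * (α₀ - lam)) := by
    have h1 : α₁ * (y ⬝ᵥ S₁til *ᵥ y) ≤ (1 + ηD) * (y ⬝ᵥ (B * A⁻¹ * Bᵀ) *ᵥ y) := by
      linarith only [hys1a, hS1split, hdη]
    have k1 : α₀ * (α₁ * (y ⬝ᵥ S₁til *ᵥ y)) ≤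
        α₀ * ((1 + ηD) * (y ⬝ᵥ (B * A⁻¹ * Bᵀ) *ᵥ y)) :=
      mul_le_mul_of_nonneg_left h1 hα₀.le
    have h2 : (1 + ηD) * ((y ⬝ᵥ (B * A⁻¹ * Bᵀ) *ᵥ y) * α₀) ≤
        (1 + ηD) * (g * (α₀ - lam)) := mul_le_mul_of_nonneg_left hQ hη1.le
    have h3 : g * (α₀ - lam) ≤ (-lam * (y ⬝ᵥ S₁til *ᵥ y)) * (α₀ - lam) :=
      mul_le_mul_of_nonneg_right hgs hαl.le
    have k3 : (1 + ηD) * (g * (α₀ - lam)) ≤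
        (1 + ηD) * ((-lam * (y ⬝ᵥ S₁til *ᵥ y)) * (α₀ - lam)) :=
      mul_le_mul_of_nonneg_left h3 hη1.le
    have key : (α₀ * α₁) * (y ⬝ᵥ S₁til *ᵥ y) ≤
        ((1 + ηD) * (-lam * (α₀ - lam))) * (y ⬝ᵥ S₁til *ᵥ y) := by
      linarith only [k1, h2, k3]
    exact le_of_mul_le_mul_right key hs1pos
  have hk : α₀ * α₁ / (1 + ηD) ≤ -lam * (β₀ - lam) := by
    rw [div_le_iff₀ hη1]
    have h1 : -lam * (α₀ - lam) ≤ -lam * (β₀ - lam) := by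
      linarith only [mul_nonneg hlne (by linarith only [hα₀1, hβ₀] : (0:ℝ) ≤ β₀ - α₀)]
    have h2 : (1 + ηD) * (-lam * (α₀ - lam)) ≤ (1 + ηD) * (-lam * (β₀ - lam)) :=
      mul_le_mul_of_nonneg_left h1 hη1.le
    linarith only [keyc, h2]
  have hupper : lam ≤ (β₀ - Real.sqrt (β₀ ^ 2 + 4 * (α₀ * α₁) / (1 + ηD))) / 2 := by
    have hSnn : (0:ℝ) ≤ β₀ ^ 2 + 4 * (α₀ * α₁) / (1 + ηD) := by positivity
    have hbl : (0:ℝ) ≤ β₀ - 2 * lam := by linarith only [hβ₀0, hlam]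
    have hle : β₀ ^ 2 + 4 * (α₀ * α₁) / (1 + ηD) ≤ (β₀ - 2 * lam) ^ 2 := by
      have h4 : 4 * (α₀ * α₁) / (1 + ηD) = 4 * (α₀ * α₁ / (1 + ηD)) := by ring
      rw [h4]
      linarith only [hk]
    have hfin : Real.sqrt (β₀ ^ 2 + 4 * (α₀ * α₁) / (1 + ηD)) ≤ β₀ - 2 * lam := by
      calc Real.sqrt (β₀ ^ 2 + 4 * (α₀ * α₁) / (1 + ηD))
          ≤ Real.sqrt ((β₀ - 2 * lam) ^ 2) := Real.sqrt_le_sqrt hle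
        _ = β₀ - 2 * lam := Real.sqrt_sq hbl
    linarith only [hfin]
  -- LOWER BOUND
  have hrBle : y ⬝ᵥ (B * A⁻¹ * Bᵀ) *ᵥ y ≤ β₁ * (y ⬝ᵥ S₁til *ᵥ y) := by
    linarith only [hS1split, hd0, hys1b]
  have hβlb : -(β₀ * β₁ * (y ⬝ᵥ S₁til *ᵥ y)) ≤ (x ⬝ᵥ Bᵀ *ᵥ y) * (α₀ - lam) := by
    rcases le_or_gt 0 (x ⬝ᵥ Bᵀ *ᵥ y) with h | h
    · linarith only [mul_nonneg h hαl.le, mul_pos (mul_pos hβ₀0 hβ₁0) hs1pos]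
    · have hgpos : 0 < g := by rw [hbq_eq] at h; linarith only [h]
      have haβ : (x ⬝ᵥ A *ᵥ x) * (β₀ - lam) ≤ g * β₀ := by
        rw [hg_eq]
        linarith only [mul_nonneg hlne (sub_nonneg.2 haeq2)]
      have hg2 : g ^ 2 ≤ (x ⬝ᵥ A *ᵥ x) * (β₁ * (y ⬝ᵥ S₁til *ᵥ y)) := by
        have hsq : (x ⬝ᵥ Bᵀ *ᵥ y) ^ 2 = g ^ 2 := by rw [hbq_eq]; ring
        linarith only [csβ, hsq, mul_le_mul_of_nonneg_left hrBle ha0]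
      have u1 : g ^ 2 * (β₀ - lam) ≤
          ((x ⬝ᵥ A *ᵥ x) * (β₁ * (y ⬝ᵥ S₁til *ᵥ y))) * (β₀ - lam) :=
        mul_le_mul_of_nonneg_right hg2 hβl.le
      have u2 : ((x ⬝ᵥ A *ᵥ x) * (β₀ - lam)) * (β₁ * (y ⬝ᵥ S₁til *ᵥ y)) ≤
          (g * β₀) * (β₁ * (y ⬝ᵥ S₁til *ᵥ y)) :=
        mul_le_mul_of_nonneg_right haβ (mul_nonneg hβ₁0.le hs1n)
      have u3 : g ^ 2 * (β₀ - lam) ≤ (g * β₀) * (β₁ * (y ⬝ᵥ S₁til *ᵥ y)) := by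
        linarith only [u1, u2]
      have h6 : g * (β₀ - lam) ≤ β₀ * β₁ * (y ⬝ᵥ S₁til *ᵥ y) := by
        nlinarith only [u3, hgpos]
      have h7 : g * (α₀ - lam) ≤ g * (β₀ - lam) := by
        linarith only [mul_nonneg
          (by linarith only [hα₀1, hβ₀] : (0:ℝ) ≤ β₀ - α₀) hgpos.le]
      rw [hbq_eq]
      linarith only [h6, h7]
  have hγlb : -(β₁ * β₂ * (y ⬝ᵥ S₁til *ᵥ y)) ≤ (y ⬝ᵥ Cᵀ *ᵥ z) * (-lam) := by
    rcases le_or_gt 0 (y ⬝ᵥ Cᵀ *ᵥ z) with h | h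
    · linarith only [mul_nonneg h hlne, mul_pos (mul_pos hβ₁0 hβ₂0) hs1pos]
    · have hrCb : z ⬝ᵥ (C * S₁⁻¹ * Cᵀ) *ᵥ z ≤ β₂ * (z ⬝ᵥ S₂til *ᵥ z) := by
        linarith only [hS2split, he0, hzS2b]
      have v2 : (z ⬝ᵥ S₂til *ᵥ z) * (-lam) ≤ -(y ⬝ᵥ Cᵀ *ᵥ z) := by
        linarith only [hgq_eq, he0]
      have hc0 : (0:ℝ) ≤ β₁ * (y ⬝ᵥ S₁til *ᵥ y) := mul_nonneg hβ₁0.le hs1n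
      have v1 : (y ⬝ᵥ Cᵀ *ᵥ z) ^ 2 ≤
          (β₁ * (y ⬝ᵥ S₁til *ᵥ y)) * (z ⬝ᵥ (C * S₁⁻¹ * Cᵀ) *ᵥ z) := by
        linarith only [csγ, mul_le_mul_of_nonneg_right hys1b hrC0]
      have p1 := mul_le_mul_of_nonneg_right v1 hlne
      have p2 := mul_le_mul_of_nonneg_right (mul_le_mul_of_nonneg_left hrCb hc0) hlne
      have p3 := mul_le_mul_of_nonneg_left v2 (mul_nonneg hc0 hβ₂0.le)
      have v6 : (y ⬝ᵥ Cᵀ *ᵥ z) ^ 2 * (-lam) ≤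
          ((β₁ * (y ⬝ᵥ S₁til *ᵥ y)) * β₂) * (-(y ⬝ᵥ Cᵀ *ᵥ z)) := by
        linarith only [p1, p2, p3]
      nlinarith only [v6, h]
  have hdb : y ⬝ᵥ D *ᵥ y ≤ β₁ * (y ⬝ᵥ S₁til *ᵥ y) := by
    linarith only [hS1split, hrB0, hys1b]
  -- combine into the cubic inequality
  have hXs1 : 0 ≤ (lam * (α₀ - lam) * (-lam) + β₀ * β₁ * (-lam) + β₁ * β₂ * (α₀ - lam)
      + β₁ * (α₀ - lam) * (-lam)) * (y ⬝ᵥ S₁til *ᵥ y) := by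
    have c0 : (x ⬝ᵥ Bᵀ *ᵥ y - y ⬝ᵥ D *ᵥ y + y ⬝ᵥ Cᵀ *ᵥ z) * ((α₀ - lam) * (-lam))
        = (lam * (y ⬝ᵥ S₁til *ᵥ y)) * ((α₀ - lam) * (-lam)) := by rw [q2]
    have c1 := mul_le_mul_of_nonneg_right hβlb hlne
    have c2 := mul_le_mul_of_nonneg_right hγlb hαl.le
    have c3 := mul_le_mul_of_nonneg_right hdb (mul_nonneg hαl.le hlne)
    linarith only [c0, c1, c2, c3]
  have hX : 0 ≤ lam * (α₀ - lam) * (-lam) + β₀ * β₁ * (-lam) + β₁ * β₂ * (α₀ - lam)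
      + β₁ * (α₀ - lam) * (-lam) := by
    have h0 := div_nonneg hXs1 hs1pos.le
    rwa [mul_div_cancel_right₀ _ (ne_of_gt hs1pos)] at h0
  have wineq : 0 ≤ lam ^ 3 + (β₁ - α₀) * lam ^ 2
      - (α₀ * β₁ + β₀ * β₁ + β₁ * β₂) * lam + α₀ * β₁ * β₂ := by linarith only [hX]
  -- factor w at ρw
  have hρ2 : 0 < ρw ^ 2 := by nlinarith only [hρwneg]
  have hσ : 0 < α₀ * β₁ + β₀ * β₁ + β₁ * β₂ := by
    linarith only [mul_pos hα₀ hβ₁0, mul_pos hβ₀0 hβ₁0, mul_pos hβ₁0 hβ₂0]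
  have hP : 0 < α₀ * β₁ * β₂ := mul_pos (mul_pos hα₀ hβ₁0) hβ₂0
  have hbb : (β₁ - α₀ + ρw) * ρw ^ 2
      = (α₀ * β₁ + β₀ * β₁ + β₁ * β₂) * ρw - α₀ * β₁ * β₂ := by
    linear_combination hρw
  have hb : β₁ - α₀ + ρw < 0 := by
    nlinarith only [hbb, hρ2, mul_neg_of_pos_of_neg hσ hρwneg, hP]
  have hcc : ρw * (ρw ^ 2 + (β₁ - α₀) * ρw - (α₀ * β₁ + β₀ * β₁ + β₁ * β₂))
      = -(α₀ * β₁ * β₂) := by linear_combination hρw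
  have hc : 0 < ρw ^ 2 + (β₁ - α₀) * ρw - (α₀ * β₁ + β₀ * β₁ + β₁ * β₂) := by
    nlinarith only [hcc, hP, hρwneg]
  have hq : 0 < lam ^ 2 + (β₁ - α₀ + ρw) * lam
      + (ρw ^ 2 + (β₁ - α₀) * ρw - (α₀ * β₁ + β₀ * β₁ + β₁ * β₂)) := by
    linarith only [sq_nonneg lam, mul_pos (neg_pos.2 hb) (neg_pos.2 hlam), hc]
  have hfact : lam ^ 3 + (β₁ - α₀) * lam ^ 2
      - (α₀ * β₁ + β₀ * β₁ + β₁ * β₂) * lam + α₀ * β₁ * β₂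
      = (lam - ρw) * (lam ^ 2 + (β₁ - α₀ + ρw) * lam
        + (ρw ^ 2 + (β₁ - α₀) * ρw - (α₀ * β₁ + β₀ * β₁ + β₁ * β₂))) := by
    linear_combination hρw
  have hlower : ρw ≤ lam := by
    rw [hfact] at wineq
    by_contra h9
    push_neg at h9
    have hneg := mul_neg_of_neg_of_pos
      (by linarith only [h9] : lam - ρw < 0) hq
    linarith only [wineq, hneg]
  exact ⟨hlower, hupper⟩
end
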